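/- arXiv:1008.0305 — 6 statements merged into one kernel-verified Lean document; each statement's English description precedes it below -/
import Mathlib

section
/- Let (B, μ) be an integral domain with a negative pseudovaluation such that every nonzero element of B is localizing with respect to μ. Let d > 0 and equip the polynomial ring B[T] with the pseudovaluation ν(Σ_i a_i T^i) = min_i { μ(a_i) − i·d }. Then every nonzero element of B[T] is localizing with respect to ν. -/
open scoped Classical

noncomputable section

/-- A pseudovaluation on a commutative ring `A`: a function `ν : A → ℝ ∪ {±∞}` with
`ν 0 = ∞`, `ν 1 = 0`, `ν (a - b) ≥ min (ν a) (ν b)`, and `ν (a*b) ≥ ν a + ν b`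
whenever `ν a ≠ -∞` and `ν b ≠ -∞`. -/
structure IsPseudovaluation {A : Type*} [CommRing A] (ν : A → EReal) : Prop where
  map_zero : ν 0 = ⊤
  map_one : ν 1 = 0
  min_le_sub : ∀ a b : A, min (ν a) (ν b) ≤ ν (a - b)
  add_le_mul : ∀ a b : A, ν a ≠ ⊥ → ν b ≠ ⊥ → ν a + ν b ≤ ν (a * b)

/-- A proper pseudovaluation never takes the value `-∞`. -/
def IsProperPV {A : Type*} [CommRing A] (ν : A → EReal) : Prop :=
  IsPseudovaluation ν ∧ ∀ a : A, ν a ≠ ⊥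

/-- A negative pseudovaluation is proper and satisfies `ν a ≤ 0` for `a ≠ 0`. -/
def IsNegativePV {A : Type*} [CommRing A] (ν : A → EReal) : Prop :=
  IsPseudovaluation ν ∧ (∀ a : A, ν a ≠ ⊥) ∧ ∀ a : A, a ≠ 0 → ν a ≤ 0

/-- `f` is localizing with respect to `ν` if there are `C > 0`, `D ≥ 0` with
`ν (fⁿ x) ≤ C · ν x + n D` for all `n` and `x`. -/
def IsLocalizing {A : Type*} [CommRing A] (ν : A → EReal) (f : A) : Prop :=
  ∃ C D : ℝ, 0 < C ∧ 0 ≤ D ∧ ∀ (n : ℕ) (x : A),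
    ν (f ^ n * x) ≤ (C : EReal) * ν x + (((n : ℝ) * D : ℝ) : EReal)

/-- Two functions `A → ℝ ∪ {±∞}` are linearly equivalent if they dominate each other
up to positive multiplicative and nonnegative additive constants. -/
def LinearlyEquivalent {A : Type*} (ν₁ ν₂ : A → EReal) : Prop :=
  ∃ c₁ c₂ d₁ d₂ : ℝ, 0 < c₁ ∧ 0 < c₂ ∧ 0 ≤ d₁ ∧ 0 ≤ d₂ ∧
    (∀ a : A, (c₂ : EReal) * ν₂ a - (d₂ : EReal) ≤ ν₁ a) ∧
    (∀ a : A, (c₁ : EReal) * ν₁ a - (d₁ : EReal) ≤ ν₂ a)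

/-- The weighted degree pseudovaluation on a multivariate polynomial ring:
`ν (Σ_k c_k T^k) = inf_k { μ(c_k) - Σ_i k_i d_i }`. -/
def weightedDegPV {R : Type*} [CommRing R] (μ : R → EReal) {m : ℕ} (d : Fin m → ℝ)
    (f : MvPolynomial (Fin m) R) : EReal :=
  ⨅ k : Fin m →₀ ℕ, (μ (MvPolynomial.coeff k f) - ((∑ i, (k i : ℝ) * d i : ℝ) : EReal))

/-- A pseudovaluation `τ` on an `R`-algebra `B` is admissible (relative to `μ` on `R`)
if it is the quotient of a weighted degree pseudovaluation under some surjection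
from a polynomial ring. -/
def IsAdmissiblePV {R B : Type*} [CommRing R] [CommRing B] [Algebra R B]
    (μ : R → EReal) (τ : B → EReal) : Prop :=
  ∃ (m : ℕ) (π : MvPolynomial (Fin m) R →ₐ[R] B) (d : Fin m → ℝ),
    Function.Surjective π ∧ (∀ i, 0 < d i) ∧
    ∀ b : B, τ b = ⨆ (f : MvPolynomial (Fin m) R) (_ : π f = b), weightedDegPV μ d f

/-- The pseudovaluation `μ (Σ_i a_i X^i) = min_i { ν(a_i) - i·d }` on `A[X]`. -/
def polyPV {A : Type*} [CommRing A] (ν : A → EReal) (d : ℝ) (g : Polynomial A) : EReal :=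
  ⨅ i : ℕ, (ν (g.coeff i) - (((i : ℝ) * d : ℝ) : EReal))

/-- The induced pseudovaluation on the localization `A_f`: the quotient of `polyPV ν d`
under the map `A[X] → A_f`, `X ↦ f⁻¹`. -/
def locPV {A : Type*} [CommRing A] (ν : A → EReal) (f : A) (d : ℝ)
    (z : Localization.Away f) : EReal :=
  ⨆ (g : Polynomial A)
    (_ : Polynomial.aeval (IsLocalization.Away.invSelf (S := Localization.Away f) f) g = z),
    polyPV ν d g

/-- The Gauss norm `γ_ε(α) = inf_i { i + ε p^{-i} ν(a_i) }` of a Witt vector. -/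
def gaussNorm (p : ℕ) {A : Type*} [CommRing A] (ν : A → EReal) (ε : ℝ)
    (α : WittVector p A) : EReal :=
  ⨅ i : ℕ, ((i : EReal) + ((ε * (p : ℝ) ^ (-(i : ℤ)) : ℝ) : EReal) * ν (α.coeff i))

/-- A Witt vector is overconvergent if `γ_ε(α) ≠ -∞` for some `ε > 0`. -/
def IsOverconvergent (p : ℕ) {A : Type*} [CommRing A] (ν : A → EReal)
    (α : WittVector p A) : Prop :=
  ∃ ε : ℝ, 0 < ε ∧ gaussNorm p ν ε α ≠ ⊥

/-- The trivial valuation on an integral domain: `ν 0 = ∞` and `ν a = 0` for `a ≠ 0`. -/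
def trivialPV (K : Type*) [Zero K] : K → EReal :=
  fun a => if a = 0 then (⊤ : EReal) else 0

open Polynomial Finset

lemma ereal_ex_coe {v : EReal} (hb : v ≠ ⊥) (ht : v ≠ ⊤) : ∃ r : ℝ, v = (r : EReal) := by
  induction v with
  | bot => exact absurd rfl hb
  | coe r => exact ⟨r, rfl⟩
  | top => exact absurd rfl ht

lemma ereal_ex_coe_le {v : EReal} (hb : v ≠ ⊥) : ∃ r : ℝ, (r : EReal) ≤ v := by
  induction v with
  | bot => exact absurd rfl hb
  | coe r => exact ⟨r, le_refl _⟩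
  | top => exact ⟨0, le_top⟩

lemma ereal_add_coe_le_iff {a b : EReal} (c : ℝ) : a + (c : EReal) ≤ b ↔ a ≤ b - (c : EReal) := by
  rw [EReal.le_sub_iff_add_le] <;> simp

section Mu
variable {B : Type*} [CommRing B] {μ : B → EReal}

lemma mu_zero (hμ : IsNegativePV μ) : μ 0 = ⊤ := hμ.1.map_zero
lemma mu_ne_bot (hμ : IsNegativePV μ) (a : B) : μ a ≠ ⊥ := hμ.2.1 a
lemma mu_nonpos (hμ : IsNegativePV μ) {a : B} (ha : a ≠ 0) : μ a ≤ 0 := hμ.2.2 a ha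

lemma mu_mul_ge (hμ : IsNegativePV μ) (a b : B) : μ a + μ b ≤ μ (a * b) :=
  hμ.1.add_le_mul a b (hμ.2.1 a) (hμ.2.1 b)

lemma mu_neg_ge (hμ : IsNegativePV μ) (a : B) : μ a ≤ μ (-a) := by
  have h := hμ.1.min_le_sub 0 a
  rw [zero_sub] at h
  refine le_trans ?_ h
  simp [hμ.1.map_zero]

lemma mu_add_ge (hμ : IsNegativePV μ) (a b : B) : min (μ a) (μ b) ≤ μ (a + b) := by
  have h := hμ.1.min_le_sub a (-b)
  rw [sub_neg_eq_add] at h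
  exact le_trans (min_le_min (le_refl _) (mu_neg_ge hμ b)) h

lemma le_mu_sub (hμ : IsNegativePV μ) {T : EReal} {a b : B} (ha : T ≤ μ a) (hb : T ≤ μ b) : T ≤ μ (a - b) :=
  le_trans (le_min ha hb) (hμ.1.min_le_sub a b)

lemma le_mu_sum (hμ : IsNegativePV μ) {ι : Type*} {T : EReal} (s : Finset ι) (f : ι → B)
    (h : ∀ i ∈ s, T ≤ μ (f i)) : T ≤ μ (∑ i ∈ s, f i) := by
  classical
  induction s using Finset.cons_induction with
  | empty => simp [hμ.1.map_zero]
  | cons i s hi ih =>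
    rw [Finset.sum_cons]
    refine le_trans (le_min (h i (Finset.mem_cons_self i s)) (ih fun j hj => h j (Finset.mem_cons.2 (Or.inr hj)))) ?_
    exact mu_add_ge hμ _ _

lemma mu_pow (hμ : IsNegativePV μ) {b : B} {β : ℝ} (hb : μ b = (β : EReal)) (m : ℕ) :
    (((m : ℝ) * β : ℝ) : EReal) ≤ μ (b ^ m) := by
  induction m with
  | zero => simp [hμ.1.map_one]
  | succ m ih =>
    have h2 : μ (b ^ m) + μ b ≤ μ (b ^ (m+1)) := by
      rw [pow_succ]; exact mu_mul_ge hμ _ _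
    refine le_trans (le_of_eq ?_) (le_trans (add_le_add ih (le_of_eq hb.symm)) h2)
    rw [← EReal.coe_add]
    norm_cast
    push_cast
    ring

end Mu

section PV
variable {B : Type*} [CommRing B] {μ : B → EReal}

lemma polyPV_le (μ : B → EReal) (w : ℝ) (x : Polynomial B) (i : ℕ) :
    polyPV μ w x ≤ μ (x.coeff i) - (((i : ℝ) * w : ℝ) : EReal) := iInf_le _ i

lemma polyPV_add_le (μ : B → EReal) (w : ℝ) (x : Polynomial B) (i : ℕ) :
    polyPV μ w x + (((i : ℝ) * w : ℝ) : EReal) ≤ μ (x.coeff i) := by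
  rw [ereal_add_coe_le_iff]; exact polyPV_le μ w x i

lemma polyPV_zero (hμ : IsNegativePV μ) (w : ℝ) : polyPV μ w (0 : Polynomial B) = ⊤ := by
  unfold polyPV
  simp only [Polynomial.coeff_zero, mu_zero hμ]
  rw [iInf_eq_top]
  intro i
  exact EReal.top_sub_coe _

lemma polyPV_attain (hμ : IsNegativePV μ) (w : ℝ) {x : Polynomial B} (hx : x ≠ 0) :
    ∃ (j : ℕ) (ρ : ℝ), j ≤ x.natDegree ∧ x.coeff j ≠ 0 ∧ μ (x.coeff j) = (ρ : EReal) ∧ ρ ≤ 0 ∧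
      polyPV μ w x = ((ρ - (j : ℝ) * w : ℝ) : EReal) := by
  obtain ⟨j, hjmem, hjmin⟩ := Finset.exists_min_image (Finset.range (x.natDegree+1))
    (fun i => μ (x.coeff i) - (((i : ℝ) * w : ℝ) : EReal)) ⟨0, by simp⟩
  have hj : j ≤ x.natDegree := by
    have := Finset.mem_range.mp hjmem; omega
  have hmin : ∀ i : ℕ, (μ (x.coeff j) - (((j : ℝ) * w : ℝ) : EReal))
      ≤ μ (x.coeff i) - (((i : ℝ) * w : ℝ) : EReal) := by
    intro i
    by_cases hi : i ≤ x.natDegree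
    · exact hjmin i (Finset.mem_range.mpr (by omega))
    · have h0 : x.coeff i = 0 := Polynomial.coeff_eq_zero_of_natDegree_lt (by omega)
      rw [h0, mu_zero hμ, EReal.top_sub_coe]
      exact le_top
  have hlead : x.coeff x.natDegree ≠ 0 := by
    rw [Polynomial.coeff_natDegree]
    exact Polynomial.leadingCoeff_ne_zero.mpr hx
  have hleadtop : μ (x.coeff x.natDegree) ≠ ⊤ := by
    intro h
    have h2 := mu_nonpos hμ hlead
    rw [h] at h2
    exact absurd (le_antisymm h2 le_top) (by simp)
  have hcj : x.coeff j ≠ 0 := by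
    intro h0
    have h1 := hmin x.natDegree
    rw [h0, mu_zero hμ, EReal.top_sub_coe] at h1
    obtain ⟨ρ, hρ⟩ := ereal_ex_coe (mu_ne_bot hμ _) hleadtop
    rw [hρ, ← EReal.coe_sub, top_le_iff] at h1
    exact EReal.coe_ne_top _ h1
  obtain ⟨ρ, hρ⟩ := ereal_ex_coe (mu_ne_bot hμ (x.coeff j)) (by
    intro h
    have h2 := mu_nonpos hμ hcj
    rw [h] at h2
    exact absurd (le_antisymm h2 le_top) (by simp))
  refine ⟨j, ρ, hj, hcj, hρ, ?_, ?_⟩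
  · have := mu_nonpos hμ hcj
    rw [hρ] at this
    exact_mod_cast this
  · have hval : polyPV μ w x = μ (x.coeff j) - (((j : ℝ) * w : ℝ) : EReal) :=
      le_antisymm (iInf_le _ j) (le_iInf hmin)
    rw [hval, hρ, ← EReal.coe_sub]

end PV

lemma ereal_le_assemble {A r s : ℝ} {v w1 w2 : EReal} (hA : A = r + s)
    (h1 : (r : EReal) ≤ w1) (h2 : v + (s : EReal) ≤ w2) : ((A : ℝ) : EReal) + v ≤ w1 + w2 := by
  subst hA
  rw [EReal.coe_add, add_assoc, add_comm (s : EReal) v]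
  exact add_le_add h1 h2

section Key
variable {B : Type*} [CommRing B] [IsDomain B] {μ : B → EReal}

lemma coeff_mul_expand (p q : Polynomial B) {m dp : ℕ} (h : p.natDegree ≤ dp) (hm : dp ≤ m) :
    (p * q).coeff m = ∑ a ∈ Finset.range (dp+1), p.coeff a * q.coeff (m - a) := by
  rw [Polynomial.coeff_mul, Finset.Nat.sum_antidiagonal_eq_sum_range_succ_mk]
  symm
  apply Finset.sum_subset
  · exact Finset.range_subset_range.mpr (by omega)
  · intro a ha hna
    have h1 : a < m + 1 := Finset.mem_range.mp ha
    have h2 : ¬ a < dp + 1 := fun hh => hna (Finset.mem_range.mpr hh)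
    rw [Polynomial.coeff_eq_zero_of_natDegree_lt (by omega), zero_mul]

lemma key_estimate (hμ : IsNegativePV μ) (g : Polynomial B) (hg : g ≠ 0)
    (β dw : ℝ) (hb : μ g.leadingCoeff = (β : EReal))
    (hG : ∀ s : ℕ, 1 ≤ s → s ≤ g.natDegree →
      ((β - (s : ℝ) * dw : ℝ) : EReal) ≤ μ (g.coeff (g.natDegree - s))) :
    ∀ (n : ℕ) (x : Polynomial B), x ≠ 0 → ∀ k j : ℕ, k + j = x.natDegree →
      ((((k : ℝ) * β + ((n : ℝ) * (g.natDegree : ℝ) + (j : ℝ)) * dw : ℝ)) : EReal)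
          + polyPV μ dw (g ^ n * x)
        ≤ μ (g.leadingCoeff ^ (n + k) * x.coeff j) := by
  intro n
  induction n with
  | zero =>
    intro x hx k j hkj
    rw [pow_zero, one_mul, Nat.zero_add]
    refine le_trans (ereal_le_assemble (show ((k : ℝ) * β + (((0:ℕ) : ℝ) * (g.natDegree : ℝ) + (j : ℝ)) * dw : ℝ) = (k : ℝ) * β + (j : ℝ) * dw from by push_cast; ring) (mu_pow hμ hb k) (polyPV_add_le μ dw x j)) (mu_mul_ge hμ _ _)
  | succ n ihn =>
    intro x hx k
    induction k using Nat.strong_induction_on with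
    | _ k ihk =>
      intro j hkj
      have hb0 : g.leadingCoeff ≠ 0 := Polynomial.leadingCoeff_ne_zero.mpr hg
      have hgx : g * x ≠ 0 := mul_ne_zero hg hx
      have hdeg : (g*x).natDegree = g.natDegree + x.natDegree := Polynomial.natDegree_mul hg hx
      set e := g.natDegree with he
      set b := g.leadingCoeff with hbdef
      -- coefficient expansion
      have hexp : (g*x).coeff (e + j)
          = ∑ s ∈ Finset.range (e+1), g.coeff (e - s) * x.coeff (j + s) := by
        rw [coeff_mul_expand g x (le_refl e) (Nat.le_add_right e j)]
        rw [← Finset.sum_range_reflect]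
        refine Finset.sum_congr rfl ?_
        intro s hs
        have hs' : s < e + 1 := Finset.mem_range.mp hs
        rw [show e + 1 - 1 - s = e - s from by omega,
            show e + j - (e - s) = j + s from by omega]
      have hxx : (g*x).coeff (e + j)
          = (∑ i ∈ Finset.range e, g.coeff (e - (i+1)) * x.coeff (j + (i+1))) + b * x.coeff j := by
        rw [hexp, Finset.sum_range_succ' (fun s => g.coeff (e - s) * x.coeff (j + s)) e]
        simp only [Nat.sub_zero, add_zero]
        rw [show g.coeff e = b from by rw [he, hbdef]; exact Polynomial.coeff_natDegree]
      have hpow : b ^ (n+1+k) = b ^ (n+k) * b := by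
        rw [← pow_succ]
        congr 1
        omega
      have heq : b ^ (n+1+k) * x.coeff j
          = b ^ (n+k) * ((g*x).coeff (e+j))
            - ∑ i ∈ Finset.range e, b^(n+k) * (g.coeff (e - (i+1)) * x.coeff (j + (i+1))) := by
        rw [← Finset.mul_sum, hxx, hpow]
        ring
      rw [heq]
      apply le_mu_sub hμ
      · -- main term via outer IH applied to g*x
        have h1 := ihn (g*x) hgx k (e+j) (by rw [hdeg]; omega)
        rw [show g^n * (g*x) = g^(n+1)*x from by ring] at h1
        refine le_trans (le_of_eq ?_) h1
        congr 1
        exact EReal.coe_eq_coe_iff.mpr (by push_cast; ring)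
      · -- the sum
        apply le_mu_sum hμ
        intro i hi
        have hie : i < e := Finset.mem_range.mp hi
        by_cases hik : i + 1 ≤ k
        · set k' := k - (i+1) with hk'def
          have hkk : k = k' + (i+1) := by omega
          have hterm : b^(n+k) * (g.coeff (e - (i+1)) * x.coeff (j + (i+1)))
              = (g.coeff (e - (i+1)) * b^i) * (b^(n+1+k') * x.coeff (j + (i+1))) := by
            rw [show n + k = i + (n+1+k') from by omega, pow_add]
            ring
          rw [hterm]
          have hIH := ihk k' (by omega) (j + (i+1)) (by omega)
          have hGi : ((β - ((i+1 : ℕ) : ℝ) * dw : ℝ) : EReal) ≤ μ (g.coeff (e - (i+1))) :=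
            hG (i+1) (by omega) (by omega)
          have hstep1 : (((β - ((i+1:ℕ):ℝ)*dw) + (i:ℝ)*β : ℝ) : EReal)
              ≤ μ (g.coeff (e - (i+1)) * b^i) := by
            refine le_trans ?_ (mu_mul_ge hμ _ _)
            rw [EReal.coe_add]
            exact add_le_add hGi (mu_pow hμ hb i)
          refine le_trans (le_of_eq ?_) (le_trans (add_le_add hstep1 hIH) (mu_mul_ge hμ _ _))
          rw [← add_assoc]
          congr 1
          rw [← EReal.coe_add]
          refine EReal.coe_eq_coe_iff.mpr ?_
          have hkr : (k : ℝ) = (k' : ℝ) + (i : ℝ) + 1 := by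
            rw [hkk]; push_cast; ring
          push_cast
          rw [hkr]
          ring
        · have hz : x.coeff (j + (i+1)) = 0 :=
            Polynomial.coeff_eq_zero_of_natDegree_lt (by omega)
          rw [hz, mul_zero, mul_zero, mu_zero hμ]
          exact le_top

end Key

theorem statement9' (B : Type*) [CommRing B] [IsDomain B]
    (μ : B → EReal) (hμ : IsNegativePV μ)
    (hloc : ∀ b : B, b ≠ 0 → IsLocalizing μ b)
    (d : ℝ) (hd : 0 < d) :
    ∀ g : Polynomial B, g ≠ 0 → IsLocalizing (polyPV μ d) g := by
  intro g hg
  have hb0 : g.leadingCoeff ≠ 0 := Polynomial.leadingCoeff_ne_zero.mpr hg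
  obtain ⟨β, hβ⟩ := ereal_ex_coe (mu_ne_bot hμ g.leadingCoeff) (by
    intro h
    have h2 := mu_nonpos hμ hb0
    rw [h] at h2
    exact absurd (le_antisymm h2 le_top) (by simp))
  have hβ0 : β ≤ 0 := by
    have h2 := mu_nonpos hμ hb0
    rw [hβ] at h2
    exact_mod_cast h2
  have hex : ∀ a : ℕ, ∃ r : ℝ, (r : EReal) ≤ μ (g.coeff a) :=
    fun a => ereal_ex_coe_le (mu_ne_bot hμ _)
  choose r hr using hex
  obtain ⟨M, hMdef⟩ : ∃ v : ℝ, v = Finset.inf' (Finset.range (g.natDegree+1))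
      ⟨0, Finset.mem_range.mpr (by omega)⟩ r := ⟨_, rfl⟩
  have hMle : ∀ a : ℕ, a ≤ g.natDegree → (M : EReal) ≤ μ (g.coeff a) := by
    intro a ha
    refine le_trans ?_ (hr a)
    refine EReal.coe_le_coe_iff.mpr ?_
    rw [hMdef]
    exact Finset.inf'_le r (Finset.mem_range.mpr (by omega))
  obtain ⟨C₀, D₀, hC₀, hD₀, hlocb⟩ := hloc g.leadingCoeff hb0
  obtain ⟨C₁, hC₁def⟩ : ∃ v : ℝ, v = min C₀ 1 := ⟨_, rfl⟩
  have hC₁ : 0 < C₁ := by rw [hC₁def]; exact lt_min hC₀ one_pos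
  have hC₁le1 : C₁ ≤ 1 := by rw [hC₁def]; exact min_le_right _ _
  have hC₁leC₀ : C₁ ≤ C₀ := by rw [hC₁def]; exact min_le_left _ _
  obtain ⟨P, hPdef⟩ : ∃ v : ℝ, v = D₀ - β := ⟨_, rfl⟩
  have hP : 0 ≤ P := by rw [hPdef]; linarith
  obtain ⟨dw, hdwdef⟩ : ∃ v : ℝ, v = max (max d (β - M)) (2*(P+1)/C₁) := ⟨_, rfl⟩
  have hdwd : d ≤ dw := by
    rw [hdwdef]; exact le_trans (le_max_left _ _) (le_max_left _ _)
  have hdw0 : 0 < dw := lt_of_lt_of_le hd hdwd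
  have hdwM : β - M ≤ dw := by
    rw [hdwdef]; exact le_trans (le_max_right d _) (le_max_left _ _)
  have hdwP : 2*(P+1)/C₁ ≤ dw := by rw [hdwdef]; exact le_max_right _ _
  have h2P : 2*(P+1) ≤ C₁ * dw := by
    have h1 := mul_le_mul_of_nonneg_left hdwP (le_of_lt hC₁)
    rwa [mul_div_cancel₀ _ (ne_of_gt hC₁)] at h1
  have hPdw : P / dw ≤ C₁ / 2 := by
    rw [div_le_div_iff₀ hdw0 (by norm_num : (0:ℝ) < 2)]
    linarith
  obtain ⟨C', hC'def⟩ : ∃ v : ℝ, v = C₁ - P/dw := ⟨_, rfl⟩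
  have hC'pos : 0 < C' := by rw [hC'def]; linarith
  have hC'le1 : C' ≤ 1 := by
    have h0 : 0 ≤ P/dw := div_nonneg hP hdw0.le
    rw [hC'def]; linarith
  obtain ⟨C, hCdef⟩ : ∃ v : ℝ, v = C' * (d / dw) := ⟨_, rfl⟩
  have hCpos : 0 < C := by rw [hCdef]; exact mul_pos hC'pos (div_pos hd hdw0)
  refine ⟨C, D₀, hCpos, hD₀, ?_⟩
  intro n x
  by_cases hx : x = 0
  · subst hx
    rw [mul_zero, polyPV_zero hμ d, EReal.coe_mul_top_of_pos hCpos, EReal.top_add_coe]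
  · have hxn : g ^ n * x ≠ 0 := mul_ne_zero (pow_ne_zero n hg) hx
    have hG : ∀ s : ℕ, 1 ≤ s → s ≤ g.natDegree →
        ((β - (s:ℝ)*dw : ℝ):EReal) ≤ μ (g.coeff (g.natDegree - s)) := by
      intro s h1 h2
      refine le_trans ?_ (hMle (g.natDegree - s) (by omega))
      refine EReal.coe_le_coe_iff.mpr ?_
      have hs1 : (1:ℝ) ≤ (s:ℝ) := by exact_mod_cast h1
      have h3 : dw ≤ (s:ℝ)*dw := le_mul_of_one_le_left hdw0.le hs1
      linarith
    obtain ⟨j, ρ, hjle, hcj, hμj, hρ0, hνx⟩ := polyPV_attain hμ dw hx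
    obtain ⟨k, hkj⟩ : ∃ k, k + j = x.natDegree := ⟨x.natDegree - j, by omega⟩
    have hkey := key_estimate hμ g hg β dw hβ hG n x hx k j hkj
    have hl := hlocb (n+k) (x.coeff j)
    rw [hμj] at hl
    have hl' : μ (g.leadingCoeff ^ (n+k) * x.coeff j)
        ≤ ((C₀ * ρ + (((n+k) : ℕ):ℝ)*D₀ : ℝ) : EReal) := by
      refine le_trans hl (le_of_eq ?_)
      norm_cast
    obtain ⟨jy, ρy, hjyle, hcjy, hμjy, hρy0, hνy⟩ := polyPV_attain hμ dw hxn
    obtain ⟨W, hWdef⟩ : ∃ v : ℝ, v = ρy - (jy:ℝ)*dw := ⟨_, rfl⟩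
    have hνy' : polyPV μ dw (g ^ n * x) = (W : EReal) := by rw [hWdef]; exact hνy
    have hI1 : (k:ℝ)*β + ((n:ℝ)*(g.natDegree:ℝ) + (j:ℝ))*dw + W
        ≤ C₀*ρ + ((n:ℝ)+(k:ℝ))*D₀ := by
      have h1 := le_trans hkey hl'
      rw [hνy', ← EReal.coe_add] at h1
      have h2 := EReal.coe_le_coe_iff.mp h1
      push_cast at h2
      linarith
    have hlead : x.coeff x.natDegree ≠ 0 := by
      rw [Polynomial.coeff_natDegree]
      exact Polynomial.leadingCoeff_ne_zero.mpr hx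
    have hI3 : ρ - (j:ℝ)*dw + (x.natDegree:ℝ)*dw ≤ 0 := by
      have h4 := polyPV_add_le μ dw x x.natDegree
      rw [hνx, ← EReal.coe_add] at h4
      have h5 := le_trans h4 (mu_nonpos hμ hlead)
      exact_mod_cast h5
    obtain ⟨rx, hrxdef⟩ : ∃ v : ℝ, v = ρ - (j:ℝ)*dw := ⟨_, rfl⟩
    have hrx : ρ = rx + (j:ℝ)*dw := by rw [hrxdef]; ring
    have hNx : (x.natDegree:ℝ) = (k:ℝ) + (j:ℝ) := by rw [← hkj]; push_cast; ring
    have hjdw : (0:ℝ) ≤ (j:ℝ)*dw := mul_nonneg (Nat.cast_nonneg j) hdw0.le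
    have hkd : (k:ℝ)*dw ≤ -rx := by
      rw [hNx] at hI3
      have h6' : ((k:ℝ)+(j:ℝ))*dw = (k:ℝ)*dw + (j:ℝ)*dw := by ring
      rw [h6'] at hI3
      rw [hrxdef]
      linarith
    have hkP : (k:ℝ)*P ≤ (-rx)*(P/dw) := by
      have h7 := mul_le_mul_of_nonneg_right hkd (div_nonneg hP hdw0.le)
      have h8 : (k:ℝ)*dw*(P/dw) = (k:ℝ)*P := by
        field_simp
      rw [h8] at h7
      exact h7
    have hCρ : C₀*ρ ≤ C₁*ρ := mul_le_mul_of_nonpos_right hC₁leC₀ hρ0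
    have hI4 : W ≤ C'*rx + (n:ℝ)*D₀ := by
      have e1 : (k:ℝ)*P = (k:ℝ)*D₀ - (k:ℝ)*β := by rw [hPdef]; ring
      have e2 : C₁*ρ = C₁*rx + C₁*((j:ℝ)*dw) := by rw [hrx]; ring
      have e3 : C₁*((j:ℝ)*dw) ≤ (j:ℝ)*dw := mul_le_of_le_one_left hjdw hC₁le1
      have e4 : (0:ℝ) ≤ (n:ℝ)*(g.natDegree:ℝ)*dw := by positivity
      have e5 : C'*rx = C₁*rx - rx*(P/dw) := by rw [hC'def]; ring
      have e6 : (-rx)*(P/dw) = -(rx*(P/dw)) := by ring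
      have e7 : ((n:ℝ)*(g.natDegree:ℝ) + (j:ℝ))*dw
          = (n:ℝ)*(g.natDegree:ℝ)*dw + (j:ℝ)*dw := by ring
      have e8 : ((n:ℝ)+(k:ℝ))*D₀ = (n:ℝ)*D₀ + (k:ℝ)*D₀ := by ring
      rw [e7] at hI1
      rw [e8] at hI1
      linarith
    have hydjy : polyPV μ d (g^n*x) ≤ ((ρy - (jy:ℝ)*d : ℝ):EReal) := by
      refine le_trans (polyPV_le μ d (g^n*x) jy) (le_of_eq ?_)
      rw [hμjy, ← EReal.coe_sub]
    have h7 : d/dw ≤ 1 := (div_le_one hdw0).mpr hdwd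
    have h7' : (0:ℝ) ≤ d/dw := div_nonneg hd.le hdw0.le
    have hWd : ρy - (jy:ℝ)*d ≤ (d/dw)*W := by
      have h6 : (d/dw)*W = (d/dw)*ρy - (jy:ℝ)*d := by
        rw [hWdef]
        field_simp
      have h9 := mul_le_mul_of_nonpos_right h7 hρy0
      rw [one_mul] at h9
      linarith
    obtain ⟨j2, ρ2, hj2le, hcj2, hμj2, hρ20, hνxd⟩ := polyPV_attain hμ d hx
    obtain ⟨rdx, hrdxdef⟩ : ∃ v : ℝ, v = ρ2 - (j2:ℝ)*d := ⟨_, rfl⟩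
    have hνxd' : polyPV μ d x = (rdx : EReal) := by rw [hrdxdef]; exact hνxd
    have hrxrdx : rx ≤ rdx := by
      have h8 : polyPV μ dw x ≤ ((ρ2 - (j2:ℝ)*dw : ℝ):EReal) := by
        refine le_trans (polyPV_le μ dw x j2) (le_of_eq ?_)
        rw [hμj2, ← EReal.coe_sub]
      rw [hνx] at h8
      have h9 := EReal.coe_le_coe_iff.mp h8
      have h10 : (j2:ℝ)*d ≤ (j2:ℝ)*dw := mul_le_mul_of_nonneg_left hdwd (Nat.cast_nonneg j2)
      rw [hrxdef, hrdxdef]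
      linarith
    have hfinal : ρy - (jy:ℝ)*d ≤ C * rdx + (n:ℝ)*D₀ := by
      have h11 := mul_le_mul_of_nonneg_left hI4 h7'
      have h12 : (d/dw)*(C'*rx + (n:ℝ)*D₀) = C*rx + (d/dw)*((n:ℝ)*D₀) := by
        rw [hCdef]; ring
      have h13 : C*rx ≤ C*rdx := mul_le_mul_of_nonneg_left hrxrdx hCpos.le
      have hnD : (0:ℝ) ≤ (n:ℝ)*D₀ := mul_nonneg (Nat.cast_nonneg n) hD₀
      have h14 : (d/dw)*((n:ℝ)*D₀) ≤ (n:ℝ)*D₀ := mul_le_of_le_one_left hnD h7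
      linarith
    calc polyPV μ d (g^n*x) ≤ ((ρy - (jy:ℝ)*d : ℝ):EReal) := hydjy
      _ ≤ ((C * rdx + (n:ℝ)*D₀ : ℝ):EReal) := EReal.coe_le_coe_iff.mpr hfinal
      _ = (C:EReal) * polyPV μ d x + (((n:ℝ)*D₀ : ℝ):EReal) := by
          rw [hνxd', EReal.coe_add, EReal.coe_mul]

/-- If every nonzero element of an integral domain `(B, μ)` with a negative
pseudovaluation is localizing, then every nonzero element of `B[T]` is localizing with
respect to `ν(Σ a_i T^i) = min_i { μ(a_i) - i d }`. -/
theorem statement9 (B : Type*) [CommRing B] [IsDomain B]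
    (μ : B → EReal) (hμ : IsNegativePV μ)
    (hloc : ∀ b : B, b ≠ 0 → IsLocalizing μ b)
    (d : ℝ) (hd : 0 < d) :
    ∀ g : Polynomial B, g ≠ 0 → IsLocalizing (polyPV μ d) g := by
  exact statement9' B μ hμ hloc d hd
end
end

section
/- Let (A, ν) be a Noetherian integral domain with a negative pseudovaluation and let a, f ∈ A be nonzero localizing elements. Let ν' be the induced pseudovaluation on the localization A_f, where the parameter d > 0 is chosen at least as large as the constant D appearing in the localizing condition for f. Then the image of a in A_f is localizing with respect to ν'. -/
open scoped Classical

noncomputable section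

section AuxPV

variable {A : Type*} [CommRing A] {ν : A → EReal}

lemma ereal_exists_real {x : EReal} (h1 : x ≠ ⊥) (h2 : x ≠ ⊤) : ∃ v : ℝ, x = (v : EReal) := by
  lift x to ℝ using ⟨h2, h1⟩
  exact ⟨x, rfl⟩

lemma pv_neg_ge (hpv : IsPseudovaluation ν) (y : A) : ν y ≤ ν (-y) := by
  have h := hpv.min_le_sub 0 y
  rw [zero_sub] at h
  refine le_trans ?_ h
  simp [hpv.map_zero]

lemma pv_sum_ge (hpv : IsPseudovaluation ν) {ι : Type*} (s : Finset ι)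
    (t : ι → A) (W : EReal) (h : ∀ i ∈ s, W ≤ ν (t i)) : W ≤ ν (∑ i ∈ s, t i) := by
  refine Finset.sum_induction t (fun x => W ≤ ν x) ?_ ?_ h
  · intro u w hu hw
    have h2 := hpv.min_le_sub u (-w)
    rw [sub_neg_eq_add] at h2
    exact le_trans (le_min hu (le_trans hw (pv_neg_ge hpv w))) h2
  · simp [hpv.map_zero]

lemma pv_pow_mul (hpv : IsPseudovaluation ν) (hbot : ∀ y : A, ν y ≠ ⊥)
    (f : A) {vf : ℝ} (hvf : ν f = (vf : EReal)) (n : ℕ) :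
    ∀ x : A, (((n : ℝ) * vf : ℝ) : EReal) + ν x ≤ ν (f ^ n * x) := by
  induction n with
  | zero => intro x; simpa using le_rfl
  | succ n ih =>
    intro x
    have h1 : ν f + ν x ≤ ν (f * x) := hpv.add_le_mul f x (hbot f) (hbot x)
    rw [hvf] at h1
    have h3 : f ^ (n + 1) * x = f ^ n * (f * x) := by ring
    have hcast : (((n + 1 : ℕ) : ℝ) * vf : ℝ) = ((n : ℕ) : ℝ) * vf + vf := by push_cast; ring
    rw [h3, hcast, EReal.coe_add, add_assoc]
    exact le_trans (add_le_add_right h1 _) (ih (f * x))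

lemma exists_sat {A : Type*} [CommRing A] [IsNoetherianRing A] (a f : A) :
    ∃ e : ℕ, ∀ (b : A) (k : ℕ), a ∣ b * f ^ k → a ∣ b * f ^ e := by
  have hmono : Monotone (fun k : ℕ => Submodule.colon (Ideal.span {a}) (Ideal.span {f ^ k})) := by
    intro k k' hkk' b hb
    rw [Ideal.mem_colon_span_singleton] at hb ⊢
    have h2 : b * f ^ k' = b * f ^ k * f ^ (k' - k) := by
      rw [mul_assoc, ← pow_add, Nat.add_sub_cancel' hkk']
    rw [h2]
    exact Ideal.mul_mem_right _ _ hb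
  obtain ⟨e, he⟩ := monotone_stabilizes_iff_noetherian.mpr inferInstance ⟨_, hmono⟩
  refine ⟨e, fun b k hk => ?_⟩
  rcases le_total k e with h | h
  · obtain ⟨c, hc⟩ := hk
    refine ⟨c * f ^ (e - k), ?_⟩
    rw [← mul_assoc, ← hc, mul_assoc, ← pow_add, Nat.add_sub_cancel' h]
  · have hb : b ∈ Submodule.colon (Ideal.span {a}) (Ideal.span {f ^ k}) := by
      rw [Ideal.mem_colon_span_singleton, Ideal.mem_span_singleton]
      exact hk
    have h2 := he k h
    simp only [OrderHom.coe_mk] at h2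
    rw [← h2, Ideal.mem_colon_span_singleton, Ideal.mem_span_singleton] at hb
    exact hb

lemma sat_pow {A : Type*} [CommRing A] [IsDomain A] {a f : A} (ha0 : a ≠ 0) {e : ℕ}
    (he : ∀ (b : A) (k : ℕ), a ∣ b * f ^ k → a ∣ b * f ^ e) :
    ∀ (n : ℕ) (b : A) (k : ℕ), a ^ n ∣ b * f ^ k → a ^ n ∣ b * f ^ (n * e) := by
  intro n
  induction n with
  | zero => intro b k _; simpa using one_dvd _
  | succ n ih =>
    intro b k h
    have h1 : a ∣ b * f ^ k := dvd_trans (dvd_pow_self a (Nat.succ_ne_zero n)) h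
    obtain ⟨b₁, hb₁⟩ := he b k h1
    obtain ⟨c, hc⟩ := h
    have key : a * (b₁ * f ^ k) = a * (a ^ n * (c * f ^ e)) := by
      calc a * (b₁ * f ^ k) = b * f ^ e * f ^ k := by rw [hb₁]; ring
        _ = b * f ^ k * f ^ e := by ring
        _ = a ^ (n + 1) * c * f ^ e := by rw [hc]
        _ = a * (a ^ n * (c * f ^ e)) := by ring
    have key2 : b₁ * f ^ k = a ^ n * (c * f ^ e) := mul_left_cancel₀ ha0 key
    obtain ⟨c₁, hc₁⟩ := ih b₁ k ⟨c * f ^ e, key2⟩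
    refine ⟨c₁, ?_⟩
    have hee : (n + 1) * e = e + n * e := by ring
    calc b * f ^ ((n + 1) * e) = b * f ^ e * f ^ (n * e) := by
          rw [hee, pow_add, mul_assoc]
      _ = a * (b₁ * f ^ (n * e)) := by rw [hb₁]; ring
      _ = a * (a ^ n * c₁) := by rw [hc₁]
      _ = a ^ (n + 1) * c₁ := by ring

lemma polyPV_le_coeff (ν : A → EReal) (d : ℝ) (g : Polynomial A) (i : ℕ) :
    polyPV ν d g ≤ ν (g.coeff i) - (((i : ℝ) * d : ℝ) : EReal) :=
  iInf_le _ i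

lemma polyPV_monomial_ge (hpv : IsPseudovaluation ν) (d : ℝ) (m : ℕ) (c : A) :
    ν c - (((m : ℝ) * d : ℝ) : EReal) ≤ polyPV ν d (Polynomial.monomial m c) := by
  refine le_iInf fun i => ?_
  rcases eq_or_ne m i with rfl | hmi
  · rw [Polynomial.coeff_monomial, if_pos rfl]
  · rw [Polynomial.coeff_monomial, if_neg hmi, hpv.map_zero, EReal.top_sub_coe]
    exact le_top

lemma polyPV_zero_s10 (hpv : IsPseudovaluation ν) (d : ℝ) : polyPV ν d (0 : Polynomial A) = ⊤ := by
  refine top_unique (le_iInf fun i => ?_)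
  rw [Polynomial.coeff_zero, hpv.map_zero, EReal.top_sub_coe]

end AuxPV

/-- In a Noetherian integral domain with a negative pseudovaluation, if
`a` and `f` are nonzero localizing elements (with `f` localizing with constants `C, D`)
and `d ≥ D`, `d > 0`, then the image of `a` in `A_f` is localizing with respect to the
induced pseudovaluation `ν'`. -/
theorem statement10 (A : Type*) [CommRing A] [IsDomain A] [IsNoetherianRing A]
    (ν : A → EReal) (hν : IsNegativePV ν)
    (a f : A) (ha0 : a ≠ 0) (hf0 : f ≠ 0)
    (haloc : IsLocalizing ν a)
    (C D : ℝ) (hC : 0 < C) (hD : 0 ≤ D)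
    (hfloc : ∀ (n : ℕ) (x : A),
      ν (f ^ n * x) ≤ (C : EReal) * ν x + (((n : ℝ) * D : ℝ) : EReal))
    (d : ℝ) (hd : 0 < d) (hdD : D ≤ d) :
    IsLocalizing (locPV ν f d) (algebraMap A (Localization.Away f) a) := by
  obtain ⟨hpv, hbot, hneg⟩ := hν
  obtain ⟨Ca, Da, hCa, hDa, hlocA⟩ := haloc
  -- the real value of ν f
  have hνf_le : ν f ≤ 0 := hneg f hf0
  have hνf_ne_top : ν f ≠ ⊤ := by
    intro htop
    rw [htop] at hνf_le
    exact (lt_irrefl _ (lt_of_le_of_lt hνf_le (by norm_num))).elim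
  obtain ⟨vf, hvf⟩ := ereal_exists_real (hbot f) hνf_ne_top
  have hvf0 : vf ≤ 0 := by
    rw [hvf] at hνf_le
    exact_mod_cast hνf_le
  -- saturation exponent
  obtain ⟨e, he⟩ := exists_sat a f
  have hsatn := sat_pow ha0 he
  -- constants
  set k₁ : ℝ := Ca * d - vf with hk₁def
  have hk₁ : 0 < k₁ := by nlinarith
  set M₁ : ℝ := d + k₁ with hM₁def
  have hM₁ : 0 < M₁ := by nlinarith
  -- localization facts
  have hsub : Submonoid.powers f ≤ nonZeroDivisors A := by
    intro y hy
    obtain ⟨m, rfl⟩ := hy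
    exact mem_nonZeroDivisors_of_ne_zero (pow_ne_zero m hf0)
  have hinj : Function.Injective (algebraMap A (Localization.Away f)) :=
    IsLocalization.injective _ hsub
  haveI : IsDomain (Localization.Away f) := IsLocalization.isDomain_localization hsub
  have hφf : algebraMap A (Localization.Away f) f ≠ 0 := by
    intro h0
    exact hf0 (hinj (by rw [h0, map_zero]))
  have hφa : algebraMap A (Localization.Away f) a ≠ 0 := by
    intro h0
    exact ha0 (hinj (by rw [h0, map_zero]))
  refine ⟨Ca * d / M₁, d * ((e : ℝ) * k₁ + Da) / M₁, div_pos (mul_pos hCa hd) hM₁,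
    div_nonneg (mul_nonneg hd.le (add_nonneg (mul_nonneg (Nat.cast_nonneg e) hk₁.le) hDa))
      hM₁.le, ?_⟩
  intro n x
  by_cases hx : x = 0
  · rw [hx, mul_zero]
    have h0 : locPV ν f d (0 : Localization.Away f) = ⊤ := by
      refine top_unique ?_
      refine le_trans ?_ (le_iSup₂ (f := fun (g : Polynomial A)
        (_ : Polynomial.aeval (IsLocalization.Away.invSelf (S := Localization.Away f) f) g
          = (0 : Localization.Away f)) => polyPV ν d g) 0 (map_zero _))
      rw [polyPV_zero_s10 hpv]
    rw [h0, EReal.coe_mul_top_of_pos (div_pos (mul_pos hCa hd) hM₁), EReal.top_add_coe]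
  · -- a representation of x
    obtain ⟨⟨c, sf⟩, hcs⟩ := IsLocalization.surj (Submonoid.powers f) x
    obtain ⟨s, hs⟩ := sf.prop
    have hrep : x * algebraMap A (Localization.Away f) f ^ s
        = algebraMap A (Localization.Away f) c := by
      have hs' : f ^ s = (sf : A) := hs
      rw [← map_pow, hs']
      exact hcs
    have hax : algebraMap A (Localization.Away f) a ^ n * x ≠ 0 :=
      mul_ne_zero (pow_ne_zero n hφa) hx
    -- bound each representation of a^n x
    have hsup : ∀ h : Polynomial A,
        Polynomial.aeval (IsLocalization.Away.invSelf (S := Localization.Away f) f) h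
          = algebraMap A (Localization.Away f) a ^ n * x →
        polyPV ν d h ≤ ((Ca * d / M₁ : ℝ) : EReal) * locPV ν f d x
          + (((n : ℝ) * (d * ((e : ℝ) * k₁ + Da) / M₁) : ℝ) : EReal) := by
      intro h hh
      have hh0 : h ≠ 0 := by
        rintro rfl
        rw [map_zero] at hh
        exact hax hh.symm
      set u : Localization.Away f := IsLocalization.Away.invSelf (S := Localization.Away f) f
        with hu
      set L : ℕ := h.natDegree with hL
      have hlead : h.coeff L ≠ 0 := by
        have := Polynomial.leadingCoeff_ne_zero.mpr hh0
        rwa [Polynomial.leadingCoeff] at this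
      rcases eq_or_ne (polyPV ν d h) ⊥ with hVbot | hVbot
      · rw [hVbot]; exact bot_le
      have hVle : polyPV ν d h ≤ (((-((L : ℝ) * d)) : ℝ) : EReal) := by
        refine le_trans (polyPV_le_coeff ν d h L) ?_
        have h1 : ν (h.coeff L) ≤ 0 := hneg _ hlead
        calc ν (h.coeff L) - (((L : ℝ) * d : ℝ) : EReal)
            ≤ 0 - (((L : ℝ) * d : ℝ) : EReal) := by
              rw [sub_eq_add_neg, sub_eq_add_neg]
              exact add_le_add_left h1 _
          _ = (((-((L : ℝ) * d)) : ℝ) : EReal) := by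
              rw [zero_sub, ← EReal.coe_neg]
      obtain ⟨v, hv⟩ := ereal_exists_real hVbot
        (ne_top_of_le_ne_top (EReal.coe_ne_top _) hVle)
      have hvLd : v ≤ -((L : ℝ) * d) := by
        rw [hv] at hVle
        exact_mod_cast hVle
      have hcl : ∀ l : ℕ, ((v + (l : ℝ) * d : ℝ) : EReal) ≤ ν (h.coeff l) := by
        intro l
        have h1 : ((v : ℝ) : EReal) ≤ ν (h.coeff l) - (((l : ℝ) * d : ℝ) : EReal) := by
          rw [← hv]; exact polyPV_le_coeff ν d h l
        have h2 := add_le_add_left h1 ((((l : ℝ) * d : ℝ)) : EReal)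
        rw [EReal.sub_add_cancel, ← EReal.coe_add] at h2
        exact h2
      -- clear denominators
      set b : A := ∑ l ∈ Finset.range (L + 1), h.coeff l * f ^ (L - l) with hbdef
      have hb : algebraMap A (Localization.Away f) b
          = Polynomial.aeval u h * algebraMap A (Localization.Away f) f ^ L := by
        rw [Polynomial.aeval_eq_sum_range, Finset.sum_mul, hbdef, map_sum]
        refine Finset.sum_congr rfl fun i hi => ?_
        have hiL : i ≤ L := Nat.lt_succ_iff.mp (Finset.mem_range.mp hi)
        rw [map_mul, map_pow, Algebra.smul_def, mul_assoc]
        congr 1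
        have h2 : u ^ i * algebraMap A (Localization.Away f) f ^ L
            = (u * algebraMap A (Localization.Away f) f) ^ i
              * algebraMap A (Localization.Away f) f ^ (L - i) := by
          rw [mul_pow, mul_assoc, ← pow_add, Nat.add_sub_cancel' hiL]
        rw [h2, mul_comm u, IsLocalization.Away.mul_invSelf, one_pow, one_mul]
      have hbfs : b * f ^ s = a ^ n * (c * f ^ L) := by
        apply hinj
        rw [map_mul, map_pow, hb, hh, map_mul, map_pow, map_mul, map_pow]
        rw [← hrep]
        ring
      obtain ⟨c', hc'⟩ := hsatn n b s ⟨c * f ^ L, hbfs⟩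
      have hxc' : algebraMap A (Localization.Away f) c'
          = x * algebraMap A (Localization.Away f) f ^ (L + n * e) := by
        have h2 := congrArg (algebraMap A (Localization.Away f)) hc'
        rw [map_mul, map_mul, map_pow, map_pow, hb, hh] at h2
        apply mul_left_cancel₀ (pow_ne_zero n hφa)
        rw [← h2, pow_add]
        ring
      have hc'0 : c' ≠ 0 := by
        intro h0
        rw [h0, map_zero] at hxc'
        exact mul_ne_zero hx (pow_ne_zero _ hφf) hxc'.symm
      -- the monomial representation of x
      have hπg : Polynomial.aeval u (Polynomial.monomial (L + n * e) c') = x := by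
        rw [Polynomial.aeval_monomial, hxc', mul_assoc, ← mul_pow,
          IsLocalization.Away.mul_invSelf, one_pow, mul_one]
      -- value of ν c'
      have hνc'_le : ν c' ≤ 0 := hneg c' hc'0
      have hνc'_ne_top : ν c' ≠ ⊤ := by
        intro htop
        rw [htop] at hνc'_le
        exact (lt_irrefl _ (lt_of_le_of_lt hνc'_le (by norm_num))).elim
      obtain ⟨vc', hvc'⟩ := ereal_exists_real (hbot c') hνc'_ne_top
      -- estimate ν b
      have hνb : ((v + (L : ℝ) * vf : ℝ) : EReal) ≤ ν b := by
        refine pv_sum_ge hpv _ _ _ fun l hl => ?_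
        have hlL : l ≤ L := Nat.lt_succ_iff.mp (Finset.mem_range.mp hl)
        have h1 := pv_pow_mul hpv hbot f hvf (L - l) (h.coeff l)
        rw [mul_comm (h.coeff l)]
        refine le_trans ?_ h1
        have h2 := add_le_add_right (hcl l) ((((((L - l : ℕ) : ℝ)) * vf : ℝ)) : EReal)
        refine le_trans ?_ h2
        rw [← EReal.coe_add, EReal.coe_le_coe_iff]
        have h3 : ((L - l : ℕ) : ℝ) = (L : ℝ) - (l : ℝ) := by
          rw [Nat.cast_sub hlL]
        rw [h3]
        have hld : (0 : ℝ) ≤ (l : ℝ) := Nat.cast_nonneg l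
        nlinarith [hd.le]
      -- estimate ν (a^n c') from below
      have hT1E : ((v + ((L : ℝ) + (n : ℝ) * (e : ℝ)) * vf : ℝ) : EReal)
          ≤ ν (a ^ n * c') := by
        have heq : f ^ (n * e) * b = a ^ n * c' := by rw [mul_comm]; exact hc'
        rw [← heq]
        have h1 := pv_pow_mul hpv hbot f hvf (n * e) b
        refine le_trans ?_ h1
        have h2 := add_le_add_right hνb (((((n * e : ℕ) : ℝ)) * vf : ℝ) : EReal)
        refine le_trans (le_of_eq ?_) h2
        rw [← EReal.coe_add]
        congr 1
        push_cast
        ring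
      -- localizing property of a
      have hAA : ν (a ^ n * c') ≤ ((Ca * vc' + (n : ℝ) * Da : ℝ) : EReal) := by
        have h1 := hlocA n c'
        rw [hvc', ← EReal.coe_mul, ← EReal.coe_add] at h1
        exact h1
      have hT1 : v + ((L : ℝ) + (n : ℝ) * (e : ℝ)) * vf ≤ Ca * vc' + (n : ℝ) * Da := by
        exact_mod_cast le_trans hT1E hAA
      -- the monomial value is in the sup
      set P : ℝ := vc' - ((L : ℝ) + (n : ℝ) * (e : ℝ)) * d with hPdef
      have hgle : ((P : ℝ) : EReal) ≤ locPV ν f d x := by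
        refine le_trans ?_ (le_iSup₂ (f := fun (g : Polynomial A)
          (_ : Polynomial.aeval u g = x) => polyPV ν d g)
          (Polynomial.monomial (L + n * e) c') hπg)
        refine le_trans (le_of_eq ?_) (polyPV_monomial_ge hpv d (L + n * e) c')
        rw [hvc', ← EReal.coe_sub]
        congr 1
        rw [hPdef]
        push_cast
        ring
      -- the real inequality
      have hQ1 : (0 : ℝ) ≤ d * (Ca * vc' + (n : ℝ) * Da
          - (v + ((L : ℝ) + (n : ℝ) * (e : ℝ)) * vf)) :=
        mul_nonneg hd.le (by linarith)
      have hQ2 : (0 : ℝ) ≤ k₁ * (-(v + (L : ℝ) * d)) :=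
        mul_nonneg hk₁.le (by linarith)
      have hkey : v * M₁ ≤ Ca * d * P + (n : ℝ) * (d * ((e : ℝ) * k₁ + Da)) := by
        rw [hPdef, hM₁def, hk₁def] at *
        nlinarith [hQ1, hQ2]
      have hfinal : v ≤ Ca * d / M₁ * P + (n : ℝ) * (d * ((e : ℝ) * k₁ + Da) / M₁) := by
        have h2 : Ca * d / M₁ * P + (n : ℝ) * (d * ((e : ℝ) * k₁ + Da) / M₁)
            = (Ca * d * P + (n : ℝ) * (d * ((e : ℝ) * k₁ + Da))) / M₁ := by
          field_simp
        rw [h2, le_div_iff₀ hM₁]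
        exact hkey
      rw [hv]
      calc ((v : ℝ) : EReal)
          ≤ ((Ca * d / M₁ * P + (n : ℝ) * (d * ((e : ℝ) * k₁ + Da) / M₁) : ℝ) : EReal) := by
            exact_mod_cast hfinal
        _ = ((Ca * d / M₁ : ℝ) : EReal) * ((P : ℝ) : EReal)
            + (((n : ℝ) * (d * ((e : ℝ) * k₁ + Da) / M₁) : ℝ) : EReal) := by
            rw [EReal.coe_add, EReal.coe_mul]
        _ ≤ ((Ca * d / M₁ : ℝ) : EReal) * locPV ν f d x
            + (((n : ℝ) * (d * ((e : ℝ) * k₁ + Da) / M₁) : ℝ) : EReal) := by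
            refine add_le_add_left ?_ _
            refine mul_le_mul_of_nonneg_left hgle ?_
            exact EReal.coe_nonneg.mpr (div_nonneg (mul_nonneg hCa.le hd.le) hM₁.le)
    exact iSup₂_le hsup
end
end

section
/- Let p be a prime and let (R, μ) be a nonzero commutative ring with pR = 0 and a negative pseudovaluation μ. Let A be a nonzero R-algebra which is free of finite rank as an R-module, and let τ be an admissible pseudovaluation on the finitely generated R-algebra A. Then a Witt vector r ∈ W(R) is overconvergent with respect to μ if and only if its image in W(A) under the map induced by the structure homomorphism R → A is overconvergent with respect to τ. -/
open scoped Classical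

noncomputable section

-- Auxiliary lemmas

section PVLemmas

variable {A : Type*} [CommRing A] {ν : A → EReal}

lemma PV.neg_le (h : IsPseudovaluation ν) (a : A) : ν a ≤ ν (-a) := by
  have := h.min_le_sub 0 a
  rw [zero_sub, h.map_zero] at this
  simpa using this

lemma PV.min_le_add (h : IsPseudovaluation ν) (a b : A) : min (ν a) (ν b) ≤ ν (a + b) := by
  have h2 := h.min_le_sub a (-b)
  rw [sub_neg_eq_add] at h2
  exact le_trans (min_le_min le_rfl (PV.neg_le h b)) h2

lemma PV.inf_le_sum (h : IsPseudovaluation ν) {β : Type*} (S : Finset β) (x : β → A) :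
    S.inf (fun s => ν (x s)) ≤ ν (∑ s ∈ S, x s) := by
  classical
  induction S using Finset.induction with
  | empty => simp [h.map_zero]
  | insert b S hs ih =>
    rw [Finset.sum_insert hs, Finset.inf_insert]
    exact le_trans (min_le_min le_rfl ih) (PV.min_le_add h _ _)

lemma PV.exists_real_lb {ι : Type*} [Fintype ι] (v : ι → EReal) (hv : ∀ i, v i ≠ ⊥) :
    ∃ U : ℝ, 0 ≤ U ∧ ∀ i, ((-U : ℝ) : EReal) ≤ v i := by
  classical
  rcases isEmpty_or_nonempty ι with hι | hι
  · exact ⟨0, le_rfl, fun i => (hι.false i).elim⟩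
  obtain ⟨i₀, _, hi₀⟩ := Finset.exists_mem_eq_inf Finset.univ Finset.univ_nonempty v
  have hlb : ∀ i, Finset.univ.inf v ≤ v i := fun i => Finset.inf_le (Finset.mem_univ i)
  by_cases htop : v i₀ = ⊤
  · refine ⟨0, le_rfl, fun i => ?_⟩
    have := hlb i; rw [hi₀, htop] at this
    exact le_trans le_top this
  · obtain ⟨x, hx⟩ : ∃ r : ℝ, v i₀ = r := by
      lift v i₀ to ℝ using ⟨htop, hv i₀⟩ with y hy
      exact ⟨y, rfl⟩
    refine ⟨max 0 (-x), le_max_left _ _, fun i => ?_⟩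
    refine le_trans ?_ (hlb i)
    rw [hi₀, hx]
    have h2 : (-(max 0 (-x)) : ℝ) ≤ x := by
      rcases le_total 0 (-x) with h | h
      · simpa [max_eq_right h] using le_rfl
      · calc (-(max 0 (-x)) : ℝ) = 0 := by simp [max_eq_left h]
          _ ≤ x := by linarith
    exact EReal.coe_le_coe_iff.mpr h2

end PVLemmas

section Unimodular

variable {R A : Type*} [CommRing R] [CommRing A] [Algebra R A]

lemma exists_unimodular [Nontrivial A] {ι : Type*} [Fintype ι] (b : Module.Basis ι R A) :
    ∃ u : ι → R, ∑ i, u i * b.repr 1 i = 1 := by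
  classical
  have hspan : Ideal.span (Set.range fun i => b.repr 1 i) = ⊤ := by
    by_contra hne
    obtain ⟨m, hm, hsub⟩ := Ideal.exists_le_maximal _ hne
    have hone : (1 : A) ∈ (m • ⊤ : Submodule R A) := by
      rw [← b.sum_repr 1]
      refine Submodule.sum_mem _ fun i _ => Submodule.smul_mem_smul ?_ trivial
      exact hsub (Ideal.subset_span ⟨i, rfl⟩)
    have hall : ∀ x : A, x ∈ (m • ⊤ : Submodule R A) := by
      intro x
      have : x * 1 ∈ (m • ⊤ : Submodule R A) := by
        refine Submodule.smul_induction_on hone ?_ ?_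
        · intro r hr y _
          rw [mul_smul_comm]
          exact Submodule.smul_mem_smul hr trivial
        · intro y z hy hz
          rw [mul_add]; exact Submodule.add_mem _ hy hz
      simpa using this
    have hcoord : ∀ x ∈ (m • ⊤ : Submodule R A), ∀ i, b.repr x i ∈ m := by
      intro x hx i
      refine Submodule.smul_induction_on hx ?_ ?_
      · intro r hr y _
        rw [map_smul, Finsupp.smul_apply, smul_eq_mul]
        exact Ideal.mul_mem_right _ _ hr
      · intro y z hy hz
        rw [map_add, Finsupp.add_apply]
        exact Ideal.add_mem _ hy hz
    have hne' : Nonempty ι := by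
      by_contra hempty
      have : (1 : A) = 0 := by
        have := b.sum_repr 1
        rw [Finset.univ_eq_empty_iff.mpr (not_nonempty_iff.mp hempty)] at this
        simpa using this.symm
      exact one_ne_zero this
    obtain ⟨i₀⟩ := hne'
    have : b.repr (b i₀) i₀ ∈ m := hcoord _ (hall _) i₀
    rw [b.repr_self, Finsupp.single_eq_same] at this
    exact hm.ne_top (Ideal.eq_top_of_isUnit_mem _ this isUnit_one)
  have h1 : (1 : R) ∈ Ideal.span (Set.range fun i => b.repr 1 i) := hspan ▸ trivial
  rw [Ideal.span, Submodule.mem_span_range_iff_exists_fun] at h1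
  obtain ⟨u, hu⟩ := h1
  exact ⟨u, by simpa [smul_eq_mul] using hu⟩

lemma repr_algebraMap {ι : Type*} [Fintype ι] (b : Module.Basis ι R A) (a : R) (i : ι) :
    b.repr (algebraMap R A a) i = a * b.repr 1 i := by
  rw [Algebra.algebraMap_eq_smul_one, map_smul, Finsupp.smul_apply, smul_eq_mul]

lemma eq_sum_u [Nontrivial A] {ι : Type*} [Fintype ι] (b : Module.Basis ι R A)
    {u : ι → R} (hu : ∑ i, u i * b.repr 1 i = 1) (a : R) :
    a = ∑ i, u i * b.repr (algebraMap R A a) i := by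
  calc a = a * ∑ i, u i * b.repr 1 i := by rw [hu, mul_one]
    _ = ∑ i, u i * (a * b.repr 1 i) := by rw [Finset.mul_sum]; exact Finset.sum_congr rfl (by intros; ring)
    _ = ∑ i, u i * b.repr (algebraMap R A a) i := by
        exact Finset.sum_congr rfl fun i _ => by rw [repr_algebraMap]

end Unimodular

section CoordBounds

variable {R A : Type*} [CommRing R] [CommRing A] [Algebra R A] {μ : R → EReal}

lemma PV.add_le_mul' (hμ : IsNegativePV μ) (a b : R) : μ a + μ b ≤ μ (a * b) :=
  hμ.1.add_le_mul a b (hμ.2.1 a) (hμ.2.1 b)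

lemma PV.add3 (hμ : IsNegativePV μ) (a b c : R) : μ a + (μ b + μ c) ≤ μ (a * (b * c)) :=
  le_trans (add_le_add le_rfl (PV.add_le_mul' hμ b c)) (hμ.1.add_le_mul a (b*c) (hμ.2.1 a) (hμ.2.1 _))

lemma mul_coord_bound (hμ : IsNegativePV μ) {ι : Type*} [Fintype ι] (b : Module.Basis ι R A)
    {M₁ : ℝ} (hM₁ : ∀ i j l, ((-M₁ : ℝ) : EReal) ≤ μ (b.repr (b i * b j) l))
    {x y : A} {cx cy : ℝ}
    (hx : ∀ i, ((cx : ℝ) : EReal) ≤ μ (b.repr x i))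
    (hy : ∀ j, ((cy : ℝ) : EReal) ≤ μ (b.repr y j)) :
    ∀ l, ((cx + cy - M₁ : ℝ) : EReal) ≤ μ (b.repr (x * y) l) := by
  classical
  intro l
  have hxy : x * y = ∑ i, ∑ j, (b.repr x i * b.repr y j) • (b i * b j) := by
    conv_lhs => rw [← b.sum_repr x, ← b.sum_repr y]
    rw [Finset.sum_mul_sum]
    exact Finset.sum_congr rfl fun i _ => Finset.sum_congr rfl fun j _ => by
      rw [smul_mul_smul_comm]
  have hrepr : b.repr (x * y) l
      = ∑ i, ∑ j, b.repr x i * (b.repr y j * b.repr (b i * b j) l) := by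
    rw [hxy]
    rw [map_sum, Finsupp.finset_sum_apply]
    refine Finset.sum_congr rfl fun i _ => ?_
    rw [map_sum, Finsupp.finset_sum_apply]
    refine Finset.sum_congr rfl fun j _ => ?_
    rw [map_smul, Finsupp.smul_apply, smul_eq_mul, mul_assoc]
  rw [hrepr]
  refine le_trans ?_ (PV.inf_le_sum hμ.1 Finset.univ _)
  refine Finset.le_inf fun i _ => ?_
  refine le_trans ?_ (PV.inf_le_sum hμ.1 Finset.univ _)
  refine Finset.le_inf fun j _ => ?_
  refine le_trans ?_ (PV.add3 hμ _ _ _)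
  calc ((cx + cy - M₁ : ℝ) : EReal) = ((cx : ℝ) : EReal) + (((cy : ℝ) : EReal) + ((-M₁ : ℝ) : EReal)) := by
        push_cast; rw [sub_eq_add_neg, add_assoc]
    _ ≤ μ (b.repr x i) + (μ (b.repr y j) + μ (b.repr (b i * b j) l)) :=
        add_le_add (hx i) (add_le_add (hy j) (hM₁ i j l))

lemma monomial_coord_bound (hμ : IsNegativePV μ) {ι : Type*} [Fintype ι] (b : Module.Basis ι R A)
    {m : ℕ} (π : MvPolynomial (Fin m) R →ₐ[R] A)
    {M₁ E F : ℝ}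
    (hM₁ : ∀ i j l, ((-M₁ : ℝ) : EReal) ≤ μ (b.repr (b i * b j) l))
    (hE : ∀ i, ((-E : ℝ) : EReal) ≤ μ (b.repr 1 i))
    (hF : ∀ (j : Fin m) (i : ι), ((-F : ℝ) : EReal) ≤ μ (b.repr (π (MvPolynomial.X j)) i)) :
    ∀ (n : ℕ) (k : Fin m →₀ ℕ), (∑ j, k j) = n →
      ∀ i, ((-(E + n * (F + M₁)) : ℝ) : EReal) ≤ μ (b.repr (π (MvPolynomial.monomial k 1)) i) := by
  classical
  intro n
  induction n with
  | zero =>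
    intro k hk i
    have hk0 : k = 0 := by
      ext j
      have := Finset.sum_eq_zero_iff.mp hk j (Finset.mem_univ j)
      simpa using this
    subst hk0
    have : MvPolynomial.monomial (0 : Fin m →₀ ℕ) (1 : R) = 1 := by
      simp [MvPolynomial.monomial_zero']
    rw [this, map_one]
    simpa using hE i
  | succ n ih =>
    intro k hk i
    have hkne : ∃ j, k j ≠ 0 := by
      by_contra hc
      push_neg at hc
      simp [hc] at hk
    obtain ⟨j, hj⟩ := hkne
    set k' : Fin m →₀ ℕ := k.update j (k j - 1) with hk'def
    have hk'app : ∀ l, k' l = if l = j then k j - 1 else k l := by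
      intro l
      rw [hk'def, Finsupp.coe_update]
      by_cases h : l = j <;> simp [Function.update, h]
    have hksplit : k = k' + Finsupp.single j 1 := by
      ext l
      rw [Finsupp.add_apply, hk'app l]
      by_cases h : l = j
      · subst h; simp; omega
      · simp [h, Finsupp.single_eq_of_ne (Ne.symm h)]
    have hsum' : (∑ l, k' l) = n := by
      have h1 : (∑ l, k l) = n + 1 := hk
      have hup : ∑ l, k' l = (k j - 1) + ∑ l ∈ Finset.univ.erase j, k l := by
        rw [show (∑ l, k' l) = ∑ l, (Function.update (⇑k) j (k j - 1)) l from
          Finset.sum_congr rfl fun l _ => by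
            rw [hk'app l]; by_cases h : l = j <;> simp [Function.update, h]]
        rw [Finset.sum_update_of_mem (Finset.mem_univ j), Finset.erase_eq]
      have hks : k j + ∑ l ∈ Finset.univ.erase j, k l = ∑ l, k l :=
        Finset.add_sum_erase _ _ (Finset.mem_univ j)
      omega
    have hmono : MvPolynomial.monomial k (1 : R)
        = MvPolynomial.monomial k' 1 * MvPolynomial.X j := by
      rw [MvPolynomial.X, MvPolynomial.monomial_mul, hksplit, mul_one]
    rw [hmono, map_mul]
    have hstep := mul_coord_bound hμ b hM₁ (ih k' hsum') (hF j) i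
    refine le_trans (le_of_eq ?_) hstep
    norm_cast
    push_cast
    ring

end CoordBounds

section RealCore

lemma real_min_bound {δ K U E w : ℝ} (hδ : 0 < δ) (hK : 0 ≤ K) (hU : 0 ≤ U) (hE : 0 ≤ E)
    (hw : w ≤ 0) (n : ℕ) (x : ℝ) (hx1 : x ≤ w + U + E + n * K) (hx2 : x ≤ 0)
    (wt : ℝ) (hwt : δ * n ≤ wt) :
    x - wt ≤ (δ / (2 * (K + δ))) * w + (U + E) := by
  set C := δ / (2 * (K + δ)) with hC
  have hKδ : 0 < K + δ := by linarith
  have hC0 : 0 < C := div_pos hδ (by linarith)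
  have hC2 : C ≤ 1 / 2 := by
    rw [hC, div_le_iff₀ (by linarith)]
    linarith
  have hn0 : (0:ℝ) ≤ n := Nat.cast_nonneg n
  by_cases hn : (-w) / (2 * (K + δ)) ≤ (n : ℝ)
  · have h1 : C * (-w) ≤ δ * n := by
      have : C * (-w) = δ * ((-w) / (2 * (K + δ))) := by
        rw [hC]; field_simp
      rw [this]
      exact mul_le_mul_of_nonneg_left hn hδ.le
    nlinarith
  · push_neg at hn
    have h2 : (n : ℝ) * (K + δ) < -w / 2 := by
      rw [lt_div_iff₀ (by linarith : (0:ℝ) < 2 * (K + δ))] at hn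
      nlinarith
    have h3 : (1/2) * w ≤ C * w := by nlinarith
    nlinarith

end RealCore

section ERealHelpers

lemma ereal_eq_real {x : EReal} (hb : x ≠ ⊥) (h0 : x ≤ 0) : ∃ w : ℝ, x = w ∧ w ≤ 0 := by
  have ht : x ≠ ⊤ := fun h => by rw [h] at h0; exact absurd h0 (by simp)
  lift x to ℝ using ⟨ht, hb⟩
  exact ⟨x, rfl, by exact_mod_cast h0⟩

lemma ereal_sub_real_ne_bot {x : EReal} (hx : x ≠ ⊥) (c : ℝ) : x - (c : EReal) ≠ ⊥ := by
  induction x with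
  | bot => exact absurd rfl hx
  | coe y => simp [← EReal.coe_sub]
  | top => rw [EReal.top_sub_coe]; simp

end ERealHelpers

section Bounds

variable {R A : Type*} [CommRing R] [CommRing A] [Algebra R A] {μ : R → EReal} {τ : A → EReal}

lemma weightedDegPV_C_le (hμ : IsNegativePV μ) {m : ℕ} (d : Fin m → ℝ) (a : R) :
    μ a ≤ weightedDegPV μ d (MvPolynomial.C a) := by
  refine le_iInf fun k => ?_
  rw [MvPolynomial.coeff_C]
  by_cases h : (0 : Fin m →₀ ℕ) = k
  · subst h
    rw [if_pos rfl]
    have : (∑ i, ((0 : Fin m →₀ ℕ) i : ℝ) * d i) = 0 := by simp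
    rw [this]
    simp
  · rw [if_neg h, hμ.1.map_zero, EReal.top_sub_coe]
    exact le_top

lemma lowBound (hμ : IsNegativePV μ) {m : ℕ} (π : MvPolynomial (Fin m) R →ₐ[R] A)
    (d : Fin m → ℝ)
    (hval : ∀ x : A, τ x = ⨆ (f : MvPolynomial (Fin m) R) (_ : π f = x), weightedDegPV μ d f)
    (a : R) : μ a ≤ τ (algebraMap R A a) := by
  rw [hval]
  have hCa : π (MvPolynomial.C a) = algebraMap R A a := by
    rw [← MvPolynomial.algebraMap_eq]; exact π.commutes a
  exact le_trans (weightedDegPV_C_le hμ d a) (le_iSup₂_of_le (MvPolynomial.C a) hCa le_rfl)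

end Bounds

section KeyBound

variable {R A : Type*} [CommRing R] [CommRing A] [Nontrivial R] [Nontrivial A] [Algebra R A]
variable [Module.Finite R A] [Module.Free R A]

lemma keyBound {μ : R → EReal} (hμ : IsNegativePV μ) {τ : A → EReal}
    (hτ : IsAdmissiblePV μ τ) :
    ∃ C G : ℝ, 0 < C ∧ 0 ≤ G ∧
      ∀ a : R, τ (algebraMap R A a) ≤ (C : EReal) * μ a + ((G : ℝ) : EReal) := by
  classical
  obtain ⟨m, π, d, hsurj, hd, hval⟩ := hτ
  set ι := Module.Free.ChooseBasisIndex R A with hι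
  set b : Module.Basis ι R A := Module.Free.chooseBasis R A with hb
  haveI : Nonempty ι := by
    by_contra h
    rw [not_nonempty_iff] at h
    have h1 := b.sum_repr 1
    rw [Finset.univ_eq_empty_iff.mpr h] at h1
    exact one_ne_zero (α := A) (by simpa using h1.symm)
  obtain ⟨u, hu⟩ := exists_unimodular b
  obtain ⟨U, hU0, hU⟩ := PV.exists_real_lb (fun i => μ (u i)) (fun i => hμ.2.1 _)
  obtain ⟨M₁, hM₁0, hM₁⟩ := PV.exists_real_lb
    (fun t : ι × ι × ι => μ (b.repr (b t.1 * b t.2.1) t.2.2)) (fun t => hμ.2.1 _)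
  have hM₁' : ∀ i j l, ((-M₁ : ℝ) : EReal) ≤ μ (b.repr (b i * b j) l) :=
    fun i j l => hM₁ (i, j, l)
  obtain ⟨E, hE0, hE⟩ := PV.exists_real_lb (fun i => μ (b.repr 1 i)) (fun i => hμ.2.1 _)
  obtain ⟨F, hF0, hF⟩ := PV.exists_real_lb
    (fun t : Fin m × ι => μ (b.repr (π (MvPolynomial.X t.1)) t.2)) (fun t => hμ.2.1 _)
  have hF' : ∀ (j : Fin m) (i : ι), ((-F : ℝ) : EReal) ≤ μ (b.repr (π (MvPolynomial.X j)) i) :=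
    fun j i => hF (j, i)
  obtain ⟨δ, hδ0, hδ⟩ : ∃ δ : ℝ, 0 < δ ∧ ∀ j : Fin m, δ ≤ d j := by
    rcases Nat.eq_zero_or_pos m with hm | hm
    · subst hm; exact ⟨1, one_pos, fun j => j.elim0⟩
    · haveI : Nonempty (Fin m) := ⟨⟨0, hm⟩⟩
      obtain ⟨j₀, _, hj₀⟩ := Finset.exists_min_image Finset.univ d Finset.univ_nonempty
      exact ⟨d j₀, hd j₀, fun j => hj₀ j (Finset.mem_univ j)⟩
  set K := F + M₁ with hK
  have hK0 : 0 ≤ K := by positivity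
  set C := δ / (2 * (K + δ)) with hC
  have hC0 : 0 < C := div_pos hδ0 (by linarith)
  set G := U + E with hG
  have hG0 : 0 ≤ G := by positivity
  refine ⟨C, G, hC0, hG0, fun a => ?_⟩
  by_cases ha : a = 0
  · subst ha
    rw [hμ.1.map_zero, EReal.mul_top_of_pos (by exact_mod_cast hC0), EReal.top_add_coe]
    exact le_top
  -- a ≠ 0
  obtain ⟨w, hw, hw0⟩ := ereal_eq_real (hμ.2.1 a) (hμ.2.2 a ha)
  rw [hval]
  refine iSup₂_le fun f hf => ?_
  -- f ≠ 0
  have hfne : f ≠ 0 := by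
    intro h0
    subst h0
    rw [map_zero] at hf
    have := eq_sum_u b hu a
    rw [← hf] at this
    simp at this
    exact ha this
  have hsupp : f.support.Nonempty := by
    rwa [MvPolynomial.support_nonempty]
  -- decomposition of a
  set s : (Fin m →₀ ℕ) → ι → R := fun k i => b.repr (π (MvPolynomial.monomial k 1)) i with hs
  have hπf : π f = ∑ k ∈ f.support,
      (MvPolynomial.coeff k f) • π (MvPolynomial.monomial k 1) := by
    conv_lhs => rw [← MvPolynomial.support_sum_monomial_coeff f]
    rw [map_sum]
    refine Finset.sum_congr rfl fun k _ => ?_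
    rw [show MvPolynomial.monomial k (MvPolynomial.coeff k f)
        = MvPolynomial.coeff k f • MvPolynomial.monomial k (1 : R) by
      rw [MvPolynomial.smul_monomial, smul_eq_mul, mul_one], map_smul]
  have hreprπf : ∀ i, b.repr (π f) i = ∑ k ∈ f.support, MvPolynomial.coeff k f * s k i := by
    intro i
    rw [hπf, map_sum, Finsupp.finset_sum_apply]
    exact Finset.sum_congr rfl fun k _ => by rw [map_smul, Finsupp.smul_apply, smul_eq_mul]
  have hdecomp : a = ∑ q ∈ Finset.univ ×ˢ f.support,
      u q.1 * (MvPolynomial.coeff q.2 f * s q.2 q.1) := by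
    rw [Finset.sum_product]
    calc a = ∑ i, u i * b.repr (algebraMap R A a) i := eq_sum_u b hu a
      _ = ∑ i, u i * b.repr (π f) i := by rw [hf]
      _ = ∑ i, ∑ k ∈ f.support, u i * (MvPolynomial.coeff k f * s k i) := by
          refine Finset.sum_congr rfl fun i _ => ?_
          rw [hreprπf i, Finset.mul_sum]
  -- extract a minimizing pair
  have hprodne : (Finset.univ ×ˢ f.support).Nonempty :=
    Finset.Nonempty.product (Finset.univ_nonempty (α := ι)) hsupp
  obtain ⟨q, hqmem, hqinf⟩ := Finset.exists_mem_eq_inf (Finset.univ ×ˢ f.support)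
    hprodne (fun q => μ (u q.1 * (MvPolynomial.coeff q.2 f * s q.2 q.1)))
  obtain ⟨i, k⟩ := q
  have hkmem : k ∈ f.support := (Finset.mem_product.mp hqmem).2
  have hterm_le : μ (u i * (MvPolynomial.coeff k f * s k i)) ≤ μ a := by
    conv_rhs => rw [hdecomp]
    rw [← hqinf]
    exact PV.inf_le_sum hμ.1 _ _
  set n : ℕ := ∑ j, k j with hn
  have hsk : ((-(E + n * K) : ℝ) : EReal) ≤ μ (s k i) := by
    rw [hK]
    exact monomial_coord_bound hμ b π hM₁' hE hF' n k rfl i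
  have hchain : ((-U : ℝ) : EReal) + (μ (MvPolynomial.coeff k f) + ((-(E + n * K) : ℝ) : EReal))
      ≤ (w : EReal) := by
    rw [← hw]
    refine le_trans ?_ hterm_le
    refine le_trans (add_le_add (hU i) (add_le_add le_rfl hsk)) ?_
    exact PV.add3 hμ _ _ _
  -- coeff is a nonzero real value
  have hcoeffne : MvPolynomial.coeff k f ≠ 0 := MvPolynomial.mem_support_iff.mp hkmem
  obtain ⟨x, hx, hx0⟩ := ereal_eq_real (hμ.2.1 _) (hμ.2.2 _ hcoeffne)
  rw [hx] at hchain
  have hxreal : x ≤ w + U + E + n * K := by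
    have : ((-U + (x + -(E + n * K)) : ℝ) : EReal) ≤ ((w : ℝ) : EReal) := by
      push_cast
      exact hchain
    have := EReal.coe_le_coe_iff.mp this
    linarith
  -- the weighted degree bound
  set wt : ℝ := ∑ j, (k j : ℝ) * d j with hwt
  have hwtlb : δ * n ≤ wt := by
    rw [hwt, hn]
    push_cast
    rw [Finset.mul_sum]
    exact Finset.sum_le_sum fun j _ => by
      rw [mul_comm (δ : ℝ)]
      exact mul_le_mul_of_nonneg_left (hδ j) (Nat.cast_nonneg _)
  have hmain : x - wt ≤ C * w + G := by
    rw [hC, hG]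
    exact real_min_bound hδ0 hK0 hU0 hE0 hw0 n x hxreal hx0 wt hwtlb
  calc weightedDegPV μ d f ≤ μ (MvPolynomial.coeff k f) - ((wt : ℝ) : EReal) := iInf_le _ k
    _ = ((x - wt : ℝ) : EReal) := by rw [hx]; norm_cast
    _ ≤ ((C * w + G : ℝ) : EReal) := EReal.coe_le_coe_iff.mpr hmain
    _ = (C : EReal) * μ a + ((G : ℝ) : EReal) := by rw [hw]; norm_cast

end KeyBound

/-- Let `(R, μ)` be a nonzero ring with `pR = 0` and a negative
pseudovaluation, `A` a nonzero `R`-algebra free of finite rank as an `R`-module, and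
`τ` an admissible pseudovaluation on `A`.  A Witt vector over `R` is overconvergent iff
its image in `W(A)` is overconvergent. -/
theorem statement12 (p : ℕ) [Fact p.Prime] (R A : Type*)
    [CommRing R] [Nontrivial R] [CommRing A] [Nontrivial A] [Algebra R A]
    (hpR : ((p : ℕ) : R) = 0)
    (μ : R → EReal) (hμ : IsNegativePV μ)
    [Module.Finite R A] [Module.Free R A]
    (τ : A → EReal) (hτ : IsAdmissiblePV μ τ) :
    ∀ r : WittVector p R, IsOverconvergent p μ r ↔
      IsOverconvergent p τ (WittVector.map (algebraMap R A) r) := by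
  have hp0 : (0 : ℝ) < p := by exact_mod_cast (Fact.out : p.Prime).pos
  have hp1 : (1 : ℝ) ≤ p := by exact_mod_cast (Fact.out : p.Prime).one_lt.le
  have hlow : ∀ a : R, μ a ≤ τ (algebraMap R A a) := by
    obtain ⟨m, π, d, hsurj, hd, hval⟩ := hτ
    exact fun a => lowBound hμ π d hval a
  obtain ⟨C, G, hC0, hG0, hkey⟩ := keyBound hμ hτ
  intro r
  constructor
  · rintro ⟨ε, hε, hne⟩
    refine ⟨ε, hε, ?_⟩
    intro hbot
    apply hne
    have hle : gaussNorm p μ ε r ≤ gaussNorm p τ ε (WittVector.map (algebraMap R A) r) := by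
      refine le_iInf fun i => ?_
      refine le_trans (iInf_le _ i) ?_
      rw [WittVector.map_coeff]
      refine add_le_add le_rfl (mul_le_mul_of_nonneg_left (hlow _) ?_)
      have : (0:ℝ) ≤ ε * (p:ℝ) ^ (-(i:ℤ)) := by positivity
      exact_mod_cast this
    rw [hbot] at hle
    exact le_bot_iff.mp hle
  · rintro ⟨ε, hε, hne⟩
    refine ⟨ε * C, mul_pos hε hC0, ?_⟩
    intro hbot
    apply ereal_sub_real_ne_bot hne (ε * G)
    refine le_bot_iff.mp ?_
    rw [← hbot]
    refine le_iInf fun i => ?_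
    refine EReal.sub_le_of_le_add ?_
    refine le_trans (iInf_le _ i) ?_
    rw [WittVector.map_coeff]
    set a := r.coeff i with ha'
    by_cases ha : a = 0
    · rw [ha, hμ.1.map_zero]
      have hcpos : (0 : EReal) < ((ε * C * (p:ℝ) ^ (-(i:ℤ)) : ℝ) : EReal) := by
        have : (0:ℝ) < ε * C * (p:ℝ) ^ (-(i:ℤ)) := by positivity
        exact_mod_cast this
      rw [EReal.mul_top_of_pos hcpos]
      rw [EReal.add_top_of_ne_bot (by exact_mod_cast EReal.natCast_ne_bot i)]
      rw [EReal.top_add_coe]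
      exact le_top
    · obtain ⟨w, hw, hw0⟩ := ereal_eq_real (hμ.2.1 a) (hμ.2.2 a ha)
      have hτa_le := hkey a
      rw [hw] at hτa_le
      have hτa_ge := hlow a
      rw [hw] at hτa_ge
      have hτne_bot : τ (algebraMap R A a) ≠ ⊥ :=
        fun h => by rw [h] at hτa_ge; exact (by simp : ¬ ((w:EReal) ≤ ⊥)) hτa_ge
      have hτne_top : τ (algebraMap R A a) ≠ ⊤ := by
        intro h
        rw [h] at hτa_le
        have : ((C * w + G : ℝ) : EReal) = ⊤ := top_le_iff.mp (by
          calc (⊤ : EReal) ≤ (C:EReal) * (w:EReal) + (G:EReal) := hτa_le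
            _ = ((C * w + G : ℝ) : EReal) := by norm_cast)
        exact (EReal.coe_ne_top _) this
      obtain ⟨y, hy⟩ : ∃ y : ℝ, τ (algebraMap R A a) = y := by
        lift τ (algebraMap R A a) to ℝ using ⟨hτne_top, hτne_bot⟩ with y
        exact ⟨y, rfl⟩
      have hyle : y ≤ C * w + G := by
        rw [hy] at hτa_le
        exact_mod_cast hτa_le
      rw [hy, hw]
      have hq0 : (0:ℝ) < (p:ℝ) ^ (-(i:ℤ)) := by positivity
      have hq1 : (p:ℝ) ^ (-(i:ℤ)) ≤ 1 :=
        zpow_le_one_of_nonpos₀ hp1 (by omega)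
      have hreal : (i:ℝ) + (ε * (p:ℝ) ^ (-(i:ℤ))) * y
          ≤ ((i:ℝ) + (ε * C * (p:ℝ) ^ (-(i:ℤ))) * w) + ε * G := by
        set q : ℝ := (p:ℝ) ^ (-(i:ℤ)) with hqdef
        have h1 : (ε * q) * y ≤ (ε * q) * (C * w + G) :=
          mul_le_mul_of_nonneg_left hyle (by positivity)
        have h2 : (ε * q) * G ≤ ε * G := by nlinarith [mul_nonneg (mul_nonneg hε.le (sub_nonneg.mpr hq1)) hG0]
        nlinarith
      rw [← EReal.coe_coe_eq_natCast]
      exact_mod_cast hreal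

end
end

section
/- Let p be a prime and let (A, ν) be a commutative ring with pA = 0 and a negative pseudovaluation. Let f ∈ A be localizing with constants C > 0 and D ≥ 0, and let ν' be the induced pseudovaluation on A_f with parameter d ≥ D, d > 0. If c ∈ W(A) is a Witt vector whose image in W(A_f) is overconvergent with respect to ν', then c is overconvergent with respect to ν. -/
open scoped Classical

noncomputable section

section Aux

lemma ereal_exists_real_le {x : EReal} (hx : x ≠ ⊥) : ∃ b : ℝ, (b : EReal) ≤ x := by
  induction x using EReal.rec with
  | bot => exact absurd rfl hx
  | coe y => exact ⟨y, le_refl _⟩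
  | top => exact ⟨0, le_top⟩

lemma ereal_add_le_of_le_sub {x : EReal} {t c : ℝ} (h : (t : EReal) ≤ x - (c : EReal)) :
    ((t + c : ℝ) : EReal) ≤ x := by
  induction x using EReal.rec with
  | bot => rw [EReal.bot_sub] at h; exact absurd (le_bot_iff.mp h) (EReal.coe_ne_bot t)
  | coe y =>
      rw [← EReal.coe_sub, EReal.coe_le_coe_iff] at h
      exact EReal.coe_le_coe_iff.mpr (by linarith)
  | top => exact le_top

lemma ereal_sub_nonpos {x : EReal} {c : ℝ} (hx : x ≤ 0) (hc : 0 ≤ c) :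
    x - (c : EReal) ≤ 0 := by
  rw [sub_eq_add_neg]
  calc x + (-(c : EReal)) ≤ 0 + 0 := by
        refine add_le_add hx ?_
        rw [← EReal.coe_neg]
        exact_mod_cast neg_nonpos.mpr hc
    _ = 0 := by rw [add_zero]

variable {A : Type*} [CommRing A] {ν : A → EReal} (hpv : IsPseudovaluation ν)

include hpv

lemma pv_neg (b : A) : ν b ≤ ν (-b) := by
  have h := hpv.min_le_sub 0 b
  rw [zero_sub, hpv.map_zero, min_comm, min_eq_left le_top] at h
  exact h

lemma pv_add (a b : A) : min (ν a) (ν b) ≤ ν (a + b) := by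
  have h1 := hpv.min_le_sub a (-b)
  rw [sub_neg_eq_add] at h1
  exact le_trans (le_min (min_le_left _ _) (le_trans (min_le_right _ _) (pv_neg hpv b))) h1

lemma pv_sum {ι : Type*} (t : EReal) (s : Finset ι) (F : ι → A)
    (hF : ∀ j ∈ s, t ≤ ν (F j)) : t ≤ ν (∑ j ∈ s, F j) := by
  classical
  induction s using Finset.induction_on with
  | empty => rw [Finset.sum_empty, hpv.map_zero]; exact le_top
  | @insert a s ha ih =>
      rw [Finset.sum_insert ha]
      refine le_trans (le_min (hF a (Finset.mem_insert_self a s))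
        (ih fun j hj => hF j (Finset.mem_insert_of_mem hj))) (pv_add hpv _ _)

lemma pv_pow (hbot : ∀ a : A, ν a ≠ ⊥) {f : A} {φ : ℝ} (hφ : (φ : EReal) ≤ ν f) (m : ℕ) :
    (((m : ℝ) * φ : ℝ) : EReal) ≤ ν (f ^ m) := by
  induction m with
  | zero => simp [hpv.map_one]
  | succ m ih =>
      have h1 : ν f + ν (f ^ m) ≤ ν (f * f ^ m) := hpv.add_le_mul _ _ (hbot f) (hbot _)
      have h2 : ((φ + (m : ℝ) * φ : ℝ) : EReal) ≤ ν f + ν (f ^ m) := by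
        rw [EReal.coe_add]
        exact add_le_add hφ ih
      rw [pow_succ']
      refine le_trans (le_of_eq ?_) (le_trans h2 h1)
      congr 1
      push_cast
      ring

end Aux

section Key

variable {A : Type*} [CommRing A]

lemma locPV_nonpos (ν : A → EReal) (hν : IsNegativePV ν) (f : A) (d : ℝ) (hd : 0 ≤ d)
    (z : Localization.Away f) (hz : z ≠ 0) : locPV ν f d z ≤ 0 := by
  rw [locPV]
  refine iSup_le fun g => iSup_le fun hg => ?_
  have hg0 : g ≠ 0 := fun h => hz (by rw [← hg, h, map_zero])
  have hcn : g.coeff g.natDegree ≠ 0 :=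
    g.coeff_ne_zero_of_eq_degree (Polynomial.degree_eq_natDegree hg0)
  refine le_trans (iInf_le _ g.natDegree) ?_
  exact ereal_sub_nonpos (hν.2.2 _ hcn) (by positivity)

/-- Key pointwise estimate: if `g` is a representation of `a/1` in `A_f` whose
coefficients satisfy `ν (g_j) ≥ r + j d`, then `ν a ≥ (d + D - ν f)/(d C) · r`. -/
lemma keyA (ν : A → EReal) (hν : IsNegativePV ν)
    (f : A) (hfi : Function.Injective (algebraMap A (Localization.Away f)))
    (C D : ℝ) (hC : 0 < C) (hD : 0 ≤ D)
    (hloc : ∀ (n : ℕ) (x : A),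
      ν (f ^ n * x) ≤ (C : EReal) * ν x + (((n : ℝ) * D : ℝ) : EReal))
    (d : ℝ) (hd : 0 < d) (hdD : D ≤ d)
    (φ : ℝ) (hφ1 : (φ : EReal) ≤ ν f) (hφ2 : φ ≤ 0)
    (a : A) (ha : a ≠ 0) (g : Polynomial A)
    (hg : Polynomial.aeval (IsLocalization.Away.invSelf (S := Localization.Away f) f) g
      = algebraMap A (Localization.Away f) a)
    (r : ℝ) (hr0 : r ≤ 0)
    (hr : ∀ j : ℕ, ((r + (j : ℝ) * d : ℝ) : EReal) ≤ ν (g.coeff j)) :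
    (((d + D - φ) / (d * C) * r : ℝ) : EReal) ≤ ν a := by
  classical
  obtain ⟨hpv, hbot, hneg⟩ := hν
  set ι := algebraMap A (Localization.Away f) with hι
  set u := IsLocalization.Away.invSelf (S := Localization.Away f) f with hu
  have hfu : ι f * u = 1 := IsLocalization.Away.mul_invSelf f
  have hg0 : g ≠ 0 := by
    intro h
    apply ha
    apply hfi
    rw [← hg, h, map_zero, map_zero]
  set n := g.natDegree with hn
  have hnd : (n : ℝ) * d ≤ -r := by
    have hcn : g.coeff n ≠ 0 := g.coeff_ne_zero_of_eq_degree (Polynomial.degree_eq_natDegree hg0)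
    have h1 : ((r + (n : ℝ) * d : ℝ) : EReal) ≤ 0 := le_trans (hr n) (hneg _ hcn)
    have h2 : (r + (n : ℝ) * d : ℝ) ≤ 0 := by exact_mod_cast h1
    linarith
  have hid : f ^ n * a = ∑ j ∈ Finset.range (n + 1), g.coeff j * f ^ (n - j) := by
    apply hfi
    rw [map_mul, map_pow, map_sum, ← hg, Polynomial.aeval_eq_sum_range, Finset.mul_sum]
    refine Finset.sum_congr rfl fun j hj => ?_
    have hjn : j ≤ n := Nat.lt_succ_iff.mp (Finset.mem_range.mp hj)
    rw [map_mul, map_pow, Algebra.smul_def]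
    have h2 : ι f ^ n = ι f ^ (n - j) * ι f ^ j := by
      rw [← pow_add, Nat.sub_add_cancel hjn]
    have h3 : ι f ^ j * u ^ j = 1 := by rw [← mul_pow, hfu, one_pow]
    rw [h2]
    calc ι f ^ (n - j) * ι f ^ j * (ι (g.coeff j) * u ^ j)
        = ι (g.coeff j) * ι f ^ (n - j) * (ι f ^ j * u ^ j) := by ring
      _ = ι (g.coeff j) * ι f ^ (n - j) := by rw [h3, mul_one]
  have hsum : ((r + (n : ℝ) * φ : ℝ) : EReal) ≤ ν (f ^ n * a) := by
    rw [hid]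
    refine pv_sum hpv _ _ _ fun j hj => ?_
    have hjn : j ≤ n := Nat.lt_succ_iff.mp (Finset.mem_range.mp hj)
    have e1 := hr j
    have e2 := pv_pow hpv hbot hφ1 (n - j)
    have e3 : ν (g.coeff j) + ν (f ^ (n - j)) ≤ ν (g.coeff j * f ^ (n - j)) :=
      hpv.add_le_mul _ _ (hbot _) (hbot _)
    refine le_trans ?_ (le_trans (add_le_add e1 e2) e3)
    rw [← EReal.coe_add, EReal.coe_le_coe_iff]
    have hc1 : ((n - j : ℕ) : ℝ) = (n : ℝ) - (j : ℝ) := by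
      push_cast [hjn]
      ring
    rw [hc1]
    have hjd : (j : ℝ) * φ ≤ (j : ℝ) * d :=
      mul_le_mul_of_nonneg_left (by linarith) (by positivity)
    nlinarith
  have hcomb := le_trans hsum (hloc n a)
  have hat : ν a ≠ ⊤ := by
    intro h
    have := hneg a ha
    rw [h] at this
    simp at this
  set va : ℝ := (ν a).toReal with hva
  have hvae : (va : EReal) = ν a := EReal.coe_toReal hat (hbot a)
  have hrva : r + (n : ℝ) * φ ≤ C * va + (n : ℝ) * D := by
    rw [← hvae] at hcomb
    have : ((r + (n : ℝ) * φ : ℝ) : EReal) ≤ ((C * va + (n : ℝ) * D : ℝ) : EReal) := by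
      rw [EReal.coe_add, EReal.coe_mul]
      exact_mod_cast hcomb
    exact_mod_cast this
  rw [← hvae, EReal.coe_le_coe_iff]
  have hnle : (n : ℝ) ≤ -r / d := (le_div_iff₀ hd).mpr hnd
  have h6 : (-r / d) * (φ - D) ≤ (n : ℝ) * (φ - D) :=
    mul_le_mul_of_nonpos_right hnle (by linarith)
  have h7 : r + (-r / d) * (φ - D) ≤ C * va := by nlinarith
  have h8 : (d + D - φ) / (d * C) * r = (r + (-r / d) * (φ - D)) / C := by
    field_simp
    ring
  rw [h8, div_le_iff₀ hC]
  linarith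

end Key

/-- Let `(A, ν)` have `pA = 0` and a negative pseudovaluation, let `f` be
localizing with constants `C, D`, and let `ν'` be the induced pseudovaluation on `A_f`
with parameter `d ≥ D`, `d > 0`.  If the image in `W(A_f)` of a Witt vector
`c ∈ W(A)` is overconvergent with respect to `ν'`, then `c` is overconvergent with
respect to `ν`. -/
theorem statement13 (p : ℕ) [Fact p.Prime] (A : Type*) [CommRing A]
    (hpA : ((p : ℕ) : A) = 0)
    (ν : A → EReal) (hν : IsNegativePV ν)
    (f : A) (hf : f ∈ nonZeroDivisors A)
    (C D : ℝ) (hC : 0 < C) (hD : 0 ≤ D)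
    (hloc : ∀ (n : ℕ) (x : A),
      ν (f ^ n * x) ≤ (C : EReal) * ν x + (((n : ℝ) * D : ℝ) : EReal))
    (d : ℝ) (hd : 0 < d) (hdD : D ≤ d)
    (c : WittVector p A)
    (hc : IsOverconvergent p (locPV ν f d)
      (WittVector.map (algebraMap A (Localization.Away f)) c)) :
    IsOverconvergent p ν c := by
  classical
  obtain ⟨hpv, hbot, hneg⟩ := hν
  have h01 : (0 : A) ≠ 1 := by
    intro h
    have h1 := hpv.map_one
    rw [← h, hpv.map_zero] at h1
    simp at h1
  have hf0 : f ≠ 0 := by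
    intro h
    exact h01 ((mem_nonZeroDivisors_iff.mp hf |>.2 1 (by rw [h, mul_zero])).symm)
  have hfi : Function.Injective (algebraMap A (Localization.Away f)) :=
    IsLocalization.injective (Localization.Away f) (Submonoid.powers_le.mpr hf)
  have hft : ν f ≠ ⊤ := by
    intro h
    have := hneg f hf0
    rw [h] at this
    simp at this
  set φ : ℝ := (ν f).toReal with hφ
  have hφe : (φ : EReal) = ν f := EReal.coe_toReal hft (hbot f)
  have hφ2 : φ ≤ 0 := by
    have : (φ : EReal) ≤ ((0:ℝ) : EReal) := by rw [hφe]; exact_mod_cast hneg f hf0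
    exact_mod_cast this
  set K : ℝ := (d + D - φ) / (d * C) with hKdef
  have hK : 0 < K := div_pos (by linarith) (by positivity)
  obtain ⟨ε', hε', hγ⟩ := hc
  obtain ⟨B₀, hB₀⟩ := ereal_exists_real_le hγ
  set B : ℝ := min B₀ 0 with hBdef
  have hB : (B : EReal) ≤ gaussNorm p (locPV ν f d)  ε'
      (WittVector.map (algebraMap A (Localization.Away f)) c) :=
    le_trans (EReal.coe_le_coe_iff.mpr (min_le_left _ _)) hB₀
  have hB0 : B ≤ 0 := min_le_right _ _
  refine ⟨ε' / K, by positivity, ?_⟩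
  have hlow : ((B - ε' : ℝ) : EReal) ≤ gaussNorm p ν (ε' / K) c := by
    rw [gaussNorm]
    refine le_iInf fun i => ?_
    have hqpos : (0:ℝ) < (p : ℝ) ^ (-(i : ℤ)) := by
      have : (0:ℝ) < (p:ℝ) := by exact_mod_cast (Fact.out : p.Prime).pos
      positivity
    by_cases hci : c.coeff i = 0
    · rw [hci, hpv.map_zero, EReal.mul_top_of_pos (by exact_mod_cast (by positivity : (0:ℝ) < ε' / K * (p : ℝ) ^ (-(i : ℤ)))),
        EReal.add_top_of_ne_bot (by exact_mod_cast (EReal.coe_ne_bot (i:ℝ)))]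
      exact le_top
    · have hterm := le_trans hB (iInf_le _ i)
      rw [WittVector.map_coeff] at hterm
      set z := algebraMap A (Localization.Away f) (c.coeff i) with hz
      have hz0 : z ≠ 0 := fun h => hci (hfi (by rw [← hz, h, map_zero]))
      have hcoefpos : (0 : EReal) < ((ε' * (p : ℝ) ^ (-(i : ℤ)) : ℝ) : EReal) := by
        exact_mod_cast (by positivity : (0:ℝ) < ε' * (p : ℝ) ^ (-(i : ℤ)))
      have hzb : locPV ν f d z ≠ ⊥ := by
        intro h
        rw [h, EReal.mul_bot_of_pos hcoefpos, EReal.add_bot] at hterm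
        exact absurd (le_bot_iff.mp hterm) (EReal.coe_ne_bot B)
      have hzt : locPV ν f d z ≠ ⊤ := by
        intro h
        have := locPV_nonpos ν ⟨hpv, hbot, hneg⟩ f d hd.le z hz0
        rw [h] at this
        simp at this
      set v' : ℝ := (locPV ν f d z).toReal with hv'
      have hv'e : (v' : EReal) = locPV ν f d z := EReal.coe_toReal hzt hzb
      have hlt : ((v' - 1 : ℝ) : EReal) < locPV ν f d z := by
        rw [← hv'e]
        exact_mod_cast (by linarith : v' - 1 < v')
      rw [locPV, lt_iSup_iff] at hlt
      obtain ⟨g, hlt⟩ := hlt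
      rw [lt_iSup_iff] at hlt
      obtain ⟨hg, hlt⟩ := hlt
      have hr : ∀ j : ℕ, ((v' - 1 + (j : ℝ) * d : ℝ) : EReal) ≤ ν (g.coeff j) := by
        intro j
        exact ereal_add_le_of_le_sub (le_trans hlt.le (iInf_le _ j))
      have hkey := keyA ν ⟨hpv, hbot, hneg⟩ f hfi C D hC hD hloc d hd hdD φ (le_of_eq hφe)
        hφ2 (c.coeff i) hci g hg (v' - 1) (by
          have hv'0 : v' ≤ 0 := by
            have h2 := locPV_nonpos ν ⟨hpv, hbot, hneg⟩ f d hd.le z hz0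
            rw [← hv'e] at h2
            exact_mod_cast h2
          linarith) hr
      have hct : ν (c.coeff i) ≠ ⊤ := by
        intro h
        have := hneg _ hci
        rw [h] at this
        simp at this
      set vi : ℝ := (ν (c.coeff i)).toReal with hvi
      have hvie : (vi : EReal) = ν (c.coeff i) := EReal.coe_toReal hct (hbot _)
      have hvik : K * (v' - 1) ≤ vi := by
        rw [← hvie] at hkey
        exact_mod_cast hkey
      have hreal : B ≤ (i : ℝ) + ε' * (p : ℝ) ^ (-(i : ℤ)) * v' := by
        rw [← hv'e] at hterm
        have : (B : EReal) ≤ (((i : ℝ) + ε' * (p : ℝ) ^ (-(i : ℤ)) * v' : ℝ) : EReal) := by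
          rw [EReal.coe_add, EReal.coe_mul, EReal.coe_coe_eq_natCast]
          exact hterm
        exact_mod_cast this
      rw [← hvie]
      have hq1 : (p : ℝ) ^ (-(i : ℤ)) ≤ 1 := by
        apply zpow_le_one_of_nonpos₀
        · exact_mod_cast (Fact.out : p.Prime).one_lt.le
        · simp
      have hfinal : B - ε' ≤ (i : ℝ) + ε' / K * (p : ℝ) ^ (-(i : ℤ)) * vi := by
        set q : ℝ := (p : ℝ) ^ (-(i : ℤ)) with hqd
        have m1 : (ε' / K * q) * (K * (v' - 1)) ≤ (ε' / K * q) * vi :=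
          mul_le_mul_of_nonneg_left hvik (by positivity)
        have m2 : (ε' / K * q) * (K * (v' - 1)) = ε' * q * v' - ε' * q := by
          field_simp
        have m3 : ε' * q ≤ ε' := by nlinarith
        nlinarith
      calc ((B - ε' : ℝ) : EReal)
          ≤ (((i : ℝ) + ε' / K * (p : ℝ) ^ (-(i : ℤ)) * vi : ℝ) : EReal) :=
            EReal.coe_le_coe_iff.mpr hfinal
        _ = (i : EReal) + ((ε' / K * (p : ℝ) ^ (-(i : ℤ)) : ℝ) : EReal) * (vi : EReal) := by
            rw [EReal.coe_add, EReal.coe_mul, EReal.coe_coe_eq_natCast]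
  intro h
  rw [h] at hlow
  exact absurd (le_bot_iff.mp hlow) (EReal.coe_ne_bot _)
end
end

section
/- Let p be a prime and let (A, ν) be an integral domain with pA = 0 and a negative pseudovaluation such that every nonzero element of A is localizing with respect to ν. Let α : A → B be an injective ring homomorphism of finite type which is generically finite, in the sense that there exists a nonzero c ∈ A such that the localization B_c is a finite free module over A_c. Equip the finitely generated A-algebra B with an admissible pseudovaluation. Then W(A) ∩ W†(B) = W†(A): a Witt vector x ∈ W(A) is overconvergent if and only if its image W(α)(x) ∈ W(B) is overconvergent. -/
open scoped Classical

noncomputable section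

namespace S14

/-- helper: exists real lower bound -/
lemma exists_real_le {x : EReal} (h : x ≠ ⊥) : ∃ r : ℝ, (r : EReal) ≤ x := by
  induction x using EReal.rec with
  | bot => exact absurd rfl h
  | coe r => exact ⟨r, le_refl _⟩
  | top => exact ⟨0, le_top⟩

lemma sub_coe_ne_bot {x : EReal} (h : x ≠ ⊥) (r : ℝ) : x - (r : EReal) ≠ ⊥ := by
  induction x using EReal.rec with
  | bot => exact absurd rfl h
  | coe s => rw [← EReal.coe_sub]; exact EReal.coe_ne_bot _
  | top => rw [EReal.top_sub_coe]; exact (by simp)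

lemma top_sub (r : ℝ) : (⊤ : EReal) - (r : EReal) = ⊤ := EReal.top_sub_coe r

lemma sub_add_cancel_real (x : EReal) (r : ℝ) : x - (r : EReal) + (r : EReal) = x := by
  induction x using EReal.rec with
  | bot => rw [EReal.bot_sub]; rfl
  | coe s => rw [← EReal.coe_sub, ← EReal.coe_add]; norm_num
  | top => rw [EReal.top_sub_coe]; rfl

lemma add_sub_cancel_real (x : EReal) (r : ℝ) : x + (r : EReal) - (r : EReal) = x := by
  induction x using EReal.rec with
  | bot => rw [EReal.bot_add]; rfl
  | coe s => rw [← EReal.coe_add, ← EReal.coe_sub]; norm_num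
  | top => rw [EReal.top_add_coe]; exact EReal.top_sub_coe r

lemma le_sub_iff {a x : EReal} {r : ℝ} : a ≤ x - (r : EReal) ↔ a + (r : EReal) ≤ x := by
  constructor
  · intro h
    calc a + (r : EReal) ≤ x - r + r := add_le_add_left h _
    _ = x := sub_add_cancel_real x r
  · intro h
    calc a = a + r - r := (add_sub_cancel_real a r).symm
    _ ≤ x - r := EReal.sub_le_sub h (le_refl _)

lemma sub_le_iff {a x : EReal} {r : ℝ} : a - (r : EReal) ≤ x ↔ a ≤ x + (r : EReal) := by
  constructor
  · intro h
    calc a = a - r + r := (sub_add_cancel_real a r).symm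
    _ ≤ x + r := add_le_add_left h _
  · intro h
    calc a - r ≤ x + r - r := EReal.sub_le_sub h (le_refl _)
    _ = x := add_sub_cancel_real x r

lemma min_sub (x y : EReal) (r : ℝ) : min (x - (r:EReal)) (y - (r:EReal)) = min x y - (r:EReal) := by
  rcases le_total x y with h | h
  · rw [min_eq_left h, min_eq_left (EReal.sub_le_sub h (le_refl _))]
  · rw [min_eq_right h, min_eq_right (EReal.sub_le_sub h (le_refl _))]

end S14

namespace S14

section PV
variable {A : Type*} [CommRing A] {ν : A → EReal}

lemma nu_neg (hν : IsPseudovaluation ν) (a : A) : ν (-a) = ν a := by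
  have h1 : min (ν 0) (ν a) ≤ ν (0 - a) := hν.min_le_sub 0 a
  have h2 : min (ν 0) (ν (-a)) ≤ ν (0 - -a) := hν.min_le_sub 0 (-a)
  rw [zero_sub] at h1
  rw [zero_sub, neg_neg] at h2
  rw [hν.map_zero, min_top_left] at h1 h2
  exact le_antisymm h2 h1

lemma nu_add (hν : IsPseudovaluation ν) (a b : A) : min (ν a) (ν b) ≤ ν (a + b) := by
  have := hν.min_le_sub a (-b)
  rw [nu_neg hν, sub_neg_eq_add] at this
  exact this

lemma nu_sum (hν : IsPseudovaluation ν) {ι : Type*} (s : Finset ι) (f : ι → A) (r : EReal)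
    (h : ∀ i ∈ s, r ≤ ν (f i)) : r ≤ ν (∑ i ∈ s, f i) := by
  classical
  induction s using Finset.cons_induction with
  | empty => rw [Finset.sum_empty, hν.map_zero]; exact le_top
  | cons i s his ih =>
    rw [Finset.sum_cons]
    refine le_trans (le_min (h i (Finset.mem_cons_self i s)) ?_) (nu_add hν _ _)
    exact ih fun j hj => h j (Finset.mem_cons_of_mem hj)

lemma nu_pow (hν : IsPseudovaluation ν) (hp : ∀ a : A, ν a ≠ ⊥) (a : A) {v : ℝ}
    (hv : (v : EReal) ≤ ν a) : ∀ n : ℕ, (((n : ℝ) * v : ℝ) : EReal) ≤ ν (a ^ n) := by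
  intro n
  induction n with
  | zero => simp [pow_zero, hν.map_one]
  | succ n ih =>
    rw [pow_succ]
    refine le_trans ?_ (hν.add_le_mul _ _ (hp _) (hp _))
    have : (((n : ℝ) + 1) * v : ℝ) = (n : ℝ) * v + v := by ring
    rw [Nat.cast_succ, this, EReal.coe_add]
    exact add_le_add ih hv

lemma nu_top_eq_zero (hν : IsNegativePV ν) {a : A} (h : ν a = ⊤) : a = 0 := by
  by_contra hne
  have := hν.2.2 a hne
  rw [h] at this
  exact absurd (le_antisymm this le_top) (by simp)

end PV
end S14

namespace S14
section Poly
variable {A : Type*} [CommRing A] {ν : A → EReal} {d : ℝ}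

lemma polyPV_le (ν : A → EReal) (d : ℝ) (g : Polynomial A) (i : ℕ) :
    polyPV ν d g ≤ ν (g.coeff i) - (((i : ℝ) * d : ℝ) : EReal) := iInf_le _ i

lemma coeff_ge (ν : A → EReal) (d : ℝ) (g : Polynomial A) (i : ℕ) :
    polyPV ν d g + (((i : ℝ) * d : ℝ) : EReal) ≤ ν (g.coeff i) :=
  le_sub_iff.mp (polyPV_le ν d g i)

lemma polyPV_zero (hν : IsPseudovaluation ν) : polyPV ν d (0 : Polynomial A) = ⊤ := by
  refine le_antisymm le_top (le_iInf fun i => ?_)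
  rw [Polynomial.coeff_zero, hν.map_zero, top_sub]

lemma polyPV_ne_bot (hν : IsPseudovaluation ν) (hp : ∀ a : A, ν a ≠ ⊥) (g : Polynomial A) :
    polyPV ν d g ≠ ⊥ := by
  have hterm : ∀ i : ℕ, ν (g.coeff i) - (((i : ℝ) * d : ℝ) : EReal) ≠ ⊥ :=
    fun i => sub_coe_ne_bot (hp _) _
  choose r hr using fun i => exists_real_le (hterm i)
  set N := g.natDegree
  obtain ⟨R, hR⟩ : ∃ R : ℝ, ∀ i ∈ Finset.range (N + 1), R ≤ r i := by
    refine ⟨(Finset.range (N+1)).inf' ⟨0, Finset.mem_range.mpr (Nat.succ_pos N)⟩ r, ?_⟩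
    intro i hi
    exact Finset.inf'_le r hi
  refine ne_bot_of_le_ne_bot (EReal.coe_ne_bot R) (le_iInf fun i => ?_)
  by_cases hi : i ≤ N
  · exact le_trans (EReal.coe_le_coe_iff.mpr (hR i (Finset.mem_range.mpr (Nat.lt_succ_of_le hi)))) (hr i)
  · rw [Polynomial.coeff_eq_zero_of_natDegree_lt (by omega), hν.map_zero, top_sub]
    exact le_top

lemma polyPV_C (hν : IsPseudovaluation ν) (hd : 0 ≤ d) (x : A) :
    polyPV ν d (Polynomial.C x) = ν x := by
  refine le_antisymm ?_ (le_iInf fun i => ?_)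
  · have := polyPV_le ν d (Polynomial.C x) 0
    simpa using this
  · rcases Nat.eq_zero_or_pos i with h | h
    · subst h; simp [Polynomial.coeff_C]
    · rw [Polynomial.coeff_C, if_neg (by omega), hν.map_zero, top_sub]; exact le_top

lemma polyPV_CXn (hν : IsPseudovaluation ν) (x : A) (n : ℕ) :
    ν x - (((n : ℝ) * d : ℝ) : EReal) ≤ polyPV ν d (Polynomial.C x * Polynomial.X ^ n) := by
  refine le_iInf fun i => ?_
  rw [Polynomial.coeff_C_mul, Polynomial.coeff_X_pow]
  by_cases h : i = n
  · subst h; simp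
  · rw [if_neg h, mul_zero, hν.map_zero, top_sub]; exact le_top

lemma polyPV_add (hν : IsPseudovaluation ν) (g₁ g₂ : Polynomial A) :
    min (polyPV ν d g₁) (polyPV ν d g₂) ≤ polyPV ν d (g₁ + g₂) := by
  refine le_iInf fun i => ?_
  have h1 : min (polyPV ν d g₁) (polyPV ν d g₂) ≤
      min (ν (g₁.coeff i)) (ν (g₂.coeff i)) - (((i : ℝ) * d : ℝ) : EReal) := by
    rw [← min_sub]
    exact min_le_min (polyPV_le ν d g₁ i) (polyPV_le ν d g₂ i)
  refine le_trans h1 (EReal.sub_le_sub ?_ (le_refl _))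
  rw [Polynomial.coeff_add]
  exact nu_add hν _ _

lemma polyPV_mul (hν : IsPseudovaluation ν) (hp : ∀ a : A, ν a ≠ ⊥) (hd : 0 ≤ d)
    (g₁ g₂ : Polynomial A) :
    polyPV ν d g₁ + polyPV ν d g₂ ≤ polyPV ν d (g₁ * g₂) := by
  refine le_iInf fun k => ?_
  rw [le_sub_iff, Polynomial.coeff_mul]
  refine nu_sum hν _ _ _ fun ij hij => ?_
  have hk : ij.1 + ij.2 = k := Finset.HasAntidiagonal.mem_antidiagonal.mp hij
  refine le_trans ?_ (hν.add_le_mul _ _ (hp _) (hp _))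
  have h1 := coeff_ge ν d g₁ ij.1
  have h2 := coeff_ge ν d g₂ ij.2
  calc polyPV ν d g₁ + polyPV ν d g₂ + (((k : ℝ) * d : ℝ) : EReal)
      = (polyPV ν d g₁ + (((ij.1 : ℝ) * d : ℝ) : EReal)) +
        (polyPV ν d g₂ + (((ij.2 : ℝ) * d : ℝ) : EReal)) := by
        rw [← hk,
          show (((ij.1 + ij.2 : ℕ) : ℝ) * d : ℝ) = ((ij.1 : ℝ) * d + (ij.2 : ℝ) * d : ℝ) by
            push_cast; ring, EReal.coe_add]
        abel
    _ ≤ ν (g₁.coeff ij.1) + ν (g₂.coeff ij.2) := add_le_add h1 h2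

lemma polyPV_nonpos (hν : IsNegativePV ν) (hd : 0 ≤ d) {g : Polynomial A} (hg : g ≠ 0) :
    polyPV ν d g ≤ 0 := by
  refine le_trans (polyPV_le ν d g g.natDegree) ?_
  have h1 : ν (g.coeff g.natDegree) ≤ 0 := hν.2.2 _ (Polynomial.leadingCoeff_ne_zero.mpr hg)
  calc ν (g.coeff g.natDegree) - (((g.natDegree : ℝ) * d : ℝ) : EReal) ≤ 0 - (((g.natDegree : ℝ) * d : ℝ) : EReal) :=
        EReal.sub_le_sub h1 (le_refl _)
    _ ≤ 0 := by
        rw [zero_sub, ← EReal.coe_neg]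
        have : -((g.natDegree : ℝ) * d) ≤ (0:ℝ) :=
          neg_nonpos.mpr (mul_nonneg (Nat.cast_nonneg _) hd)
        exact_mod_cast this

lemma polyPV_deg (hν : IsNegativePV ν) {g : Polynomial A} (hg : g ≠ 0) :
    polyPV ν d g ≤ ((-((g.natDegree : ℝ) * d) : ℝ) : EReal) := by
  refine le_trans (polyPV_le ν d g g.natDegree) ?_
  have h1 : ν (g.coeff g.natDegree) ≤ 0 := hν.2.2 _ (Polynomial.leadingCoeff_ne_zero.mpr hg)
  calc ν (g.coeff g.natDegree) - (((g.natDegree : ℝ) * d : ℝ) : EReal)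
      ≤ 0 - (((g.natDegree : ℝ) * d : ℝ) : EReal) := EReal.sub_le_sub h1 (le_refl _)
    _ = ((-((g.natDegree : ℝ) * d) : ℝ) : EReal) := by
        rw [zero_sub, ← EReal.coe_neg]

end Poly
end S14

namespace S14
section Loc
variable {A : Type*} [CommRing A] (ν : A → EReal) (c : A) (d : ℝ)

local notation "L" => Localization.Away c
local notation "ι" => algebraMap A (Localization.Away c)
local notation "inv_c" => IsLocalization.Away.invSelf (S := Localization.Away c) c

lemma locPV_ge {z : Localization.Away c} {g : Polynomial A}
    (hg : Polynomial.aeval (IsLocalization.Away.invSelf (S := Localization.Away c) c) g = z) :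
    polyPV ν d g ≤ locPV ν c d z :=
  le_iSup₂ (f := fun (g : Polynomial A) (_ : Polynomial.aeval
    (IsLocalization.Away.invSelf (S := Localization.Away c) c) g = z) => polyPV ν d g) g hg

lemma locPV_le_of {z : Localization.Away c} {t : EReal}
    (H : ∀ g : Polynomial A, Polynomial.aeval
      (IsLocalization.Away.invSelf (S := Localization.Away c) c) g = z → polyPV ν d g ≤ t) :
    locPV ν c d z ≤ t :=
  iSup₂_le H

variable (hν : IsNegativePV ν)

include hν in
lemma locPV_zero : locPV ν c d (0 : Localization.Away c) = ⊤ := by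
  refine le_antisymm le_top (le_trans ?_ (locPV_ge ν c d (map_zero _)))
  rw [polyPV_zero hν.1]

include hν in
lemma locPV_algebraMap (hd : 0 ≤ d) (x : A) :
    ν x ≤ locPV ν c d (algebraMap A (Localization.Away c) x) := by
  refine le_trans ?_ (locPV_ge ν c d (Polynomial.aeval_C _ x))
  rw [polyPV_C hν.1 hd]

lemma lt_locPV {v : EReal} {z : Localization.Away c} (h : v < locPV ν c d z) :
    ∃ g : Polynomial A, Polynomial.aeval
      (IsLocalization.Away.invSelf (S := Localization.Away c) c) g = z ∧ v < polyPV ν d g := by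
  rw [locPV, lt_iSup_iff] at h
  obtain ⟨g, hg⟩ := h
  rw [lt_iSup_iff] at hg
  obtain ⟨hgz, hlt⟩ := hg
  exact ⟨g, hgz, hlt⟩

lemma exists_rep (z : Localization.Away c) :
    ∃ (r : A) (n : ℕ), Polynomial.aeval
      (IsLocalization.Away.invSelf (S := Localization.Away c) c)
      (Polynomial.C r * Polynomial.X ^ n) = z ∧
      z * algebraMap A (Localization.Away c) (c ^ n) = algebraMap A (Localization.Away c) r := by
  have hrn := IsLocalization.Away.sec_spec c z
  set r := (IsLocalization.Away.sec c z).1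
  set n := (IsLocalization.Away.sec c z).2
  refine ⟨r, n, ?_, hrn⟩
  have hone : (algebraMap A (Localization.Away c) c) * inv_c = 1 :=
    IsLocalization.Away.mul_invSelf c
  have : z = algebraMap A (Localization.Away c) r * inv_c ^ n := by
    have h2 : (algebraMap A (Localization.Away c) (c ^ n)) * inv_c ^ n = 1 := by
      rw [map_pow, ← mul_pow, hone, one_pow]
    calc z = z * ((algebraMap A (Localization.Away c) (c ^ n)) * inv_c ^ n) := by
          rw [h2, mul_one]
      _ = (z * algebraMap A (Localization.Away c) (c ^ n)) * inv_c ^ n := by ring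
      _ = algebraMap A (Localization.Away c) r * inv_c ^ n := by rw [hrn]
  rw [map_mul, Polynomial.aeval_C, map_pow, Polynomial.aeval_X]
  exact this.symm

include hν in
lemma locPV_ne_bot (z : Localization.Away c) : locPV ν c d z ≠ ⊥ := by
  obtain ⟨r, n, hg, -⟩ := exists_rep c z
  refine ne_bot_of_le_ne_bot ?_ (le_trans (polyPV_CXn hν.1 r n) (locPV_ge ν c d hg))
  exact sub_coe_ne_bot (hν.2.1 r) _

include hν in
lemma locPV_nonpos (hd : 0 ≤ d) {z : Localization.Away c} (hz : z ≠ 0) : locPV ν c d z ≤ 0 := by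
  refine locPV_le_of ν c d fun g hg => ?_
  have hg0 : g ≠ 0 := by
    rintro rfl
    rw [map_zero] at hg
    exact hz hg.symm
  exact polyPV_nonpos hν hd hg0

include hν in
lemma locPV_add (z₁ z₂ : Localization.Away c) :
    min (locPV ν c d z₁) (locPV ν c d z₂) ≤ locPV ν c d (z₁ + z₂) := by
  refine le_of_forall_lt fun v hv => ?_
  rw [lt_min_iff] at hv
  obtain ⟨g₁, h₁, hv₁⟩ := lt_locPV ν c d hv.1
  obtain ⟨g₂, h₂, hv₂⟩ := lt_locPV ν c d hv.2
  have hsum : Polynomial.aeval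
      (IsLocalization.Away.invSelf (S := Localization.Away c) c) (g₁ + g₂) = z₁ + z₂ := by
    rw [map_add, h₁, h₂]
  calc v < min (polyPV ν d g₁) (polyPV ν d g₂) := lt_min hv₁ hv₂
    _ ≤ polyPV ν d (g₁ + g₂) := polyPV_add hν.1 g₁ g₂
    _ ≤ locPV ν c d (z₁ + z₂) := locPV_ge ν c d hsum

include hν in
lemma locPV_mul (hd : 0 ≤ d) (z₁ z₂ : Localization.Away c) :
    locPV ν c d z₁ + locPV ν c d z₂ ≤ locPV ν c d (z₁ * z₂) := by
  refine EReal.add_le_of_forall_lt fun v₁ hv₁ v₂ hv₂ => ?_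
  obtain ⟨g₁, h₁, hg₁⟩ := lt_locPV ν c d hv₁
  obtain ⟨g₂, h₂, hg₂⟩ := lt_locPV ν c d hv₂
  have hprod : Polynomial.aeval
      (IsLocalization.Away.invSelf (S := Localization.Away c) c) (g₁ * g₂) = z₁ * z₂ := by
    rw [map_mul, h₁, h₂]
  calc v₁ + v₂ ≤ polyPV ν d g₁ + polyPV ν d g₂ := add_le_add hg₁.le hg₂.le
    _ ≤ polyPV ν d (g₁ * g₂) := polyPV_mul hν.1 hν.2.1 hd g₁ g₂
    _ ≤ locPV ν c d (z₁ * z₂) := locPV_ge ν c d hprod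

include hν in
lemma locPV_sum {κ : Type*} (s : Finset κ) (f : κ → Localization.Away c) (r : EReal)
    (h : ∀ i ∈ s, r ≤ locPV ν c d (f i)) : r ≤ locPV ν c d (∑ i ∈ s, f i) := by
  classical
  induction s using Finset.cons_induction with
  | empty =>
    rw [Finset.sum_empty, locPV_zero ν c d hν]; exact le_top
  | cons i s his ih =>
    rw [Finset.sum_cons]
    refine le_trans (le_min (h i (Finset.mem_cons_self i s)) ?_) (locPV_add ν c d hν _ _)
    exact ih fun j hj => h j (Finset.mem_cons_of_mem hj)

end Loc
end S14

namespace S14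
section Comp
variable {A : Type*} [CommRing A] [IsDomain A] (ν : A → EReal)

lemma locPV_comp (hν : IsNegativePV ν) {c : A} (hc : c ≠ 0) (hcl : IsLocalizing ν c)
    {d : ℝ} (hd : 0 < d) :
    ∃ K : ℝ, 0 < K ∧ ∀ x : A,
      (K : EReal) * locPV ν c d (algebraMap A (Localization.Away c) x) ≤ ν x := by
  obtain ⟨C, D, hC, hD, hCD⟩ := hcl
  have hνc : ν c ≤ 0 := hν.2.2 c hc
  have hνcbot : ν c ≠ ⊥ := hν.2.1 c
  have hνctop : ν c ≠ ⊤ := by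
    intro h
    rw [h] at hνc
    exact absurd (le_antisymm hνc le_top) (by simp)
  set v : ℝ := (ν c).toReal with hv_def
  have hv : (v : EReal) = ν c := EReal.coe_toReal hνctop hνcbot
  have hv0 : v ≤ 0 := by
    rw [← EReal.coe_le_coe_iff (y := 0), hv]
    exact_mod_cast hνc
  set K : ℝ := (d + D - v) / (C * d) with hK_def
  have hK : 0 < K := div_pos (by linarith) (by positivity)
  refine ⟨K, hK, fun x => ?_⟩
  by_cases hx : x = 0
  · rw [hx, hν.1.map_zero]; exact le_top
  -- x ≠ 0 case
  have hinj : Function.Injective (algebraMap A (Localization.Away c)) :=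
    IsLocalization.injective _ (powers_le_nonZeroDivisors_of_noZeroDivisors hc)
  have hιx : algebraMap A (Localization.Away c) x ≠ 0 := by
    intro h
    exact hx (hinj (by rw [h, map_zero]))
  have hνx : ν x ≤ 0 := hν.2.2 x hx
  have hνxtop : ν x ≠ ⊤ := by
    intro h; rw [h] at hνx; exact absurd (le_antisymm hνx le_top) (by simp)
  set t : ℝ := (ν x).toReal with ht_def
  have ht : (t : EReal) = ν x := EReal.coe_toReal hνxtop (hν.2.1 x)
  have key : ∀ g : Polynomial A, Polynomial.aeval
      (IsLocalization.Away.invSelf (S := Localization.Away c) c) g =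
      algebraMap A (Localization.Away c) x → polyPV ν d g ≤ ((t / K : ℝ) : EReal) := by
    intro g hg
    have hg0 : g ≠ 0 := by
      rintro rfl; rw [map_zero] at hg; exact hιx hg.symm
    have hptop : polyPV ν d g ≠ ⊤ := by
      intro h
      have := polyPV_nonpos hν hd.le hg0
      rw [h] at this
      exact absurd (le_antisymm this le_top) (by simp)
    set s : ℝ := (polyPV ν d g).toReal with hs_def
    have hs : (s : EReal) = polyPV ν d g :=
      EReal.coe_toReal hptop (polyPV_ne_bot hν.1 hν.2.1 g)
    have hs0 : s ≤ 0 := by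
      rw [← EReal.coe_le_coe_iff (y := 0), hs]
      exact_mod_cast polyPV_nonpos hν hd.le hg0
    set N : ℕ := g.natDegree with hN_def
    have hsd : s ≤ -((N : ℝ) * d) := by
      rw [← EReal.coe_le_coe_iff, hs]
      exact polyPV_deg hν hg0
    -- the identity c^N * x = ∑ g_i c^(N-i)
    have hidentity : c ^ N * x = ∑ i ∈ Finset.range (N + 1), g.coeff i * c ^ (N - i) := by
      apply hinj
      rw [map_mul, map_pow, ← hg, Polynomial.aeval_eq_sum_range, map_sum, Finset.mul_sum]
      refine Finset.sum_congr rfl fun i hi => ?_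
      have hiN : i ≤ N := Nat.lt_succ_iff.mp (Finset.mem_range.mp hi)
      rw [map_mul, map_pow, Algebra.smul_def]
      have hsplit : (algebraMap A (Localization.Away c) c) ^ N =
          (algebraMap A (Localization.Away c) c) ^ (N - i) *
          (algebraMap A (Localization.Away c) c) ^ i := by
        rw [← pow_add]
        congr 1
        omega
      have hone : (algebraMap A (Localization.Away c) c) ^ i *
          (IsLocalization.Away.invSelf (S := Localization.Away c) c) ^ i = 1 := by
        rw [← mul_pow, IsLocalization.Away.mul_invSelf, one_pow]
      calc (algebraMap A (Localization.Away c) c) ^ N *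
            (algebraMap A (Localization.Away c) (g.coeff i) *
            (IsLocalization.Away.invSelf (S := Localization.Away c) c) ^ i)
          = algebraMap A (Localization.Away c) (g.coeff i) *
            ((algebraMap A (Localization.Away c) c) ^ (N - i) *
            ((algebraMap A (Localization.Away c) c) ^ i *
            (IsLocalization.Away.invSelf (S := Localization.Away c) c) ^ i)) := by
            rw [hsplit]; ring
        _ = algebraMap A (Localization.Away c) (g.coeff i) *
            (algebraMap A (Localization.Away c) c) ^ (N - i) := by rw [hone, mul_one]
    -- lower bound for ν of the sum
    have hlow : ((s + (N : ℝ) * v : ℝ) : EReal) ≤ ν (c ^ N * x) := by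
      rw [hidentity]
      refine nu_sum hν.1 _ _ _ fun i hi => ?_
      refine le_trans ?_ (hν.1.add_le_mul _ _ (hν.2.1 _) (hν.2.1 _))
      have h1 : ((s + (i : ℝ) * d : ℝ) : EReal) ≤ ν (g.coeff i) := by
        rw [EReal.coe_add, hs]
        exact coeff_ge ν d g i
      have h2 : ((((N - i : ℕ) : ℝ) * v : ℝ) : EReal) ≤ ν (c ^ (N - i)) :=
        nu_pow hν.1 hν.2.1 c hv.le (N - i)
      refine le_trans ?_ (add_le_add h1 h2)
      rw [← EReal.coe_add]
      apply EReal.coe_le_coe_iff.mpr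
      have hiN : i ≤ N := Nat.lt_succ_iff.mp (Finset.mem_range.mp hi)
      have hcast : ((N - i : ℕ) : ℝ) = (N : ℝ) - (i : ℝ) := by
        push_cast [Nat.cast_sub hiN]; ring
      rw [hcast]
      nlinarith [Nat.cast_nonneg (α := ℝ) i]
    -- upper bound via localizing property
    have hup : ν (c ^ N * x) ≤ (C : EReal) * ν x + (((N : ℝ) * D : ℝ) : EReal) := hCD N x
    have hreal : s + (N : ℝ) * v ≤ C * t + (N : ℝ) * D := by
      rw [← EReal.coe_le_coe_iff]
      refine le_trans hlow (le_trans hup ?_)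
      rw [← ht, ← EReal.coe_mul, ← EReal.coe_add]
    -- conclude s ≤ t / K by real arithmetic
    have hKs : K * s ≤ t := by
      have hNd : (N : ℝ) * d ≤ -s := by linarith
      have hvD : v - D ≤ 0 := by linarith
      have hprod : (-s) * (v - D) ≤ ((N : ℝ) * d) * (v - D) :=
        mul_le_mul_of_nonpos_right hNd hvD
      have hCd : (0:ℝ) < C * d := by positivity
      rw [← mul_le_mul_iff_right₀ hCd]
      have heq : C * d * (K * s) = (d + D - v) * s := by
        rw [hK_def]
        field_simp
      rw [heq]
      nlinarith [mul_le_mul_of_nonneg_left hreal hd.le]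
    rw [← hs]
    apply EReal.coe_le_coe_iff.mpr
    rw [le_div_iff₀ hK, mul_comm]
    exact hKs
  -- finish: multiply the sup bound
  have hloc_le : locPV ν c d (algebraMap A (Localization.Away c) x) ≤ ((t / K : ℝ) : EReal) :=
    locPV_le_of ν c d key
  calc (K : EReal) * locPV ν c d (algebraMap A (Localization.Away c) x)
      ≤ (K : EReal) * ((t / K : ℝ) : EReal) :=
        mul_le_mul_of_nonneg_left hloc_le (by exact_mod_cast hK.le)
    _ = ((K * (t / K) : ℝ) : EReal) := by rw [EReal.coe_mul]
    _ = ((t : ℝ) : EReal) := by rw [mul_div_cancel₀ t hK.ne']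
    _ = ν x := ht

end Comp
end S14

namespace S14
section WDeg
variable {A : Type*} [CommRing A] (ν : A → EReal) {m : ℕ} (d : Fin m → ℝ)

lemma wdeg_le (f : MvPolynomial (Fin m) A) (k : Fin m →₀ ℕ) :
    weightedDegPV ν d f ≤ ν (MvPolynomial.coeff k f) - ((∑ i, (k i : ℝ) * d i : ℝ) : EReal) :=
  iInf_le _ k

lemma wdeg_coeff_ge (f : MvPolynomial (Fin m) A) (k : Fin m →₀ ℕ) :
    weightedDegPV ν d f + ((∑ i, (k i : ℝ) * d i : ℝ) : EReal) ≤ ν (MvPolynomial.coeff k f) :=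
  le_sub_iff.mp (wdeg_le ν d f k)

lemma wdeg_C (hν : IsPseudovaluation ν) (a : A) :
    weightedDegPV ν d (MvPolynomial.C a) = ν a := by
  refine le_antisymm ?_ (le_iInf fun k => ?_)
  · refine le_trans (wdeg_le ν d _ 0) ?_
    simp [MvPolynomial.coeff_zero_C]
  · by_cases hk : k = 0
    · subst hk
      simp [MvPolynomial.coeff_zero_C]
    · rw [MvPolynomial.coeff_C, if_neg (Ne.symm hk), hν.map_zero, top_sub]
      exact le_top

lemma wdeg_nonpos (hν : IsNegativePV ν) (hd : ∀ i, 0 ≤ d i) {f : MvPolynomial (Fin m) A}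
    (hf : f ≠ 0) : weightedDegPV ν d f ≤ 0 := by
  obtain ⟨k, hk⟩ := MvPolynomial.support_nonempty.mpr hf
  have hk' : MvPolynomial.coeff k f ≠ 0 := MvPolynomial.mem_support_iff.mp hk
  refine le_trans (wdeg_le ν d f k) ?_
  have h1 : ν (MvPolynomial.coeff k f) ≤ 0 := hν.2.2 _ hk'
  have h2 : (0:ℝ) ≤ ∑ i, (k i : ℝ) * d i :=
    Finset.sum_nonneg fun i _ => mul_nonneg (Nat.cast_nonneg _) (hd i)
  calc ν (MvPolynomial.coeff k f) - ((∑ i, (k i : ℝ) * d i : ℝ) : EReal)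
      ≤ 0 - ((∑ i, (k i : ℝ) * d i : ℝ) : EReal) := EReal.sub_le_sub h1 (le_refl _)
    _ ≤ 0 := by
        rw [zero_sub, ← EReal.coe_neg]
        exact_mod_cast neg_nonpos.mpr h2

lemma wdeg_eq_top (hν : IsNegativePV ν) (hd : ∀ i, 0 ≤ d i) {f : MvPolynomial (Fin m) A}
    (hf : weightedDegPV ν d f = ⊤) : f = 0 := by
  by_contra h
  have := wdeg_nonpos ν d hν hd h
  rw [hf] at this
  exact absurd (le_antisymm this le_top) (by simp)

end WDeg

section Gauss

lemma ereal_cases {x : EReal} (h : x ≠ ⊥) : x = ⊤ ∨ ∃ r : ℝ, x = (r : EReal) := by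
  induction x using EReal.rec with
  | bot => exact absurd rfl h
  | coe r => exact Or.inr ⟨r, rfl⟩
  | top => exact Or.inl rfl

lemma gauss_transfer (p : ℕ) [Fact p.Prime] {A B : Type*} [CommRing A] [CommRing B]
    (ν : A → EReal) (τ : B → EReal) (h : A →+* B) (K D : ℝ) (hK : 0 < K) (hD : 0 ≤ D)
    (hcomp : ∀ a : A, (K : EReal) * τ (h a) - (D : EReal) ≤ ν a)
    (x : WittVector p A) (ε : ℝ) (hε : 0 < ε)
    (hno : gaussNorm p τ ε (WittVector.map h x) ≠ ⊥) :
    gaussNorm p ν (ε / K) x ≠ ⊥ := by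
  obtain ⟨r, hr⟩ := exists_real_le hno
  have hp1 : (1 : ℝ) ≤ (p : ℝ) := by exact_mod_cast (Fact.out : p.Prime).one_lt.le
  have key : ∀ i : ℕ, ((r - ε * D / K : ℝ) : EReal) ≤
      (i : EReal) + ((ε / K * (p : ℝ) ^ (-(i : ℤ)) : ℝ) : EReal) * ν (x.coeff i) := by
    intro i
    have hq1 : (p : ℝ) ^ (-(i : ℤ)) ≤ 1 := zpow_le_one_of_nonpos₀ hp1 (by omega)
    have hq0 : 0 < (p : ℝ) ^ (-(i : ℤ)) := by positivity
    set q : ℝ := (p : ℝ) ^ (-(i : ℤ))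
    have hri : (r : EReal) ≤ (i : EReal) + ((ε * q : ℝ) : EReal) * τ (h (x.coeff i)) := by
      refine le_trans (le_trans hr (iInf_le _ i)) (le_of_eq ?_)
      rw [WittVector.map_coeff]
    have hTbot : τ (h (x.coeff i)) ≠ ⊥ := by
      intro hTb
      rw [hTb, EReal.mul_bot_of_pos (by exact_mod_cast mul_pos hε hq0), EReal.add_bot] at hri
      exact (EReal.bot_lt_coe r).not_ge hri
    have hν_ge : (K : EReal) * τ (h (x.coeff i)) - (D : EReal) ≤ ν (x.coeff i) :=
      hcomp (x.coeff i)
    rcases ereal_cases hTbot with hT | ⟨T', hT⟩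
    · have hνtop : ν (x.coeff i) = ⊤ := by
        refine le_antisymm le_top (le_trans (le_of_eq ?_) hν_ge)
        rw [hT, EReal.mul_top_of_pos (by exact_mod_cast hK : (0:EReal) < (K:ℝ)),
          EReal.top_sub_coe]
      rw [hνtop, EReal.mul_top_of_pos
        (by exact_mod_cast mul_pos (div_pos hε hK) hq0 : (0:EReal) < ((ε / K * q : ℝ) : EReal)),
        EReal.add_top_of_ne_bot (EReal.natCast_ne_bot i)]
      exact le_top
    · rw [hT] at hri hν_ge
      have hTi : r ≤ (i : ℝ) + ε * q * T' := by
        have h2 : ((r : ℝ) : EReal) ≤ (((i : ℝ) + ε * q * T' : ℝ) : EReal) := by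
          refine le_trans hri (le_of_eq ?_)
          rw [EReal.coe_add, EReal.coe_mul]
          norm_cast
        exact_mod_cast h2
      have hν' : ((K * T' - D : ℝ) : EReal) ≤ ν (x.coeff i) := by
        refine le_trans (le_of_eq ?_) hν_ge
        rw [EReal.coe_sub, EReal.coe_mul]
      calc ((r - ε * D / K : ℝ) : EReal)
          ≤ (((i : ℝ) + (ε / K * q) * (K * T' - D) : ℝ) : EReal) := by
            apply EReal.coe_le_coe_iff.mpr
            have expand : (i : ℝ) + (ε / K * q) * (K * T' - D) =
                (i : ℝ) + ε * q * T' - ε * q * D / K := by field_simp; ring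
            rw [expand]
            have hqD : ε * q * D / K ≤ ε * D / K := by
              apply div_le_div_of_nonneg_right ?_ hK.le
              nlinarith [mul_nonneg (mul_nonneg hε.le hD) (sub_nonneg.mpr hq1)]
            linarith
        _ ≤ (i : EReal) + ((ε / K * q : ℝ) : EReal) * ν (x.coeff i) := by
            rw [EReal.coe_add, EReal.coe_mul, EReal.coe_mul]
            refine add_le_add (le_of_eq (by norm_cast)) ?_
            refine le_trans (le_of_eq ?_)
              (mul_le_mul_of_nonneg_left hν'
                (by exact_mod_cast (mul_pos (div_pos hε hK) hq0).le))
            rw [← EReal.coe_mul, ← EReal.coe_mul]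
  intro hbot
  have hge := le_iInf key
  rw [gaussNorm] at hbot
  rw [hbot] at hge
  exact (EReal.bot_lt_coe _).not_ge hge

end Gauss
end S14

namespace S14

lemma exists_unif_bound {T : Type*} [Finite T] (f : T → EReal) (hf : ∀ t, f t ≠ ⊥) :
    ∃ E : ℝ, 0 ≤ E ∧ ∀ t, ((-E : ℝ) : EReal) ≤ f t := by
  cases nonempty_fintype T
  choose r hr using fun t => exists_real_le (hf t)
  rcases isEmpty_or_nonempty T with h | h
  · exact ⟨0, le_refl 0, fun t => isEmptyElim t⟩
  · refine ⟨max 0 (-(Finset.univ.inf' Finset.univ_nonempty r)), le_max_left _ _, fun t => ?_⟩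
    refine le_trans ?_ (hr t)
    apply EReal.coe_le_coe_iff.mpr
    have h1 : Finset.univ.inf' Finset.univ_nonempty r ≤ r t :=
      Finset.inf'_le r (Finset.mem_univ t)
    have h2 : -(max 0 (-(Finset.univ.inf' Finset.univ_nonempty r))) ≤
        Finset.univ.inf' Finset.univ_nonempty r := by
      have := le_max_right 0 (-(Finset.univ.inf' Finset.univ_nonempty r))
      linarith
    linarith

end S14

namespace S14

set_option maxHeartbeats 1000000 in
lemma tau_comp (A B : Type*) [CommRing A] [IsDomain A] [CommRing B] [Algebra A B]
    (ν : A → EReal) (hν : IsNegativePV ν)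
    (hloc : ∀ a : A, a ≠ 0 → IsLocalizing ν a)
    (hinj : Function.Injective (algebraMap A B))
    (hgenfin : ∃ c : A, c ≠ 0 ∧
      (@Module.Finite (Localization.Away c) (Localization.Away (algebraMap A B c)) _ _
        (@Algebra.toModule _ _ _ _ ((Localization.awayMap (algebraMap A B) c).toAlgebra)) ∧
       @Module.Free (Localization.Away c) (Localization.Away (algebraMap A B c)) _ _
        (@Algebra.toModule _ _ _ _ ((Localization.awayMap (algebraMap A B) c).toAlgebra))))
    (τ : B → EReal) (hτ : IsAdmissiblePV ν τ) :
    ∃ K D : ℝ, 0 < K ∧ 0 ≤ D ∧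
      ∀ a : A, (K : EReal) * τ (algebraMap A B a) - (D : EReal) ≤ ν a := by
  classical
  obtain ⟨c, hc, hfin, hfree⟩ := hgenfin
  obtain ⟨m, π, d, hπ, hd, hτeq⟩ := hτ
  letI algLM : Algebra (Localization.Away c) (Localization.Away (algebraMap A B c)) :=
    (Localization.awayMap (algebraMap A B) c).toAlgebra
  haveI hfin' : Module.Finite (Localization.Away c) (Localization.Away (algebraMap A B c)) := hfin
  haveI hfree' : Module.Free (Localization.Away c) (Localization.Away (algebraMap A B c)) := hfree
  set L := Localization.Away c with hL_def
  set M := Localization.Away (algebraMap A B c) with hM_def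
  -- compatibility of the two routes A → M
  have hcompat : ∀ z : A, algebraMap L M (algebraMap A L z) =
      algebraMap B M (algebraMap A B z) := by
    intro z
    have h1 : (algebraMap L M).comp (algebraMap A L) =
        (algebraMap B M).comp (algebraMap A B) := by
      rw [RingHom.algebraMap_toAlgebra]
      exact IsLocalization.map_comp _
    exact RingHom.congr_fun h1 z
  -- M is nontrivial
  haveI : Nontrivial M := by
    refine nontrivial_of_ne 1 0 fun h10 => ?_
    have h1 : algebraMap B M 1 = 0 := by rw [map_one]; exact h10
    obtain ⟨⟨s, n, rfl⟩, hs⟩ := (IsLocalization.map_eq_zero_iff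
      (Submonoid.powers (algebraMap A B c)) M 1).mp h1
    rw [mul_one] at hs
    have : algebraMap A B (c ^ n) = 0 := by rw [map_pow]; exact hs
    have hcn : (c : A) ^ n = 0 := by
      apply hinj
      rw [this, map_zero]
    exact pow_ne_zero n hc hcn
  -- basis of M over L
  set bs := Module.Free.chooseBasis L M with hbs_def
  set I := Module.Free.ChooseBasisIndex L M with hI_def
  set e : I →₀ L := bs.repr 1 with he_def
  obtain ⟨j0, hj0⟩ : ∃ j : I, e j ≠ 0 := by
    by_contra hall
    push_neg at hall
    have he0 : e = 0 := Finsupp.ext fun j => hall j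
    have : (1 : M) = 0 := by
      have := bs.repr.injective (a₁ := 1) (a₂ := 0)
      apply this
      rw [map_zero, ← he_def, he0]
    exact one_ne_zero this
  -- weight bound for d
  obtain ⟨dm, hdm0, hdm⟩ : ∃ dm : ℝ, 0 < dm ∧ ∀ i, dm ≤ d i := by
    rcases isEmpty_or_nonempty (Fin m) with h | h
    · exact ⟨1, one_pos, fun i => isEmptyElim i⟩
    · refine ⟨Finset.univ.inf' Finset.univ_nonempty d, ?_,
        fun i => Finset.inf'_le d (Finset.mem_univ i)⟩
      rw [Finset.lt_inf'_iff]
      exact fun i _ => hd i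
  -- generators, monomial images and coordinates
  set u : (Fin m →₀ ℕ) → B := fun k => π (MvPolynomial.monomial k 1) with hu_def
  set φ : (Fin m →₀ ℕ) → I → L := fun k j => bs.repr (algebraMap B M (u k)) j with hφ_def
  -- uniform bound on multiplication matrix entries
  obtain ⟨E, hE0, hE⟩ := exists_unif_bound
    (fun t : Fin m × I × I =>
      locPV ν c 1 (bs.repr (algebraMap B M (π (MvPolynomial.X t.1)) * bs t.2.2) t.2.1))
    (fun t => locPV_ne_bot ν c 1 hν _)
  -- uniform bound on coordinates of 1
  obtain ⟨F, hF0, hF⟩ := exists_unif_bound (fun j : I => locPV ν c 1 (e j))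
    (fun j => locPV_ne_bot ν c 1 hν _)
  -- coordinate growth bound
  have claim : ∀ n : ℕ, ∀ k : Fin m →₀ ℕ, (∑ i, k i) = n → ∀ j : I,
      ((-((n : ℝ) * E + F) : ℝ) : EReal) ≤ locPV ν c 1 (φ k j) := by
    intro n
    induction n with
    | zero =>
      intro k hk j
      have hk0 : k = 0 := by
        ext i
        have := Finset.sum_eq_zero_iff.mp hk i (Finset.mem_univ i)
        simpa using this
      subst hk0
      have hu0 : u 0 = 1 := by
        rw [hu_def]
        simp only [MvPolynomial.monomial_zero', MvPolynomial.C_1, map_one]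
      have hφ0 : φ 0 j = e j := by
        rw [hφ_def]
        simp only [hu0, map_one, ← he_def]
      rw [hφ0]
      refine le_trans (le_of_eq ?_) (hF j)
      norm_num
    | succ n ih =>
      intro k hk j
      obtain ⟨i0, hi0⟩ : ∃ i0, k i0 ≠ 0 := by
        by_contra hall
        push_neg at hall
        have : (∑ i, k i) = 0 := Finset.sum_eq_zero fun i _ => hall i
        omega
      set k' : Fin m →₀ ℕ := k - Finsupp.single i0 1 with hk'_def
      have hkk' : k = k' + Finsupp.single i0 1 := by
        ext i
        rw [Finsupp.add_apply, hk'_def, Finsupp.tsub_apply, Finsupp.single_apply]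
        split
        next h => subst h; omega
        next h => omega
      have hk'sum : (∑ i, k' i) = n := by
        have hsum : (∑ i, k i) = (∑ i, k' i) + 1 := by
          rw [hkk']
          rw [Finset.sum_congr rfl (fun i _ => Finsupp.add_apply k' (Finsupp.single i0 1) i),
            Finset.sum_add_distrib]
          congr 1
          rw [Finset.sum_congr rfl (fun i _ => Finsupp.single_apply)]
          simp
        omega
      have hmul : u k = u k' * π (MvPolynomial.X i0) := by
        rw [hu_def]
        simp only
        rw [← map_mul]
        congr 1
        rw [MvPolynomial.X, MvPolynomial.monomial_mul, mul_one, ← hkk']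
      -- expand coordinates
      have hrep : algebraMap B M (u k') = ∑ l : I, φ k' l • bs l :=
        (bs.sum_repr _).symm
      have hexpand : φ k j = ∑ l : I, φ k' l *
          bs.repr (algebraMap B M (π (MvPolynomial.X i0)) * bs l) j := by
        show bs.repr (algebraMap B M (u k)) j = _
        rw [hmul, map_mul]
        conv_lhs => rw [hrep]
        rw [Finset.sum_mul]
        rw [Finset.sum_congr rfl fun l (_ : l ∈ Finset.univ) =>
          (by rw [smul_mul_assoc, mul_comm] :
            (φ k' l • bs l) * algebraMap B M (π (MvPolynomial.X i0)) =
            φ k' l • (algebraMap B M (π (MvPolynomial.X i0)) * bs l))]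
        rw [map_sum, Finsupp.finset_sum_apply]
        refine Finset.sum_congr rfl fun l _ => ?_
        rw [map_smul, Finsupp.smul_apply, smul_eq_mul]
      rw [hexpand]
      refine locPV_sum ν c 1 hν _ _ _ fun l _ => ?_
      have h1 : ((-((n : ℝ) * E + F) : ℝ) : EReal) ≤ locPV ν c 1 (φ k' l) :=
        ih k' hk'sum l
      have h2 : ((-E : ℝ) : EReal) ≤ locPV ν c 1
          (bs.repr (algebraMap B M (π (MvPolynomial.X i0)) * bs l) j) := hE (i0, j, l)
      refine le_trans (le_of_eq ?_) (le_trans (add_le_add h1 h2)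
        (locPV_mul ν c 1 hν zero_le_one _ _))
      rw [← EReal.coe_add]
      exact congrArg Real.toEReal (by push_cast; ring)
  -- representation of e j0 with denominator a power of c
  obtain ⟨y, ny, hyrep, hy⟩ := exists_rep c (e j0)
  have hy0 : y ≠ 0 := by
    rintro rfl
    rw [map_zero] at hy
    have hunit : IsUnit (algebraMap A L (c ^ ny)) :=
      IsLocalization.map_units L ⟨c ^ ny, Submonoid.pow_mem _ (Submonoid.mem_powers c) ny⟩
    exact hj0 ((hunit.mul_left_eq_zero).mp hy)
  obtain ⟨G0, hG0⟩ := exists_real_le (locPV_ne_bot ν c 1 hν (algebraMap A L (c ^ ny)))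
  set G : ℝ := min G0 0 with hG_def
  have hG : (G : EReal) ≤ locPV ν c 1 (algebraMap A L (c ^ ny)) :=
    le_trans (EReal.coe_le_coe_iff.mpr (min_le_left _ _)) hG0
  have hGle : G ≤ 0 := min_le_right _ _
  -- the comparison constant on A
  obtain ⟨K, hK, hKcomp⟩ := locPV_comp ν hν hc (hloc c hc) one_pos
  -- the localizing constants for y
  obtain ⟨Cy, Dy, hCy, hDy, hCyD⟩ := hloc y hy0
  -- final constants
  set K' : ℝ := K * (1 + E / dm) / Cy with hK'_def
  set D' : ℝ := (Dy - K * G + K * F) / Cy with hD'_def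
  have hEdm : (0:ℝ) < 1 + E / dm := by positivity
  have hK' : 0 < K' := div_pos (mul_pos hK hEdm) hCy
  have hD' : 0 ≤ D' := by
    apply div_nonneg _ hCy.le
    nlinarith
  refine ⟨K', D', hK', hD', fun a => ?_⟩
  by_cases ha : a = 0
  · subst ha
    rw [map_zero, hν.1.map_zero]
    exact le_top
  -- a ≠ 0 : the main case
  have hνa : ν a ≤ 0 := hν.2.2 a ha
  have hνatop : ν a ≠ ⊤ := by
    intro h; rw [h] at hνa; exact absurd (le_antisymm hνa le_top) (by simp)
  set ta : ℝ := (ν a).toReal with hta_def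
  have hta : (ta : EReal) = ν a := EReal.coe_toReal hνatop (hν.2.1 a)
  have perf : ∀ f : MvPolynomial (Fin m) A, π f = algebraMap A B a →
      (K' : EReal) * weightedDegPV ν d f - (D' : EReal) ≤ ν a := by
    intro f hf
    by_cases hftop : weightedDegPV ν d f = ⊤
    · exfalso
      have hf0 : f = 0 := wdeg_eq_top ν d hν (fun i => (hd i).le) hftop
      rw [hf0, map_zero] at hf
      exact ha (hinj (by rw [← hf, map_zero]))
    by_cases hfbot : weightedDegPV ν d f = ⊥
    · rw [hfbot, EReal.coe_mul_bot_of_pos (by exact_mod_cast hK'), EReal.bot_sub]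
      exact bot_le
    have hfne : f ≠ 0 := by
      rintro rfl
      rw [map_zero] at hf
      exact ha (hinj (by rw [← hf, map_zero]))
    set sf : ℝ := (weightedDegPV ν d f).toReal with hsf_def
    have hsf : (sf : EReal) = weightedDegPV ν d f := EReal.coe_toReal hftop hfbot
    have hsf0 : sf ≤ 0 := by
      rw [← EReal.coe_le_coe_iff (y := 0), hsf]
      exact_mod_cast wdeg_nonpos ν d hν (fun i => (hd i).le) hfne
    -- the coordinate identity
    have hψ : algebraMap B M (π f) = ∑ k ∈ f.support,
        (algebraMap A L (MvPolynomial.coeff k f)) • (algebraMap B M (u k)) := by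
      conv_lhs => rw [← MvPolynomial.support_sum_monomial_coeff f]
      rw [map_sum, map_sum]
      refine Finset.sum_congr rfl fun k hk => ?_
      rw [show (MvPolynomial.monomial k) (MvPolynomial.coeff k f) =
          MvPolynomial.C (MvPolynomial.coeff k f) * (MvPolynomial.monomial k) 1 from by
          rw [MvPolynomial.C_mul_monomial, mul_one]]
      rw [map_mul, map_mul]
      rw [show π (MvPolynomial.C (MvPolynomial.coeff k f)) =
          algebraMap A B (MvPolynomial.coeff k f) from by
          rw [← MvPolynomial.algebraMap_eq]; exact π.commutes _]
      rw [← hcompat, ← Algebra.smul_def]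
    have hψa : algebraMap B M (π f) = (algebraMap A L a) • (1 : M) := by
      rw [hf, ← hcompat, Algebra.smul_def, mul_one]
    have hid : algebraMap A L a * e j0 = ∑ k ∈ f.support,
        algebraMap A L (MvPolynomial.coeff k f) * φ k j0 := by
      have hcongr := congrArg (fun z : M => bs.repr z j0) (hψa.symm.trans hψ)
      try simp only at hcongr
      rw [map_smul, Finsupp.smul_apply, smul_eq_mul] at hcongr
      rw [map_sum, Finsupp.finset_sum_apply] at hcongr
      rw [Finset.sum_congr rfl fun k (_ : k ∈ f.support) =>
        (by rw [map_smul, Finsupp.smul_apply, smul_eq_mul] :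
          (bs.repr ((algebraMap A L (MvPolynomial.coeff k f)) •
            (algebraMap B M (u k)))) j0 =
          algebraMap A L (MvPolynomial.coeff k f) * bs.repr (algebraMap B M (u k)) j0)]
        at hcongr
      exact hcongr
    -- lower bound on each summand
    have hsummand : ∀ k ∈ f.support, ((sf * (1 + E / dm) - F : ℝ) : EReal) ≤
        locPV ν c 1 (algebraMap A L (MvPolynomial.coeff k f) * φ k j0) := by
      intro k hk
      have hck : MvPolynomial.coeff k f ≠ 0 := MvPolynomial.mem_support_iff.mp hk
      set Sk : ℝ := ∑ i, (k i : ℝ) * d i with hSk_def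
      have h1 : ((sf + Sk : ℝ) : EReal) ≤ ν (MvPolynomial.coeff k f) := by
        rw [EReal.coe_add, hsf]
        exact wdeg_coeff_ge ν d f k
      have h2 : ((-(((∑ i, k i : ℕ) : ℝ) * E + F) : ℝ) : EReal) ≤ locPV ν c 1 (φ k j0) :=
        claim (∑ i, k i) k rfl j0
      have h3 : ((sf + Sk : ℝ) : EReal) ≤ locPV ν c 1
          (algebraMap A L (MvPolynomial.coeff k f)) :=
        le_trans h1 (locPV_algebraMap ν c 1 hν zero_le_one _)
      refine le_trans ?_ (le_trans (add_le_add h3 h2) (locPV_mul ν c 1 hν zero_le_one _ _))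
      rw [← EReal.coe_add]
      apply EReal.coe_le_coe_iff.mpr
      -- real arithmetic
      set nk : ℝ := ((∑ i, k i : ℕ) : ℝ) with hnk_def
      have hnk0 : 0 ≤ nk := Nat.cast_nonneg _
      have hSdm : dm * nk ≤ Sk := by
        rw [hSk_def, hnk_def]
        push_cast
        rw [Finset.mul_sum]
        refine Finset.sum_le_sum fun i _ => ?_
        rw [mul_comm]
        exact mul_le_mul_of_nonneg_left (hdm i) (Nat.cast_nonneg _)
      have hsfS : sf + Sk ≤ 0 := by
        have hν0 : ν (MvPolynomial.coeff k f) ≤ 0 := hν.2.2 _ hck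
        rw [← EReal.coe_le_coe_iff (y := 0)]
        exact_mod_cast le_trans h1 hν0
      have h5 : sf ≤ -(dm * nk) := by linarith
      have hSk0 : 0 ≤ Sk := le_trans (mul_nonneg hdm0.le hnk0) hSdm
      have keyr : sf * E ≤ (Sk - nk * E) * dm := by
        nlinarith [mul_le_mul_of_nonneg_right h5 hE0, mul_nonneg hSk0 hdm0.le]
      have h6 : sf * (E / dm) ≤ Sk - nk * E := by
        rw [mul_div_assoc']
        rw [div_le_iff₀ hdm0]
        exact keyr
      nlinarith [h6]
    have hw1 : ((sf * (1 + E / dm) - F : ℝ) : EReal) ≤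
        locPV ν c 1 (algebraMap A L a * e j0) := by
      rw [hid]
      exact locPV_sum ν c 1 hν _ _ _ hsummand
    -- multiply by c^ny to land in the image of A
    have hay : algebraMap A L (a * y) =
        (algebraMap A L a * e j0) * algebraMap A L (c ^ ny) := by
      rw [map_mul]
      rw [← hy]
      ring
    have hw2 : ((sf * (1 + E / dm) - F + G : ℝ) : EReal) ≤ locPV ν c 1 (algebraMap A L (a * y)) := by
      rw [hay, EReal.coe_add]
      exact le_trans (add_le_add hw1 hG) (locPV_mul ν c 1 hν zero_le_one _ _)
    have hw3 : ((K * (sf * (1 + E / dm) - F + G) : ℝ) : EReal) ≤ ν (a * y) := by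
      refine le_trans ?_ (hKcomp (a * y))
      rw [EReal.coe_mul]
      exact mul_le_mul_of_nonneg_left hw2 (by exact_mod_cast hK.le)
    have hup : ν (y * a) ≤ (Cy : EReal) * ν a + (((1 : ℝ) * Dy : ℝ) : EReal) := by
      have h := hCyD 1 a
      rwa [pow_one, Nat.cast_one] at h
    have hreal : K * (sf * (1 + E / dm) - F + G) ≤ Cy * ta + Dy := by
      rw [← EReal.coe_le_coe_iff]
      refine le_trans hw3 ?_
      rw [mul_comm a y]
      refine le_trans hup (le_of_eq ?_)
      rw [← hta, ← EReal.coe_mul, ← EReal.coe_add, one_mul]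
    -- conclude
    have hgoal : K' * sf - D' ≤ ta := by
      rw [hK'_def, hD'_def, div_mul_eq_mul_div, ← sub_div, div_le_iff₀ hCy]
      nlinarith [hreal]
    rw [← hsf, ← hta, ← EReal.coe_mul, ← EReal.coe_sub]
    exact_mod_cast hgoal
  -- pass to the supremum
  rw [hτeq (algebraMap A B a), sub_le_iff]
  have hK'top : ((K' : ℝ) : EReal) ≠ ⊤ := EReal.coe_ne_top _
  have hK'bot : ((K' : ℝ) : EReal) ≠ ⊥ := EReal.coe_ne_bot _
  have hK'pos : (0 : EReal) < (K' : ℝ) := by exact_mod_cast hK'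
  have hsup_le : (⨆ (f : MvPolynomial (Fin m) A) (_ : π f = algebraMap A B a),
      weightedDegPV ν d f) ≤ (ν a + (D' : EReal)) / (K' : EReal) := by
    refine iSup₂_le fun f hf => ?_
    rw [EReal.le_div_iff_mul_le hK'pos hK'top, mul_comm]
    exact sub_le_iff.mp (perf f hf)
  calc (K' : EReal) * (⨆ (f : MvPolynomial (Fin m) A) (_ : π f = algebraMap A B a),
        weightedDegPV ν d f)
      ≤ (K' : EReal) * ((ν a + (D' : EReal)) / (K' : EReal)) :=
        mul_le_mul_of_nonneg_left hsup_le (by exact_mod_cast hK'.le)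
    _ = ν a + (D' : EReal) := EReal.mul_div_cancel hK'bot hK'top (by exact_mod_cast hK'.ne')

end S14

namespace S14

lemma nu_le_tau {A B : Type*} [CommRing A] [CommRing B] [Algebra A B]
    (ν : A → EReal) (hν : IsPseudovaluation ν) (τ : B → EReal)
    (hτ : IsAdmissiblePV ν τ) : ∀ a : A, ν a ≤ τ (algebraMap A B a) := by
  obtain ⟨m, π, d, hπ, hd, hτeq⟩ := hτ
  intro a
  rw [hτeq]
  have hC : π (MvPolynomial.C a) = algebraMap A B a := by
    rw [← MvPolynomial.algebraMap_eq]; exact π.commutes a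
  exact le_trans (le_of_eq (wdeg_C ν d hν a).symm)
    (le_iSup₂ (f := fun (f : MvPolynomial (Fin m) A) (_ : π f = algebraMap A B a) =>
      weightedDegPV ν d f) (MvPolynomial.C a) hC)

lemma gauss_mono (p : ℕ) [Fact p.Prime] {A B : Type*} [CommRing A] [CommRing B]
    (ν : A → EReal) (τ : B → EReal) (h : A →+* B)
    (hle : ∀ a : A, ν a ≤ τ (h a)) (x : WittVector p A) (ε : ℝ) (hε : 0 < ε) :
    gaussNorm p ν ε x ≤ gaussNorm p τ ε (WittVector.map h x) := by
  refine le_iInf fun i => le_trans (iInf_le _ i) ?_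
  rw [WittVector.map_coeff]
  refine add_le_add (le_refl _) (mul_le_mul_of_nonneg_left (hle _) ?_)
  have : (0:ℝ) ≤ ε * (p : ℝ) ^ (-(i:ℤ)) :=
    mul_nonneg hε.le (zpow_nonneg (Nat.cast_nonneg p) _)
  exact_mod_cast this

end S14

theorem statement14' (p : ℕ) [Fact p.Prime] (A B : Type*)
    [CommRing A] [IsDomain A] [CommRing B] [Algebra A B]
    (hpA : ((p : ℕ) : A) = 0)
    (ν : A → EReal) (hν : IsNegativePV ν)
    (hloc : ∀ a : A, a ≠ 0 → IsLocalizing ν a)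
    (hinj : Function.Injective (algebraMap A B))
    (hft : Algebra.FiniteType A B)
    (hgenfin : ∃ c : A, c ≠ 0 ∧
      (@Module.Finite (Localization.Away c) (Localization.Away (algebraMap A B c)) _ _
        (@Algebra.toModule _ _ _ _ ((Localization.awayMap (algebraMap A B) c).toAlgebra)) ∧
       @Module.Free (Localization.Away c) (Localization.Away (algebraMap A B c)) _ _
        (@Algebra.toModule _ _ _ _ ((Localization.awayMap (algebraMap A B) c).toAlgebra))))
    (τ : B → EReal) (hτ : IsAdmissiblePV ν τ) :
    ∀ x : WittVector p A, IsOverconvergent p ν x ↔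
      IsOverconvergent p τ (WittVector.map (algebraMap A B) x) := by
  intro x
  constructor
  · rintro ⟨ε, hε, hno⟩
    exact ⟨ε, hε, ne_bot_of_le_ne_bot hno
      (S14.gauss_mono p ν τ (algebraMap A B) (S14.nu_le_tau ν hν.1 τ hτ) x ε hε)⟩
  · rintro ⟨ε, hε, hno⟩
    obtain ⟨K, D, hK, hD, hcomp⟩ := S14.tau_comp A B ν hν hloc hinj hgenfin τ hτ
    exact ⟨ε / K, div_pos hε hK,
      S14.gauss_transfer p ν τ (algebraMap A B) K D hK hD hcomp x ε hε hno⟩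

/-- Let `(A, ν)` be an integral domain with `pA = 0` and a negative
pseudovaluation in which every nonzero element is localizing.  Let `A → B` be injective
of finite type and generically finite (there is `c ≠ 0` such that `B_c` is a finite free
`A_c`-module), and equip `B` with an admissible pseudovaluation `τ`.  Then
`W(A) ∩ W†(B) = W†(A)`. -/
theorem statement14 (p : ℕ) [Fact p.Prime] (A B : Type*)
    [CommRing A] [IsDomain A] [CommRing B] [Algebra A B]
    (hpA : ((p : ℕ) : A) = 0)
    (ν : A → EReal) (hν : IsNegativePV ν)
    (hloc : ∀ a : A, a ≠ 0 → IsLocalizing ν a)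
    (hinj : Function.Injective (algebraMap A B))
    (hft : Algebra.FiniteType A B)
    (hgenfin : ∃ c : A, c ≠ 0 ∧
      (@Module.Finite (Localization.Away c) (Localization.Away (algebraMap A B c)) _ _
        (@Algebra.toModule _ _ _ _ ((Localization.awayMap (algebraMap A B) c).toAlgebra)) ∧
       @Module.Free (Localization.Away c) (Localization.Away (algebraMap A B c)) _ _
        (@Algebra.toModule _ _ _ _ ((Localization.awayMap (algebraMap A B) c).toAlgebra))))
    (τ : B → EReal) (hτ : IsAdmissiblePV ν τ) :
    ∀ x : WittVector p A, IsOverconvergent p ν x ↔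
      IsOverconvergent p τ (WittVector.map (algebraMap A B) x) := by
  exact statement14' p A B hpA ν hν hloc hinj hft hgenfin τ hτ
end
end

section
/- Let p be a prime and let (A, ν) be a commutative ring with pA = 0 and a proper pseudovaluation, and let ε > 0. Let α ∈ W(A) be a Witt vector lying in the image of the Verschiebung V, i.e. α = V(η) for some η ∈ W(A), and suppose γ_ε(α) ≥ 0. Then 1 − α is a unit in W(A) and γ_ε((1 − α)^{−1}) ≥ 0. -/
open scoped Classical

noncomputable section

/-! ### Auxiliary material for Statement 16 -/

section Statement16Aux

open MvPolynomial

theorem MvPolynomial.IsWeightedHomogeneous.pow' {σ R M : Type*} [CommSemiring R] [AddCommMonoid M]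
    {w : σ → M} {φ : MvPolynomial σ R} {m : M} (h : φ.IsWeightedHomogeneous w m) (k : ℕ) :
    (φ ^ k).IsWeightedHomogeneous w (k • m) := by
  induction k with
  | zero => simpa using MvPolynomial.isWeightedHomogeneous_one R w
  | succ k ih =>
      rw [pow_succ, succ_nsmul]
      exact ih.mul h

theorem MvPolynomial.IsWeightedHomogeneous.sub' {σ R M : Type*} [CommRing R] [AddCommMonoid M]
    {w : σ → M} {φ ψ : MvPolynomial σ R} {m : M} (hφ : φ.IsWeightedHomogeneous w m)
    (hψ : ψ.IsWeightedHomogeneous w m) : (φ - ψ).IsWeightedHomogeneous w m := by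
  intro d hd
  rw [MvPolynomial.coeff_sub] at hd
  rcases ne_or_eq (MvPolynomial.coeff d φ) 0 with h | h
  · exact hφ h
  · exact hψ (by rw [h] at hd; simpa using hd)

/-- weight of variable `(b,i)` is `p^i`. -/
def wWt (p : ℕ) : Fin 2 × ℕ → ℕ := fun s => p ^ s.2

theorem iso_rename_witt (p : ℕ) [hp : Fact p.Prime] (b : Fin 2) (n : ℕ) :
    IsWeightedHomogeneous (wWt p) (rename (Prod.mk b) (wittPolynomial p ℚ n)) (p ^ n) := by
  rw [wittPolynomial]
  rw [map_sum]
  apply IsWeightedHomogeneous.sum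
  intro i hi
  rw [rename_monomial]
  apply isWeightedHomogeneous_monomial
  rw [Finsupp.mapDomain_single]
  rw [Finsupp.weight_apply, Finsupp.sum_single_index]
  · show p ^ (n - i) * p ^ i = p ^ n
    rw [← pow_add]
    congr 1
    have := Finset.mem_range.mp hi
    omega
  · simp

theorem iso_wsr (p : ℕ) [hp : Fact p.Prime] (n : ℕ) :
    IsWeightedHomogeneous (wWt p) (wittStructureRat p (X 0 + X 1 : MvPolynomial (Fin 2) ℚ) n)
      (p ^ n) := by
  induction n using Nat.strong_induction_on with
  | _ n ih =>
    rw [wittStructureRat_rec]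
    have h1 : IsWeightedHomogeneous (wWt p)
        (bind₁ (fun b : Fin 2 => rename (Prod.mk b) (wittPolynomial p ℚ n))
          (X 0 + X 1 : MvPolynomial (Fin 2) ℚ)) (p ^ n) := by
      rw [map_add, bind₁_X_right, bind₁_X_right]
      exact (iso_rename_witt p 0 n).add (iso_rename_witt p 1 n)
    have h2 : IsWeightedHomogeneous (wWt p)
        (∑ i ∈ Finset.range n, C ((p : ℚ) ^ i) *
          wittStructureRat p (X 0 + X 1 : MvPolynomial (Fin 2) ℚ) i ^ p ^ (n - i)) (p ^ n) := by
      apply IsWeightedHomogeneous.sum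
      intro i hi
      have := (isWeightedHomogeneous_C (wWt p) ((p : ℚ) ^ i)).mul
        (((ih i (Finset.mem_range.mp hi)).pow' (p ^ (n - i))))
      rw [zero_add] at this
      convert this using 1
      rw [smul_eq_mul, ← pow_add]
      congr 1
      have := Finset.mem_range.mp hi
      omega
    have := (isWeightedHomogeneous_C (wWt p) (1 / (p : ℚ) ^ n)).mul (h1.sub' h2)
    rwa [zero_add] at this

theorem iso_wittAdd (p : ℕ) [hp : Fact p.Prime] (n : ℕ) :
    IsWeightedHomogeneous (wWt p) (WittVector.wittAdd p n) (p ^ n) := by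
  intro d hd
  have hmap : MvPolynomial.map (Int.castRingHom ℚ) (WittVector.wittAdd p n) =
      wittStructureRat p (X 0 + X 1 : MvPolynomial (Fin 2) ℚ) n := by
    rw [WittVector.wittAdd, map_wittStructureInt]
    congr 1
    simp
  apply iso_wsr p n (d := d)
  rw [← hmap, MvPolynomial.coeff_map]
  simpa using hd

section NuBasics
variable {A : Type*} [CommRing A] {ν : A → EReal}

theorem nu_neg (hν : IsPseudovaluation ν) (a : A) : ν a ≤ ν (-a) := by
  have := hν.min_le_sub 0 a
  rw [zero_sub, hν.map_zero] at this
  simpa using this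

theorem nu_add (hν : IsPseudovaluation ν) (a b : A) : min (ν a) (ν b) ≤ ν (a + b) := by
  have := hν.min_le_sub a (-b)
  rw [sub_neg_eq_add] at this
  exact le_trans (min_le_min le_rfl (nu_neg hν b)) this

theorem nu_natCast (hν : IsPseudovaluation ν) (n : ℕ) : (0 : EReal) ≤ ν (n : A) := by
  induction n with
  | zero => simp [hν.map_zero]
  | succ n ih =>
      push_cast
      refine le_trans ?_ (nu_add hν (n : A) 1)
      rw [hν.map_one]
      exact le_min ih le_rfl

theorem nu_intCast (hν : IsPseudovaluation ν) (m : ℤ) : (0 : EReal) ≤ ν (m : A) := by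
  rcases le_or_gt 0 m with h | h
  · lift m to ℕ using h
    exact_mod_cast nu_natCast hν m
  · have : ((-m).toNat : A) = -(m : A) := by
      rw [← Int.cast_natCast (R := A), Int.toNat_of_nonneg (by omega : (0:ℤ) ≤ -m),
        Int.cast_neg]
    calc (0 : EReal) ≤ ν (((-m).toNat : ℕ) : A) := nu_natCast hν _
    _ = ν (-(m : A)) := by rw [this]
    _ ≤ ν (- - (m:A)) := nu_neg hν _
    _ = ν (m : A) := by rw [neg_neg]

theorem nu_sum (hν : IsPseudovaluation ν) {ι : Type*} (s : Finset ι) (f : ι → A) (t : EReal)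
    (h : ∀ i ∈ s, t ≤ ν (f i)) : t ≤ ν (∑ i ∈ s, f i) := by
  classical
  induction s using Finset.cons_induction with
  | empty => simp [hν.map_zero]
  | cons i s his ih =>
      rw [Finset.sum_cons]
      refine le_trans (le_min (h i (Finset.mem_cons_self i s)) ?_) (nu_add hν _ _)
      exact ih fun j hj => h j (Finset.mem_cons_of_mem hj)

theorem nu_mul (hν : IsPseudovaluation ν) (hproper : ∀ a : A, ν a ≠ ⊥) {a b : A} {t u : EReal}
    (ht : t ≤ ν a) (hu : u ≤ ν b) : t + u ≤ ν (a * b) :=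
  le_trans (add_le_add ht hu) (hν.add_le_mul a b (hproper a) (hproper b))

theorem nu_pow (hν : IsPseudovaluation ν) (hproper : ∀ a : A, ν a ≠ ⊥) {a : A} {r : ℝ}
    (h : (r : EReal) ≤ ν a) (k : ℕ) : (((k : ℝ) * r : ℝ) : EReal) ≤ ν (a ^ k) := by
  induction k with
  | zero => simp [hν.map_one]
  | succ k ih =>
      have : (((k : ℝ) + 1) * r : ℝ) = ((k : ℝ) * r) + r := by ring
      push_cast [this, EReal.coe_add]
      rw [pow_succ]
      exact nu_mul hν hproper ih h

theorem nu_aeval (hν : IsPseudovaluation ν) (hproper : ∀ a : A, ν a ≠ ⊥)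
    {σ : Type*} (P : MvPolynomial σ ℤ) (v : σ → A) (r : σ → ℝ)
    (hr : ∀ s, (r s : EReal) ≤ ν (v s)) (t : ℝ)
    (ht : ∀ d ∈ P.support, t ≤ d.sum fun s e => (e : ℝ) * r s) :
    (t : EReal) ≤ ν (aeval v P) := by
  classical
  rw [aeval_def, eval₂_eq]
  apply nu_sum hν
  intro d hd
  have hprod : ∀ s : Finset σ,
      ((∑ i ∈ s, (d i : ℝ) * r i : ℝ) : EReal) ≤ ν (∏ i ∈ s, v i ^ d i) := by
    intro s
    induction s using Finset.cons_induction with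
    | empty => simp [hν.map_one]
    | cons i s his ih =>
        rw [Finset.sum_cons, Finset.prod_cons, EReal.coe_add]
        exact nu_mul hν hproper (nu_pow hν hproper (hr i) (d i)) ih
  have h0 : (0 : EReal) ≤ ν ((algebraMap ℤ A) (P.coeff d)) := by
    rw [algebraMap_int_eq, eq_intCast]
    exact nu_intCast hν _
  calc (t : EReal) ≤ ((d.sum fun s e => (e : ℝ) * r s : ℝ) : EReal) := by
        exact_mod_cast ht d hd
    _ = (0 : EReal) + ((∑ i ∈ d.support, (d i : ℝ) * r i : ℝ) : EReal) := by
        rw [zero_add]; rfl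
    _ ≤ ν ((algebraMap ℤ A) (P.coeff d) * ∏ i ∈ d.support, v i ^ d i) := by
        refine le_trans (add_le_add h0 (hprod d.support))
          (hν.add_le_mul _ _ (hproper _) (hproper _))

end NuBasics

theorem key_sum {p : ℕ} (hp : 0 < p) {ε : ℝ} (hε : 0 < ε) (c : ℝ) (n : ℕ) (d : Fin 2 × ℕ →₀ ℕ)
    (hw : (d.sum fun s e => e * p ^ s.2) = p ^ n)
    (hvars : ∀ s ∈ d.support, s.2 ≤ n) :
    (c - n) * (p : ℝ) ^ n / ε ≤ d.sum fun s e => (e : ℝ) * ((c - s.2) * (p : ℝ) ^ s.2 / ε) := by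
  have hw' : ∑ s ∈ d.support, (d s : ℝ) * (p : ℝ) ^ s.2 = (p : ℝ) ^ n := by
    have := congrArg (Nat.cast : ℕ → ℝ) hw
    rw [Finsupp.sum] at this
    push_cast at this
    exact this
  have hb : ∑ s ∈ d.support, (d s : ℝ) * (s.2 : ℝ) * (p : ℝ) ^ s.2 ≤
      ∑ s ∈ d.support, (d s : ℝ) * (n : ℝ) * (p : ℝ) ^ s.2 := by
    apply Finset.sum_le_sum
    intro s hs
    have h1 : (s.2 : ℝ) ≤ (n : ℝ) := by exact_mod_cast hvars s hs
    have h2 : (0:ℝ) ≤ (d s : ℝ) := by positivity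
    have h3 : (0:ℝ) ≤ (p : ℝ) ^ s.2 := by positivity
    exact mul_le_mul_of_nonneg_right (mul_le_mul_of_nonneg_left h1 h2) h3
  rw [Finsupp.sum]
  have expand : ∑ s ∈ d.support, (d s : ℝ) * ((c - s.2) * (p:ℝ) ^ s.2 / ε) =
      (c * ((p:ℝ)^n) - ∑ s ∈ d.support, (d s : ℝ) * (s.2 : ℝ) * (p : ℝ) ^ s.2) / ε := by
    rw [← hw', Finset.mul_sum, ← Finset.sum_sub_distrib, Finset.sum_div]
    apply Finset.sum_congr rfl
    intro s hs
    ring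
  rw [expand]
  gcongr
  have : ∑ s ∈ d.support, (d s : ℝ) * (n : ℝ) * (p : ℝ) ^ s.2 = (n:ℝ) * (p:ℝ)^n := by
    rw [← hw', Finset.mul_sum]
    apply Finset.sum_congr rfl
    intro s hs
    ring
  nlinarith

section BdW
variable {p : ℕ} [hp : Fact p.Prime] {A : Type*} [CommRing A]
variable {ν : A → EReal} {ε : ℝ}

/-- The coefficientwise bound corresponding to `c ≤ gaussNorm`. -/
def BdW (p : ℕ) [Fact p.Prime] {A : Type*} [CommRing A] (ν : A → EReal) (ε c : ℝ)
    (x : WittVector p A) : Prop :=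
  ∀ i : ℕ, (((c - i) * (p : ℝ) ^ i / ε : ℝ) : EReal) ≤ ν (x.coeff i)

theorem BdW.add (hν : IsPseudovaluation ν) (hproper : ∀ a : A, ν a ≠ ⊥) (hε : 0 < ε)
    {c : ℝ} {x y : WittVector p A} (hx : BdW p ν ε c x) (hy : BdW p ν ε c y) :
    BdW p ν ε c (x + y) := by
  intro n
  rw [WittVector.add_coeff]
  show _ ≤ ν (aeval (Function.uncurry ![x.coeff, y.coeff]) (WittVector.wittAdd p n))
  apply nu_aeval hν hproper _ _ (fun s => (c - s.2) * (p : ℝ) ^ s.2 / ε)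
  · rintro ⟨b, i⟩
    fin_cases b
    · simpa using hx i
    · simpa using hy i
  · intro d hd
    apply key_sum hp.out.pos hε
    · have := iso_wittAdd p n (MvPolynomial.mem_support_iff.mp hd)
      rw [Finsupp.weight_apply] at this
      simpa [smul_eq_mul, wWt] using this
    · intro s hs
      have hv : s ∈ (WittVector.wittAdd p n).vars :=
        (MvPolynomial.mem_vars s).mpr ⟨d, hd, hs⟩
      have hv' : s ∈ (wittStructureInt p (X 0 + X 1 : MvPolynomial (Fin 2) ℤ) n).vars := hv
      have := wittStructureInt_vars (p := p) (X 0 + X 1 : MvPolynomial (Fin 2) ℤ) n hv'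
      rw [Finset.mem_product, Finset.mem_range] at this
      omega

theorem iterate_verschiebung_coeff_lt {x : WittVector p A} {m i : ℕ} (h : i < m) :
    (WittVector.verschiebung^[m] x).coeff i = 0 := by
  induction m generalizing i with
  | zero => omega
  | succ m ih =>
      rw [Function.iterate_succ_apply']
      cases i with
      | zero => exact WittVector.verschiebung_coeff_zero _
      | succ i =>
          rw [WittVector.verschiebung_coeff_succ]
          exact ih (by omega)

theorem iterate_verschiebung_add (m : ℕ) (x y : WittVector p A) :
    WittVector.verschiebung^[m] (x + y) =
      WittVector.verschiebung^[m] x + WittVector.verschiebung^[m] y := by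
  induction m with
  | zero => rfl
  | succ m ih => rw [Function.iterate_succ_apply', ih, map_add, Function.iterate_succ_apply',
      Function.iterate_succ_apply']

theorem BdW.zero (hν : IsPseudovaluation ν) {c : ℝ} : BdW p ν ε c (0 : WittVector p A) := by
  intro i
  rw [WittVector.zero_coeff, hν.map_zero]
  exact le_top

theorem BdW.sum (hν : IsPseudovaluation ν) (hproper : ∀ a : A, ν a ≠ ⊥) (hε : 0 < ε)
    {c : ℝ} {ι : Type*} (s : Finset ι) (f : ι → WittVector p A)
    (h : ∀ i ∈ s, BdW p ν ε c (f i)) : BdW p ν ε c (∑ i ∈ s, f i) := by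
  classical
  induction s using Finset.cons_induction with
  | empty => simpa using BdW.zero hν
  | cons i s his ih =>
      rw [Finset.sum_cons]
      exact BdW.add hν hproper hε (h i (Finset.mem_cons_self i s))
        (ih fun j hj => h j (Finset.mem_cons_of_mem hj))

theorem BdW.iterate_teichmuller (hν : IsPseudovaluation ν) {c : ℝ} {m : ℕ} {a : A}
    (ha : (((c - m) * (p : ℝ) ^ m / ε : ℝ) : EReal) ≤ ν a) :
    BdW p ν ε c (WittVector.verschiebung^[m] (WittVector.teichmuller p a)) := by
  intro i
  rcases lt_trichotomy i m with h | h | h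
  · rw [iterate_verschiebung_coeff_lt h, hν.map_zero]; exact le_top
  · subst h
    have hc : (WittVector.verschiebung^[i] (WittVector.teichmuller p a)).coeff i = a := by
      have := WittVector.iterate_verschiebung_coeff (R := A)
        (WittVector.teichmuller p a) i 0
      rw [zero_add] at this
      rw [this, WittVector.teichmuller_coeff_zero]
    rw [hc]
    exact ha
  · obtain ⟨k, rfl⟩ : ∃ k, i = k + m := ⟨i - m, by omega⟩
    rw [WittVector.iterate_verschiebung_coeff, WittVector.teichmuller_coeff_pos _ _ _ (by omega),
      hν.map_zero]
    exact le_top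

theorem BdW.one (hν : IsPseudovaluation ν) (hε : 0 < ε) :
    BdW p ν ε 0 (1 : WittVector p A) := by
  intro i
  cases i with
  | zero =>
      rw [WittVector.one_coeff_zero, hν.map_one]
      rw [show ((0:ℝ) - (0:ℕ)) * (p:ℝ)^(0:ℕ) / ε = 0 by push_cast; ring]
      exact le_refl _
  | succ i =>
      have hc : (1 : WittVector p A).coeff (i+1) = 0 := by simp
      rw [hc, hν.map_zero]
      exact le_top

variable [CharP A p]

theorem iterate_frobenius_teichmuller (j : ℕ) (a : A) :
    WittVector.frobenius^[j] (WittVector.teichmuller p a) =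
      WittVector.teichmuller p (a ^ p ^ j) := by
  induction j generalizing a with
  | zero => simp
  | succ j ih =>
      rw [Function.iterate_succ_apply]
      have h1 : WittVector.frobenius (WittVector.teichmuller p a) =
          WittVector.teichmuller p (a ^ p) := by
        apply WittVector.ext
        intro n
        rw [WittVector.coeff_frobenius_charP]
        cases n with
        | zero => rw [WittVector.teichmuller_coeff_zero, WittVector.teichmuller_coeff_zero]
        | succ n =>
            rw [WittVector.teichmuller_coeff_pos _ _ _ (Nat.succ_pos n),
              WittVector.teichmuller_coeff_pos _ _ _ (Nat.succ_pos n),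
              zero_pow hp.out.ne_zero]
      rw [h1, ih, ← pow_mul, pow_succ']

/-- decomposition of a Witt vector -/
theorem witt_decomp (x : WittVector p A) (m : ℕ) :
    x = (∑ i ∈ Finset.range m, WittVector.verschiebung^[i]
        (WittVector.teichmuller p (x.coeff i))) +
      WittVector.verschiebung^[m] (WittVector.mk p fun k => x.coeff (m + k)) := by
  induction m with
  | zero =>
      simp only [Finset.range_zero, Finset.sum_empty, Function.iterate_zero, id, zero_add]
      apply WittVector.ext
      intro n
      rw [WittVector.coeff_mk]
  | succ m ih =>
      have key : (WittVector.mk p fun k => x.coeff (m + k)) =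
          WittVector.teichmuller p (x.coeff m) +
            WittVector.verschiebung (WittVector.mk p fun k => x.coeff (m + 1 + k)) := by
        apply WittVector.ext
        intro n
        rw [WittVector.coeff_add_of_disjoint]
        · cases n with
          | zero =>
              simp [WittVector.coeff_mk, WittVector.verschiebung_coeff_zero]
          | succ n =>
              rw [WittVector.coeff_mk, WittVector.teichmuller_coeff_pos _ _ _ (Nat.succ_pos n),
                WittVector.verschiebung_coeff_succ, WittVector.coeff_mk, zero_add]
              congr 1
              omega
        · intro n
          cases n with
          | zero => right; exact WittVector.verschiebung_coeff_zero _
          | succ n => left; exact WittVector.teichmuller_coeff_pos _ _ _ (Nat.succ_pos n)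
      calc x = (∑ i ∈ Finset.range m, WittVector.verschiebung^[i]
            (WittVector.teichmuller p (x.coeff i))) +
          WittVector.verschiebung^[m] (WittVector.mk p fun k => x.coeff (m + k)) := ih
        _ = _ := by
          rw [key, iterate_verschiebung_add, Finset.sum_range_succ, add_assoc,
            ← Function.iterate_succ_apply]

theorem trunc_iterate_verschiebung {m k : ℕ} (hmk : m ≤ k) (z : WittVector p A) :
    WittVector.truncate m (WittVector.verschiebung^[k] z) = 0 := by
  rw [← RingHom.mem_ker]
  rw [WittVector.mem_ker_truncate]
  intro i hi
  exact iterate_verschiebung_coeff_lt (lt_of_lt_of_le hi hmk)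

theorem coeff_eq_of_trunc {n : ℕ} {x y : WittVector p A}
    (h : WittVector.truncate (n+1) x = WittVector.truncate (n+1) y) :
    x.coeff n = y.coeff n := by
  have := congrArg (fun t => TruncatedWittVector.coeff (⟨n, Nat.lt_succ_self n⟩ : Fin (n+1)) t) h
  simpa [WittVector.coeff_truncate] using this

theorem BdW.mul (hν : IsPseudovaluation ν) (hproper : ∀ a : A, ν a ≠ ⊥) (hε : 0 < ε)
    {c c' : ℝ} {x y : WittVector p A} (hx : BdW p ν ε c x) (hy : BdW p ν ε c' y) :
    BdW p ν ε (c + c') (x * y) := by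
  intro n
  set Sx := ∑ i ∈ Finset.range (n+1), WittVector.verschiebung^[i]
      (WittVector.teichmuller p (x.coeff i)) with hSx
  set Sy := ∑ i ∈ Finset.range (n+1), WittVector.verschiebung^[i]
      (WittVector.teichmuller p (y.coeff i)) with hSy
  have htx : WittVector.truncate (n+1) x = WittVector.truncate (n+1) Sx := by
    conv_lhs => rw [witt_decomp x (n+1)]
    rw [map_add, trunc_iterate_verschiebung le_rfl, add_zero]
  have hty : WittVector.truncate (n+1) y = WittVector.truncate (n+1) Sy := by
    conv_lhs => rw [witt_decomp y (n+1)]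
    rw [map_add, trunc_iterate_verschiebung le_rfl, add_zero]
  have hcoeff : (x * y).coeff n = (Sx * Sy).coeff n := by
    apply coeff_eq_of_trunc
    rw [map_mul, map_mul, htx, hty]
  rw [hcoeff]
  have hexp : Sx * Sy = ∑ i ∈ Finset.range (n+1), ∑ j ∈ Finset.range (n+1),
      WittVector.verschiebung^[i + j]
        (WittVector.teichmuller p (x.coeff i ^ p ^ j * y.coeff j ^ p ^ i)) := by
    rw [hSx, hSy, Finset.sum_mul_sum]
    apply Finset.sum_congr rfl
    intro i _
    apply Finset.sum_congr rfl
    intro j _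
    rw [WittVector.iterate_verschiebung_mul, iterate_frobenius_teichmuller,
      iterate_frobenius_teichmuller, ← map_mul]
  rw [hexp]
  refine BdW.sum hν hproper hε _ _ (fun i _ => BdW.sum hν hproper hε _ _ (fun j _ => ?_)) n
  apply BdW.iterate_teichmuller hν
  have h1 := nu_pow hν hproper (hx i) (p ^ j)
  have h2 := nu_pow hν hproper (hy j) (p ^ i)
  have h3 := le_trans (add_le_add (le_refl _) (le_refl _))
    (nu_mul hν hproper h1 h2)
  rw [← EReal.coe_add] at h3
  have heq : (((p ^ j : ℕ) : ℝ) * ((c - i) * (p:ℝ) ^ i / ε) +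
      ((p ^ i : ℕ) : ℝ) * ((c' - j) * (p:ℝ) ^ j / ε) : ℝ) =
      ((c + c' - (i + j : ℕ)) * (p:ℝ) ^ (i + j) / ε : ℝ) := by
    push_cast
    rw [pow_add]
    ring
  rw [heq] at h3
  exact h3

theorem BdW.pow (hν : IsPseudovaluation ν) (hproper : ∀ a : A, ν a ≠ ⊥) (hε : 0 < ε)
    {x : WittVector p A} (hx : BdW p ν ε 0 x) (k : ℕ) : BdW p ν ε 0 (x ^ k) := by
  induction k with
  | zero => simpa using BdW.one hν hε
  | succ k ih =>
      have := BdW.mul hν hproper hε ih hx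
      rw [pow_succ]
      simpa using this

end BdW

section Conv
variable {p : ℕ} [hp : Fact p.Prime] {A : Type*} [CommRing A]
variable {ν : A → EReal} {ε : ℝ}

theorem bdW_of_gaussNorm (hproper : ∀ a : A, ν a ≠ ⊥) (hε : 0 < ε) {x : WittVector p A}
    (h : 0 ≤ gaussNorm p ν ε x) : BdW p ν ε 0 x := by
  intro i
  have hterm := le_trans h (iInf_le _ i)
  have hpi : (0 : ℝ) < (p : ℝ) ^ i := by
    have := hp.out.pos
    positivity
  have hzp : ((p:ℝ) ^ (-(i:ℤ)) : ℝ) = ((p:ℝ)^i)⁻¹ := by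
    rw [zpow_neg, zpow_natCast]
  generalize hgen : ν (x.coeff i) = e at *
  induction e using EReal.rec with
  | bot => exact absurd hgen (hproper _)
  | top => exact le_top
  | coe r =>
      rw [← EReal.coe_coe_eq_natCast, ← EReal.coe_mul, ← EReal.coe_add] at hterm
      have key : (0:ℝ) ≤ (i : ℝ) + ε * ((p:ℝ)^i)⁻¹ * r := by
        have := EReal.coe_le_coe_iff.mp (by exact_mod_cast hterm)
        rw [hzp] at this
        linarith [this]
      rw [EReal.coe_le_coe_iff]
      rw [div_le_iff₀ hε]
      have key2 : 0 ≤ (i:ℝ) * (p:ℝ)^i + ε * r := by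
        calc (0:ℝ) = 0 * (p:ℝ)^i := by ring
        _ ≤ ((i:ℝ) + ε * ((p:ℝ)^i)⁻¹ * r) * (p:ℝ)^i := by
            exact mul_le_mul_of_nonneg_right key hpi.le
        _ = (i:ℝ)*(p:ℝ)^i + ε * r * (((p:ℝ)^i)⁻¹ * (p:ℝ)^i) := by ring
        _ = (i:ℝ)*(p:ℝ)^i + ε * r := by rw [inv_mul_cancel₀ (ne_of_gt hpi)]; ring
      linarith

theorem gaussNorm_of_bdW (hproper : ∀ a : A, ν a ≠ ⊥) (hε : 0 < ε) {x : WittVector p A}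
    (h : BdW p ν ε 0 x) : 0 ≤ gaussNorm p ν ε x := by
  apply le_iInf
  intro i
  have hpi : (0 : ℝ) < (p : ℝ) ^ i := by
    have := hp.out.pos
    positivity
  have hzp : ((p:ℝ) ^ (-(i:ℤ)) : ℝ) = ((p:ℝ)^i)⁻¹ := by
    rw [zpow_neg, zpow_natCast]
  have hw : (0:ℝ) < ε * (p:ℝ) ^ (-(i:ℤ)) := by
    rw [hzp]; positivity
  have hb := h i
  generalize hgen : ν (x.coeff i) = e at *
  induction e using EReal.rec with
  | bot => exact absurd hgen (hproper _)
  | top =>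
      rw [EReal.coe_mul_top_of_pos hw, EReal.add_top_of_ne_bot (EReal.natCast_ne_bot i)]
      exact le_top
  | coe r =>
      rw [← EReal.coe_coe_eq_natCast, ← EReal.coe_mul, ← EReal.coe_add]
      have hb' : (0 - (i:ℝ)) * (p:ℝ)^i / ε ≤ r := EReal.coe_le_coe_iff.mp hb
      show ((0:ℝ) : EReal) ≤ _
      rw [EReal.coe_le_coe_iff, hzp]
      rw [div_le_iff₀ hε] at hb'
      have h2 : 0 - (i:ℝ) * (p:ℝ)^i ≤ r * ε := by linarith
      have h3 : (0 - (i:ℝ)*(p:ℝ)^i)/(p:ℝ)^i ≤ r * ε / (p:ℝ)^i := by gcongr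
      rw [sub_div] at h3
      have h4 : (i:ℝ) * (p:ℝ)^i / (p:ℝ)^i = (i:ℝ) := by
        field_simp
      have h5 : r * ε / (p:ℝ)^i = ε * ((p:ℝ)^i)⁻¹ * r := by
        field_simp
      rw [h4, h5] at h3
      simp only [zero_div] at h3
      linarith

end Conv

end Statement16Aux

/-- If `α = V(η)` lies in the image of Verschiebung and `γ_ε(α) ≥ 0`,
then `1 - α` is a unit of `W(A)` and `γ_ε((1 - α)⁻¹) ≥ 0`. -/
theorem statement16 (p : ℕ) [Fact p.Prime] (A : Type*) [CommRing A]
    (hpA : ((p : ℕ) : A) = 0)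
    (ν : A → EReal) (hν : IsPseudovaluation ν) (hproper : ∀ a : A, ν a ≠ ⊥)
    (ε : ℝ) (hε : 0 < ε)
    (α η : WittVector p A) (hα : α = WittVector.verschiebung η)
    (h0 : 0 ≤ gaussNorm p ν ε α) :
    IsUnit (1 - α) ∧
    ∃ β : WittVector p A, (1 - α) * β = 1 ∧ 0 ≤ gaussNorm p ν ε β := by
  have hp : Fact p.Prime := inferInstance
  rcases subsingleton_or_nontrivial A with hA | hA
  · haveI : Subsingleton (WittVector p A) :=
      ⟨fun x y => WittVector.ext fun n => Subsingleton.elim _ _⟩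
    refine ⟨IsUnit.of_mul_eq_one (1 : WittVector p A) (Subsingleton.elim _ _), 1, Subsingleton.elim _ _, ?_⟩
    apply le_iInf
    intro i
    have hw : (0:ℝ) < ε * (p:ℝ) ^ (-(i:ℤ)) := by
      have := hp.out.pos
      positivity
    have htop : ν ((1 : WittVector p A).coeff i) = ⊤ := by
      rw [Subsingleton.elim ((1 : WittVector p A).coeff i) (0:A), hν.map_zero]
    rw [htop, EReal.coe_mul_top_of_pos hw, EReal.add_top_of_ne_bot (EReal.natCast_ne_bot i)]
    exact le_top
  · haveI hchar : CharP A p := (CharP.charP_iff_prime_eq_zero hp.out).mpr hpA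
    set β : WittVector p A :=
      WittVector.mk p (fun n => (∑ k ∈ Finset.range (n+1), α^k).coeff n) with hβ
    have hpow : ∀ k : ℕ, 1 ≤ k → ∃ z : WittVector p A,
        α ^ k = WittVector.verschiebung^[k] z := by
      intro k hk
      induction k with
      | zero => omega
      | succ k ih =>
          rcases Nat.lt_or_ge 1 (k+1) with h1 | h1
          · obtain ⟨z, hz⟩ := ih (by omega)
            refine ⟨WittVector.frobenius^[1] z * WittVector.frobenius^[k] η, ?_⟩
            rw [pow_succ, hz, hα]
            calc WittVector.verschiebung^[k] z * WittVector.verschiebung η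
                = WittVector.verschiebung^[k] z * WittVector.verschiebung^[1] η := by
                  rw [Function.iterate_one]
              _ = _ := WittVector.iterate_verschiebung_mul z η k 1
          · refine ⟨η, ?_⟩
            have hk1 : k = 0 := by omega
            subst hk1
            rw [pow_one, hα, Function.iterate_one]
    have htruncpow : ∀ (k m : ℕ), 1 ≤ k → m ≤ k →
        WittVector.truncate m (α ^ k) = 0 := by
      intro k m hk hm
      obtain ⟨z, hz⟩ := hpow k hk
      rw [hz]
      exact trunc_iterate_verschiebung hm z
    have htruncβ : ∀ n : ℕ, WittVector.truncate (n+1) β =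
        WittVector.truncate (n+1) (∑ k ∈ Finset.range (n+1), α^k) := by
      intro n
      apply TruncatedWittVector.ext
      intro i
      rw [WittVector.coeff_truncate, WittVector.coeff_truncate, hβ, WittVector.coeff_mk]
      apply coeff_eq_of_trunc
      have hsplit : ∑ k ∈ Finset.range (n+1), α^k =
          (∑ k ∈ Finset.range ((i:ℕ)+1), α^k) +
            ∑ k ∈ Finset.Ico ((i:ℕ)+1) (n+1), α^k := by
        rw [Finset.range_eq_Ico, Finset.range_eq_Ico]
        exact (Finset.sum_Ico_consecutive _ (Nat.zero_le _) (Nat.succ_le_of_lt i.isLt)).symm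
      rw [hsplit, map_add]
      have hzero : WittVector.truncate ((i:ℕ)+1)
          (∑ k ∈ Finset.Ico ((i:ℕ)+1) (n+1), α^k) = 0 := by
        rw [map_sum]
        apply Finset.sum_eq_zero
        intro k hk
        have hik := (Finset.mem_Ico.mp hk).1
        exact htruncpow k ((i:ℕ)+1) (by omega) hik
      rw [hzero, add_zero]
    have hmul : (1 - α) * β = 1 := by
      apply WittVector.ext
      intro n
      apply coeff_eq_of_trunc
      rw [map_mul, htruncβ n, ← map_mul]
      have hgeom : (1 - α) * (∑ k ∈ Finset.range (n+1), α ^ k) = 1 - α^(n+1) := by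
        have hg := geom_sum_mul α (n+1)
        linear_combination -hg
      rw [hgeom, map_sub, htruncpow (n+1) (n+1) (by omega) le_rfl, sub_zero]
    refine ⟨IsUnit.of_mul_eq_one β hmul, β, hmul, ?_⟩
    have hBdα : BdW p ν ε 0 α := bdW_of_gaussNorm hproper hε h0
    have hBdβ : BdW p ν ε 0 β := by
      intro i
      rw [hβ, WittVector.coeff_mk]
      exact BdW.sum hν hproper hε _ _ (fun k _ => BdW.pow hν hproper hε hBdα k) i
    exact gaussNorm_of_bdW hproper hε hBdβ
end
end
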